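/- arXiv:1810.02750 — 9 statements merged into one kernel-verified Lean document; each statement's English description precedes it below -/
import Mathlib

section
/- For any frozen percolation type flow π with initial kernel a kernel κ and initial value π(0) having strictly positive entries, the limit lim_{t→∞} π(t)/‖π(t)‖₁ exists in ℝ^k, and every component of this limit is strictly positive. -/
open Matrix

noncomputable def perronRoot {k : ℕ} (A : Matrix (Fin k) (Fin k) ℝ) : ℝ :=
  sSup ((fun z : ℂ => ‖z‖) '' spectrum ℂ (A.map Complex.ofReal))

def circ {k : ℕ} (A : Matrix (Fin k) (Fin k) ℝ) (v : Fin k → ℝ) : Matrix (Fin k) (Fin k) ℝ :=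
  Matrix.of fun i j => A i j * v j

noncomputable def l1norm {k : ℕ} (v : Fin k → ℝ) : ℝ := ∑ i, |v i|

noncomputable def kernelAt {k : ℕ} (κ : Matrix (Fin k) (Fin k) ℝ) (t : ℝ) :
    Matrix (Fin k) (Fin k) ℝ :=
  κ + t • Matrix.of (fun _ _ => (1 : ℝ))

def IsKernel {k : ℕ} (κ : Matrix (Fin k) (Fin k) ℝ) : Prop :=
  κ.IsSymm ∧ ∀ i j, 0 ≤ κ i j

structure IsTypeFlow {k : ℕ} (κ : Matrix (Fin k) (Fin k) ℝ) (π : ℝ → Fin k → ℝ)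
    (tc : ℝ) (φ : ℝ → ℝ) : Prop where
  nonneg : ∀ t ≥ (0 : ℝ), ∀ i, 0 ≤ π t i
  ne_zero : ∀ t ≥ (0 : ℝ), π t ≠ 0
  cont : ContinuousOn π (Set.Ici 0)
  tc_nonneg : 0 ≤ tc
  phi_pos : ∀ t > tc, 0 < φ t
  phi_cont : ContinuousOn φ (Set.Ioi tc)
  init : ∀ t, 0 ≤ t → t ≤ tc → π t = π 0
  crit : ∀ t ≥ tc, perronRoot (circ (kernelAt κ t) (π t)) = 1
  flowDE : ∀ t > tc, ∃ μ : Fin k → ℝ,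
      (∀ i, 0 < μ i) ∧ l1norm μ = 1 ∧
      Matrix.vecMul μ (circ (kernelAt κ t) (π t)) = μ ∧
      HasDerivAt π (-(φ t) • μ) t

/-- Theorem 2 (flowtimelimitthm): the normalised type distribution of a frozen percolation
type flow converges as t → ∞ to a strictly positive limit. -/
theorem frozen_percolation_type_flow_time_limit
    {k : ℕ} (hk : 0 < k) (κ : Matrix (Fin k) (Fin k) ℝ) (hκ : IsKernel κ)
    (π : ℝ → Fin k → ℝ) (tc : ℝ) (φ : ℝ → ℝ) (hπ : IsTypeFlow κ π tc φ)
    (hπ0pos : ∀ i, 0 < π 0 i) :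
    ∃ L : Fin k → ℝ,
      Filter.Tendsto (fun t => (l1norm (π t))⁻¹ • π t) Filter.atTop (nhds L) ∧
      ∀ i, 0 < L i := by
  classical
  obtain ⟨hnonneg, hne, hcont, htc0, hφpos, hφcont, hinit, hcrit, hDE⟩ := hπ
  -- choose a total eigenvector function μ
  obtain ⟨μ, hμ⟩ : ∃ μ : ℝ → Fin k → ℝ, ∀ t, tc < t →
      (∀ i, 0 < μ t i) ∧ l1norm (μ t) = 1 ∧
      Matrix.vecMul (μ t) (circ (kernelAt κ t) (π t)) = μ t ∧
      HasDerivAt π (-(φ t) • μ t) t := by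
    refine ⟨fun t => if h : tc < t then (hDE t h).choose else fun _ => 1, fun t h => ?_⟩
    simp only [dif_pos h]
    exact (hDE t h).choose_spec
  set S : ℝ → ℝ := fun t => ∑ i, π t i with hSdef
  set c : ℝ → Fin k → ℝ := fun t j => ∑ i, μ t i * κ i j with hcdef
  set K : ℝ := ∑ i, ∑ j, κ i j with hKdef
  have hK0 : 0 ≤ K :=
    Finset.sum_nonneg fun i _ => Finset.sum_nonneg fun j _ => hκ.2 i j
  have hsumμ : ∀ t, tc < t → ∑ i, μ t i = 1 := by
    intro t ht
    have h1 := (hμ t ht).2.1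
    rw [l1norm] at h1
    rw [← h1]
    exact Finset.sum_congr rfl fun i _ => (abs_of_pos ((hμ t ht).1 i)).symm
  have hc0 : ∀ t, tc < t → ∀ j, 0 ≤ c t j := fun t ht j =>
    Finset.sum_nonneg fun i _ => mul_nonneg ((hμ t ht).1 i).le (hκ.2 i j)
  have hcK : ∀ t, tc < t → ∀ j, c t j ≤ K := by
    intro t ht j
    have h1 : c t j ≤ ∑ i, κ i j := by
      refine Finset.sum_le_sum fun i _ => ?_
      have hle : μ t i ≤ 1 := by
        rw [← hsumμ t ht]
        exact Finset.single_le_sum (f := fun i => μ t i)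
          (fun i _ => ((hμ t ht).1 i).le) (Finset.mem_univ i)
      nlinarith [hκ.2 i j, ((hμ t ht).1 i).le]
    refine h1.trans (Finset.sum_le_sum fun i _ => ?_)
    exact Finset.single_le_sum (f := fun j => κ i j) (fun j _ => hκ.2 i j) (Finset.mem_univ j)
  -- the eigenvector identity
  have hid : ∀ t, tc < t → ∀ j, μ t j = π t j * (t + c t j) := by
    intro t ht j
    have hv := congrFun (hμ t ht).2.2.1 j
    have h2 : Matrix.vecMul (μ t) (circ (kernelAt κ t) (π t)) j
        = ∑ i, μ t i * ((κ i j + t) * π t j) := by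
      simp [Matrix.vecMul, dotProduct, circ, kernelAt, Matrix.add_apply,
        Matrix.smul_apply, Matrix.of_apply, smul_eq_mul, mul_one]
    rw [h2] at hv
    have h3 : ∑ i, μ t i * ((κ i j + t) * π t j)
        = (∑ i, μ t i * κ i j) * π t j + (∑ i, μ t i) * (t * π t j) := by
      rw [Finset.sum_mul, Finset.sum_mul, ← Finset.sum_add_distrib]
      exact Finset.sum_congr rfl fun i _ => by ring
    rw [h3, hsumμ t ht] at hv
    rw [← hv, hcdef]
    ring
  have hπpos : ∀ t, tc < t → ∀ j, 0 < π t j := by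
    intro t ht j
    rcases (hnonneg t (htc0.trans ht.le) j).lt_or_eq with h | h
    · exact h
    · exfalso
      have hm := (hμ t ht).1 j
      rw [hid t ht j, ← h, zero_mul] at hm
      exact lt_irrefl 0 hm
  have hSpos : ∀ t, tc < t → 0 < S t := fun t ht =>
    Finset.sum_pos (fun i _ => hπpos t ht i) (Finset.univ_nonempty_iff.2 ⟨⟨0, hk⟩⟩)
  have hsum1 : ∀ t, tc < t → ∑ j, π t j * (t + c t j) = 1 := by
    intro t ht
    rw [← hsumμ t ht]
    exact Finset.sum_congr rfl fun j _ => (hid t ht j).symm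
  have htS : ∀ t, tc < t → t * S t ≤ 1 := by
    intro t ht
    rw [← hsum1 t ht, hSdef]
    simp only
    rw [Finset.mul_sum]
    refine Finset.sum_le_sum fun j _ => ?_
    have := hπpos t ht j
    have := hc0 t ht j
    nlinarith
  -- derivative of S
  have hS' : ∀ t, tc < t → HasDerivAt S (-(φ t)) t := by
    intro t ht
    have h1 : HasDerivAt (fun u => ∑ i, π u i) (∑ i : Fin k, (-(φ t) • μ t) i) t :=
      HasDerivAt.fun_sum fun i _ => hasDerivAt_pi.1 (hμ t ht).2.2.2 i
    have h2 : (∑ i : Fin k, (-(φ t) • μ t) i) = -(φ t) := by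
      simp only [Pi.smul_apply, smul_eq_mul, ← Finset.mul_sum, hsumμ t ht, mul_one]
    rw [h2] at h1
    exact h1
  have hπ' : ∀ t, tc < t → ∀ j, HasDerivAt (fun u => π u j) (-(φ t) * μ t j) t := by
    intro t ht j
    have := hasDerivAt_pi.1 (hμ t ht).2.2.2 j
    simpa [Pi.smul_apply, smul_eq_mul] using this
  -- the key auxiliary functions
  set F : Fin k → ℝ → ℝ := fun j t => π t j / S t * Real.exp (-(K * S t)) with hFdef
  have hF' : ∀ t, tc < t → ∀ j, ∃ e, HasDerivAt (F j) e t ∧ 0 ≤ e := by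
    intro t ht j
    have hS := hSpos t ht
    have hq : HasDerivAt (fun u => π u j / S u)
        ((-(φ t) * μ t j * S t - π t j * -(φ t)) / S t ^ 2) t :=
      (hπ' t ht j).div (hS' t ht) (ne_of_gt hS)
    have hin : HasDerivAt (fun u => -(K * S u)) (-(K * -(φ t))) t :=
      ((hS' t ht).const_mul K).neg
    have hexp : HasDerivAt (fun u => Real.exp (-(K * S u)))
        (Real.exp (-(K * S t)) * -(K * -(φ t))) t := hin.exp
    refine ⟨_, hq.mul hexp, ?_⟩
    have hA : 0 ≤ (-(φ t) * μ t j * S t - π t j * -(φ t)) + π t j * (K * φ t) * S t := by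
      have h1 := hid t ht j
      have h2 := htS t ht
      have h3 := hcK t ht j
      have h4 := hπpos t ht j
      have h5 := hφpos t ht
      have key : 0 ≤ (K - c t j) * S t + (1 - t * S t) := by nlinarith
      rw [h1]
      nlinarith [mul_nonneg (mul_nonneg h5.le h4.le) key]
    have hE : 0 < Real.exp (-(K * S t)) := Real.exp_pos _
    have hrw : (-(φ t) * μ t j * S t - π t j * -(φ t)) / S t ^ 2 * Real.exp (-(K * S t))
          + π t j / S t * (Real.exp (-(K * S t)) * -(K * -(φ t)))
        = Real.exp (-(K * S t)) *
          (((-(φ t) * μ t j * S t - π t j * -(φ t)) + π t j * (K * φ t) * S t) / S t ^ 2) := by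
      field_simp
    rw [hrw]
    positivity
  set t1 : ℝ := tc + 1 with ht1def
  have ht1 : tc < t1 := by simp [ht1def]
  have hmemIoi : ∀ t ∈ Set.Ici t1, tc < t := fun t htm => lt_of_lt_of_le ht1 htm
  -- F j is monotone on [t1, ∞)
  have hmono : ∀ j, MonotoneOn (F j) (Set.Ici t1) := by
    intro j
    refine monotoneOn_of_deriv_nonneg (convex_Ici t1) ?_ ?_ ?_
    · intro t htm
      obtain ⟨e, he, _⟩ := hF' t (hmemIoi t htm) j
      exact he.continuousAt.continuousWithinAt
    · intro t htm
      rw [interior_Ici] at htm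
      obtain ⟨e, he, _⟩ := hF' t (hmemIoi t (Set.mem_Ici.2 (le_of_lt htm))) j
      exact he.differentiableAt.differentiableWithinAt
    · intro t htm
      rw [interior_Ici] at htm
      obtain ⟨e, he, he0⟩ := hF' t (hmemIoi t (Set.mem_Ici.2 (le_of_lt htm))) j
      rw [he.deriv]
      exact he0
  have hπleS : ∀ t, tc < t → ∀ j, π t j ≤ S t := fun t ht j =>
    Finset.single_le_sum (f := fun i => π t i) (fun i _ => (hπpos t ht i).le) (Finset.mem_univ j)
  have hFle1 : ∀ t, tc < t → ∀ j, F j t ≤ 1 := by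
    intro t ht j
    have h1 : π t j / S t ≤ 1 := (div_le_one (hSpos t ht)).2 (hπleS t ht j)
    have h2 : Real.exp (-(K * S t)) ≤ 1 := by
      rw [Real.exp_le_one_iff]
      have := (hSpos t ht).le
      simp only [neg_nonpos]
      positivity
    have h3 : 0 ≤ π t j / S t := div_nonneg (hπpos t ht j).le (hSpos t ht).le
    calc F j t ≤ π t j / S t * 1 := by
          exact mul_le_mul_of_nonneg_left h2 h3
      _ ≤ 1 := by rw [mul_one]; exact h1
  have hFpos : ∀ t, tc < t → ∀ j, 0 < F j t := fun t ht j =>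
    mul_pos (div_pos (hπpos t ht j) (hSpos t ht)) (Real.exp_pos _)
  -- convergence of each F j
  set G : Fin k → ℝ → ℝ := fun j t => F j (max t t1) with hGdef
  have hGmono : ∀ j, Monotone (G j) := by
    intro j a b hab
    exact hmono j (le_max_right a t1) (le_max_right b t1) (max_le_max hab le_rfl)
  have hGbdd : ∀ j, BddAbove (Set.range (G j)) := by
    intro j
    refine ⟨1, ?_⟩
    rintro x ⟨t, rfl⟩
    exact hFle1 _ (hmemIoi _ (le_max_right t t1)) j
  set L : Fin k → ℝ := fun j => ⨆ t, G j t with hLdef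
  have hGtend : ∀ j, Filter.Tendsto (G j) Filter.atTop (nhds (L j)) := fun j =>
    tendsto_atTop_ciSup (hGmono j) (hGbdd j)
  have hFtend : ∀ j, Filter.Tendsto (F j) Filter.atTop (nhds (L j)) := by
    intro j
    refine (hGtend j).congr' ?_
    filter_upwards [Filter.eventually_ge_atTop t1] with t htm
    simp [hGdef, max_eq_left htm]
  -- S tends to 0
  have hStend : Filter.Tendsto S Filter.atTop (nhds 0) := by
    have h1 : ∀ᶠ t in Filter.atTop, 0 ≤ S t := by
      filter_upwards [Filter.eventually_gt_atTop tc] with t ht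
      exact (hSpos t ht).le
    have h2 : ∀ᶠ t in Filter.atTop, S t ≤ t⁻¹ := by
      filter_upwards [Filter.eventually_gt_atTop (max tc 0)] with t ht
      have htpos : 0 < t := lt_of_le_of_lt (le_max_right tc 0) ht
      have httc : tc < t := lt_of_le_of_lt (le_max_left tc 0) ht
      rw [inv_eq_one_div, le_div_iff₀ htpos]
      nlinarith [htS t httc]
    exact squeeze_zero' h1 h2 tendsto_inv_atTop_zero
  have hexptend : Filter.Tendsto (fun t => Real.exp (K * S t)) Filter.atTop (nhds 1) := by
    have h1 : Filter.Tendsto (fun t => K * S t) Filter.atTop (nhds 0) := by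
      simpa using hStend.const_mul K
    simpa [Function.comp_def] using (Real.continuous_exp.tendsto 0).comp h1
  -- final convergence
  refine ⟨L, ?_, ?_⟩
  · rw [tendsto_pi_nhds]
    intro j
    have h1 : Filter.Tendsto (fun t => F j t * Real.exp (K * S t)) Filter.atTop
        (nhds (L j * 1)) := (hFtend j).mul hexptend
    rw [mul_one] at h1
    refine h1.congr' ?_
    filter_upwards [Filter.eventually_gt_atTop tc] with t ht
    have hS := hSpos t ht
    have hl1 : l1norm (π t) = S t := by
      rw [l1norm]
      exact Finset.sum_congr rfl fun i _ => abs_of_pos (hπpos t ht i)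
    have : F j t * Real.exp (K * S t) = π t j / S t := by
      rw [hFdef]
      simp only
      rw [mul_assoc, ← Real.exp_add]
      simp
    rw [this, hl1]
    simp [Pi.smul_apply, smul_eq_mul, div_eq_inv_mul]
  · intro j
    have h1 : G j t1 ≤ L j := le_ciSup (hGbdd j) t1
    have h2 : 0 < G j t1 := by
      rw [hGdef]
      exact hFpos _ (hmemIoi _ (le_max_right t1 t1)) j
    exact lt_of_lt_of_le h2 h1
end

section
/- For any frozen percolation type flow π with initial kernel a kernel κ and initial value π(0) having strictly positive entries, the limit lim_{t→∞} π(t)/Φ(t) exists in ℝ^k, where Φ(t) := ‖π(t)‖₁. -/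
open Matrix

private lemma aux_tendsto_of_antitoneOn {f : ℝ → ℝ} {T c : ℝ}
    (hf : AntitoneOn f (Set.Ici T)) (hb : ∀ t, T ≤ t → c ≤ f t) :
    ∃ L, Filter.Tendsto f Filter.atTop (nhds L) := by
  set g : ℝ → ℝ := fun t => f (max t T) with hg_def
  have hg : Antitone g := fun s t hst =>
    hf (Set.mem_Ici.2 (le_max_right s T)) (Set.mem_Ici.2 (le_max_right t T))
      (max_le_max hst le_rfl)
  have hbdd : BddBelow (Set.range g) := by
    refine ⟨c, ?_⟩
    rintro y ⟨t, rfl⟩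
    exact hb _ (le_max_right t T)
  refine ⟨⨅ t, g t, (tendsto_atTop_ciInf hg hbdd).congr' ?_⟩
  filter_upwards [Filter.eventually_ge_atTop T] with t ht
  simp [hg_def, max_eq_left ht]

/-- Proposition 6.3 (limexistsprop): for any frozen percolation type flow,
π(t)/Φ(t) converges as t → ∞. -/
theorem frozen_percolation_type_flow_ratio_limit_exists
    {k : ℕ} (hk : 0 < k) (κ : Matrix (Fin k) (Fin k) ℝ) (hκ : IsKernel κ)
    (π : ℝ → Fin k → ℝ) (tc : ℝ) (φ : ℝ → ℝ) (hπ : IsTypeFlow κ π tc φ)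
    (hπ0pos : ∀ i, 0 < π 0 i) :
    ∃ L : Fin k → ℝ,
      Filter.Tendsto (fun t => (l1norm (π t))⁻¹ • π t) Filter.atTop (nhds L) := by
  classical
  obtain ⟨hκsymm, hκnn⟩ := hκ
  have hNE : Nonempty (Fin k) := ⟨⟨0, hk⟩⟩
  set i0 : Fin k := ⟨0, hk⟩ with hi0_def
  set B : ℝ := ∑ i, ∑ j, κ i j with hB_def
  have hBnn : 0 ≤ B := Finset.sum_nonneg fun i _ => Finset.sum_nonneg fun j _ => hκnn i j
  choose! μ hμpos hμl1 hμeig hμder using hπ.flowDE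
  set w : ℝ → Fin k → ℝ := fun t j => ∑ i, μ t i * κ i j with hw_def
  have hμsum : ∀ t, tc < t → ∑ i, μ t i = 1 := by
    intro t ht
    have h1 := hμl1 t ht
    unfold l1norm at h1
    calc ∑ i, μ t i = ∑ i, |μ t i| :=
          Finset.sum_congr rfl fun i _ => (abs_of_pos (hμpos t ht i)).symm
      _ = 1 := h1
  have hwnn : ∀ t, tc < t → ∀ j, 0 ≤ w t j := fun t ht j =>
    Finset.sum_nonneg fun i _ => mul_nonneg (hμpos t ht i).le (hκnn i j)
  have hwle : ∀ t, tc < t → ∀ j, w t j ≤ B := by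
    intro t ht j
    have h1 : ∀ i ∈ Finset.univ, μ t i * κ i j ≤ ∑ j', κ i j' := by
      intro i _
      have hμi : μ t i ≤ 1 := by
        have hs := hμsum t ht
        have h2 := Finset.single_le_sum (f := fun i => μ t i)
          (fun i _ => (hμpos t ht i).le) (Finset.mem_univ i)
        linarith
      calc μ t i * κ i j ≤ 1 * κ i j := mul_le_mul_of_nonneg_right hμi (hκnn i j)
        _ = κ i j := one_mul _
        _ ≤ ∑ j', κ i j' := Finset.single_le_sum (fun j' _ => hκnn i j') (Finset.mem_univ j)
    exact Finset.sum_le_sum h1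
  have hkey : ∀ t, tc < t → ∀ j, π t j * (w t j + t) = μ t j := by
    intro t ht j
    have h1 := congrFun (hμeig t ht) j
    have h2 : ∑ i, μ t i * ((κ i j + t) * π t j) = μ t j := by
      simpa [Matrix.vecMul, dotProduct, circ, kernelAt, Matrix.add_apply,
        Matrix.smul_apply, smul_eq_mul, Matrix.of_apply] using h1
    have h3 : ∑ i, μ t i * ((κ i j + t) * π t j)
        = (∑ i, μ t i * κ i j) * π t j + t * (∑ i, μ t i) * π t j := by
      rw [Finset.sum_mul, Finset.mul_sum, Finset.sum_mul, ← Finset.sum_add_distrib]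
      exact Finset.sum_congr rfl fun i _ => by ring
    rw [h3, hμsum t ht] at h2
    rw [← h2]; ring
  have hπpos : ∀ t, tc < t → ∀ j, 0 < π t j := by
    intro t ht j
    have h1 := hkey t ht j
    have h2 : 0 < w t j + t := by
      have := hwnn t ht j; have := hπ.tc_nonneg; linarith
    nlinarith [hμpos t ht j]
  have hcoord : ∀ t, tc < t → ∀ i, HasDerivAt (fun s => π s i) (-(φ t) * μ t i) t := by
    intro t ht i
    have h := (hasDerivAt_pi.1 (hμder t ht)) i
    simpa using h
  set P : ℝ → ℝ := fun t => ∑ j, π t j with hP_def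
  have hPder : ∀ t, tc < t → HasDerivAt P (-(φ t)) t := by
    intro t ht
    have h1 : HasDerivAt P (∑ j, -(φ t) * μ t j) t :=
      HasDerivAt.fun_sum fun j _ => hcoord t ht j
    have h2 : (∑ j, -(φ t) * μ t j) = -(φ t) := by
      rw [← Finset.mul_sum, hμsum t ht, mul_one]
    rwa [h2] at h1
  set G : Fin k → ℝ → ℝ := fun i t => Real.log (π t i) - Real.log (π t i0) with hG_def
  have hlogder : ∀ t, tc < t → ∀ i,
      HasDerivAt (fun s => Real.log (π s i)) (-(φ t) * (w t i + t)) t := by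
    intro t ht i
    have hne : π t i ≠ 0 := ne_of_gt (hπpos t ht i)
    have h1 := (hcoord t ht i).log hne
    have h2 : -(φ t) * μ t i / π t i = -(φ t) * (w t i + t) := by
      rw [← hkey t ht i]
      field_simp [hne]
    rwa [h2] at h1
  have hGder : ∀ t, tc < t → ∀ i,
      HasDerivAt (G i) (-(φ t) * (w t i - w t i0)) t := by
    intro t ht i
    have h := (hlogder t ht i).sub (hlogder t ht i0)
    exact h.congr_deriv (by ring)
  set T : ℝ := tc + 1 with hT_def
  have hTgt : ∀ t : ℝ, T ≤ t → tc < t := fun t h => lt_of_lt_of_le (by linarith) h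
  have hanti : ∀ (f : ℝ → ℝ) (d : ℝ → ℝ), (∀ t, tc < t → HasDerivAt f (d t) t) →
      (∀ t, tc < t → d t ≤ 0) → AntitoneOn f (Set.Ici T) := by
    intro f d hd hd0
    apply antitoneOn_of_deriv_nonpos (convex_Ici T)
    · intro t ht
      exact ((hd t (hTgt t ht)).differentiableAt).continuousAt.continuousWithinAt
    · intro t ht
      rw [interior_Ici] at ht
      exact ((hd t (hTgt t ht.le)).differentiableAt).differentiableWithinAt
    · intro t ht
      rw [interior_Ici] at ht
      rw [(hd t (hTgt t ht.le)).deriv]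
      exact hd0 t (hTgt t ht.le)
  have hmono : ∀ (f : ℝ → ℝ) (d : ℝ → ℝ), (∀ t, tc < t → HasDerivAt f (d t) t) →
      (∀ t, tc < t → 0 ≤ d t) → MonotoneOn f (Set.Ici T) := by
    intro f d hd hd0
    apply monotoneOn_of_deriv_nonneg (convex_Ici T)
    · intro t ht
      exact ((hd t (hTgt t ht)).differentiableAt).continuousAt.continuousWithinAt
    · intro t ht
      rw [interior_Ici] at ht
      exact ((hd t (hTgt t ht.le)).differentiableAt).differentiableWithinAt
    · intro t ht
      rw [interior_Ici] at ht
      rw [(hd t (hTgt t ht.le)).deriv]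
      exact hd0 t (hTgt t ht.le)
  have hPanti : AntitoneOn P (Set.Ici T) :=
    hanti P (fun t => -(φ t)) hPder (fun t ht => neg_nonpos.2 (hπ.phi_pos t ht).le)
  have hFpDeriv : ∀ i t, tc < t →
      HasDerivAt (fun s => G i s + B * P s) (-(φ t) * (w t i - w t i0 + B)) t := by
    intro i t ht
    have h := (hGder t ht i).add ((hPder t ht).const_mul B)
    exact h.congr_deriv (by ring)
  have hFmDeriv : ∀ i t, tc < t →
      HasDerivAt (fun s => G i s - B * P s) (-(φ t) * (w t i - w t i0 - B)) t := by
    intro i t ht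
    have h := (hGder t ht i).sub ((hPder t ht).const_mul B)
    exact h.congr_deriv (by ring)
  have hFp_anti : ∀ i, AntitoneOn (fun t => G i t + B * P t) (Set.Ici T) := by
    intro i
    apply hanti _ _ (hFpDeriv i)
    intro t ht
    have h1 : 0 ≤ w t i - w t i0 + B := by
      have := hwnn t ht i; have := hwle t ht i0; linarith
    have h2 := (hπ.phi_pos t ht).le
    nlinarith
  have hFm_mono : ∀ i, MonotoneOn (fun t => G i t - B * P t) (Set.Ici T) := by
    intro i
    apply hmono _ _ (hFmDeriv i)
    intro t ht
    have h1 : w t i - w t i0 - B ≤ 0 := by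
      have := hwle t ht i; have := hwnn t ht i0; linarith
    have h2 := (hπ.phi_pos t ht).le
    nlinarith
  have hPnn : ∀ t, T ≤ t → (0:ℝ) ≤ P t := fun t ht =>
    Finset.sum_nonneg fun j _ => (hπpos t (hTgt t ht) j).le
  obtain ⟨Pinf, hPlim⟩ := aux_tendsto_of_antitoneOn hPanti hPnn
  have hFlim : ∀ i, ∃ A, Filter.Tendsto (fun t => G i t + B * P t) Filter.atTop (nhds A) := by
    intro i
    refine aux_tendsto_of_antitoneOn (hFp_anti i) (c := G i T - B * P T) ?_
    intro t ht
    have h1 : G i T - B * P T ≤ G i t - B * P t :=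
      hFm_mono i Set.self_mem_Ici ht ht
    have h2 : 0 ≤ B * P t := mul_nonneg hBnn (hPnn t ht)
    linarith
  choose A hA using hFlim
  have hGlim : ∀ i, Filter.Tendsto (G i) Filter.atTop (nhds (A i - B * Pinf)) := by
    intro i
    have h := (hA i).sub (hPlim.const_mul B)
    simpa using h
  set S : ℝ := ∑ j, Real.exp (A j - B * Pinf) with hS_def
  have hSpos : 0 < S :=
    Finset.sum_pos (fun j _ => Real.exp_pos _) Finset.univ_nonempty
  refine ⟨fun i => Real.exp (A i - B * Pinf) / S, ?_⟩
  rw [tendsto_pi_nhds]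
  intro i
  have hnum : Filter.Tendsto (fun t => Real.exp (G i t)) Filter.atTop
      (nhds (Real.exp (A i - B * Pinf))) :=
    (Real.continuous_exp.tendsto _).comp (hGlim i)
  have hden : Filter.Tendsto (fun t => ∑ j, Real.exp (G j t)) Filter.atTop (nhds S) :=
    tendsto_finset_sum _ fun j _ => (Real.continuous_exp.tendsto _).comp (hGlim j)
  have hmain := hnum.div hden (ne_of_gt hSpos)
  refine hmain.congr' ?_
  filter_upwards [Filter.eventually_ge_atTop T] with t ht
  have ht' := hTgt t ht
  have hp0 : 0 < π t i0 := hπpos t ht' i0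
  have hexp : ∀ j, Real.exp (G j t) = π t j / π t i0 := by
    intro j
    simp only [hG_def]
    rw [Real.exp_sub, Real.exp_log (hπpos t ht' j), Real.exp_log hp0]
  have hPt : 0 < P t := Finset.sum_pos (fun j _ => hπpos t ht' j) Finset.univ_nonempty
  have hl1 : l1norm (π t) = P t := by
    unfold l1norm
    exact Finset.sum_congr rfl fun j _ => abs_of_pos (hπpos t ht' j)
  simp only [Pi.div_apply, Pi.smul_apply, smul_eq_mul, hl1, hexp]
  rw [show (∑ j, π t j / π t i0) = P t / π t i0 from (Finset.sum_div _ _ _).symm]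
  field_simp
end

section
/- Let π be a frozen percolation type flow with initial kernel a kernel κ and initial value π(0) ∈ Π_{≤1} having strictly positive entries. Then π_i(t) > 0 for every i ∈ [k] and every t ≥ 0; moreover, writing κ_max = max_{i,j∈[k]} κ_{i,j}, one has π_i(t) ≥ π_i(0)·exp(−(κ_max + t)) for all i ∈ [k] and all t ≥ 0. -/
open Matrix

/-- Lemma 3.2 (flowsstaypositive): every component of a frozen percolation type flow
stays strictly positive, with an explicit exponential lower bound. -/
theorem frozen_percolation_type_flow_stays_positive
    {k : ℕ} (hk : 0 < k) (κ : Matrix (Fin k) (Fin k) ℝ) (hκ : IsKernel κ)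
    (π : ℝ → Fin k → ℝ) (tc : ℝ) (φ : ℝ → ℝ) (hπ : IsTypeFlow κ π tc φ)
    (hπ0pos : ∀ i, 0 < π 0 i) (hπ0sum : ∑ i, π 0 i ≤ 1) :
    ∀ i, ∀ t ≥ (0 : ℝ), 0 < π t i ∧
      π 0 i * Real.exp (-((⨆ i, ⨆ j, κ i j) + t)) ≤ π t i := by
  haveI : Nonempty (Fin k) := ⟨⟨0, hk⟩⟩
  set K : ℝ := ⨆ i, ⨆ j, κ i j with hKdef
  have hKge : ∀ i j, κ i j ≤ K := fun i j =>
    le_trans (le_ciSup (Set.Finite.bddAbove (Set.finite_range _)) j)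
      (le_ciSup (f := fun i => ⨆ j, κ i j) (Set.Finite.bddAbove (Set.finite_range _)) i)
  have i0 : Fin k := ⟨0, hk⟩
  have hK0 : 0 ≤ K := le_trans (hκ.2 i0 i0) (hKge i0 i0)
  have htc0 := hπ.tc_nonneg
  set s : ℝ → ℝ := fun t => ∑ j, π t j with hsdef
  have hs_nonneg : ∀ t ≥ (0:ℝ), 0 ≤ s t := fun t ht =>
    Finset.sum_nonneg fun j _ => hπ.nonneg t ht j
  have hstc : s tc ≤ 1 := by
    simp only [hsdef, hπ.init tc htc0 le_rfl]
    exact hπ0sum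
  -- derivative of s and component derivatives with the eigenvector bound
  have hdata : ∀ x ∈ Set.Ioi tc,
      ∃ μ : Fin k → ℝ, (∀ i, μ i ≤ (K + x) * π x i) ∧
        HasDerivAt s (-(φ x)) x ∧
        (∀ i, HasDerivAt (fun t => π t i) (-(φ x) * μ i) x) := by
    intro x hx
    have hx' : tc < x := hx
    have hx0 : (0:ℝ) ≤ x := le_trans htc0 hx'.le
    obtain ⟨μ, hμpos, hμ1, hμeig, hder⟩ := hπ.flowDE x hx'
    have hci : ∀ i, HasDerivAt (fun t => π t i) (-(φ x) * μ i) x := by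
      intro i
      have := hasDerivAt_pi.mp hder i
      simpa [smul_eq_mul] using this
    have hsum : ∑ j, μ j = 1 := by
      have : ∑ j, μ j = l1norm μ :=
        Finset.sum_congr rfl fun j _ => (abs_of_pos (hμpos j)).symm
      rw [this, hμ1]
    have hbound : ∀ i, μ i ≤ (K + x) * π x i := by
      intro i
      have heq := congrFun hμeig i
      have heq' : ∑ j, μ j * ((κ j i + x) * π x i) = μ i := by
        simpa [Matrix.vecMul, dotProduct, circ, kernelAt, Matrix.add_apply,
          Matrix.smul_apply, Matrix.of_apply, smul_eq_mul] using heq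
      calc μ i = ∑ j, μ j * ((κ j i + x) * π x i) := heq'.symm
        _ ≤ ∑ j, μ j * ((K + x) * π x i) := by
            refine Finset.sum_le_sum fun j _ => ?_
            refine mul_le_mul_of_nonneg_left ?_ (hμpos j).le
            exact mul_le_mul_of_nonneg_right (add_le_add_left (hKge j i) x)
              (hπ.nonneg x hx0 i)
        _ = (K + x) * π x i := by rw [← Finset.sum_mul, hsum, one_mul]
    have hs' : HasDerivAt s (-(φ x)) x := by
      have h0 := HasDerivAt.fun_sum (fun j (_ : j ∈ Finset.univ) => hci j)
      have h2 : ∑ j, -(φ x) * μ j = -(φ x) := by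
        rw [← Finset.mul_sum, hsum, mul_one]
      rw [h2] at h0
      exact h0
    exact ⟨μ, hbound, hs', hci⟩
  -- continuity helpers
  have hsub : Set.Ici tc ⊆ Set.Ici (0:ℝ) := Set.Ici_subset_Ici.mpr htc0
  have hcπi : ∀ i, ContinuousOn (fun t => π t i) (Set.Ici (0:ℝ)) := fun i =>
    (continuous_apply i).comp_continuousOn hπ.cont
  have hcs : ContinuousOn s (Set.Ici (0:ℝ)) := by
    apply continuousOn_finset_sum
    intro j _
    exact hcπi j
  -- s is antitone on [tc, ∞)
  have hanti : AntitoneOn s (Set.Ici tc) := by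
    apply antitoneOn_of_deriv_nonpos (convex_Ici tc) (hcs.mono hsub)
    · intro x hx
      rw [interior_Ici] at hx
      obtain ⟨μ, _, hs', _⟩ := hdata x hx
      exact hs'.differentiableAt.differentiableWithinAt
    · intro x hx
      rw [interior_Ici] at hx
      obtain ⟨μ, _, hs', _⟩ := hdata x hx
      rw [hs'.deriv]
      linarith [hπ.phi_pos x hx]
  have hs_le_one : ∀ t ≥ tc, s t ≤ 1 := fun t ht =>
    le_trans (hanti Set.self_mem_Ici ht ht) hstc
  -- the monotone auxiliary function
  intro i
  set H : ℝ → ℝ := fun t => π t i * Real.exp (t - (K + t) * s t) with hHdef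
  have hHd : ∀ x ∈ Set.Ioi tc, ∃ D, HasDerivAt H D x ∧ 0 ≤ D := by
    intro x hx
    have hx' : tc < x := hx
    have hx0 : (0:ℝ) ≤ x := le_trans htc0 hx'.le
    obtain ⟨μ, hbound, hs', hci⟩ := hdata x hx
    have hg : HasDerivAt (fun t => t - (K + t) * s t)
        (1 - ((0 + 1) * s x + (K + x) * (-(φ x)))) x :=
      (hasDerivAt_id x).sub (((hasDerivAt_const x K).add (hasDerivAt_id x)).mul hs')
    have hE := hg.exp
    have hH : HasDerivAt H
        (-(φ x) * μ i * Real.exp (x - (K + x) * s x) +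
          π x i * (Real.exp (x - (K + x) * s x) * (1 - ((0 + 1) * s x + (K + x) * (-(φ x)))))) x :=
      (hci i).mul hE
    refine ⟨_, hH, ?_⟩
    have he : (0:ℝ) < Real.exp (x - (K + x) * s x) := Real.exp_pos _
    have h1 : 0 ≤ φ x * ((K + x) * π x i - μ i) :=
      mul_nonneg (hπ.phi_pos x hx').le (by linarith [hbound i])
    have h2 : 0 ≤ π x i * (1 - s x) :=
      mul_nonneg (hπ.nonneg x hx0 i) (by linarith [hs_le_one x hx'.le])
    have hrw : -(φ x) * μ i * Real.exp (x - (K + x) * s x) +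
        π x i * (Real.exp (x - (K + x) * s x) * (1 - ((0 + 1) * s x + (K + x) * (-(φ x))))) =
        Real.exp (x - (K + x) * s x) * (φ x * ((K + x) * π x i - μ i) + π x i * (1 - s x)) := by
      ring
    rw [hrw]
    exact mul_nonneg he.le (add_nonneg h1 h2)
  have hHcont : ContinuousOn H (Set.Ici tc) := by
    apply ContinuousOn.mul ((hcπi i).mono hsub)
    apply Real.continuous_exp.comp_continuousOn
    exact continuousOn_id.sub ((continuousOn_const.add continuousOn_id).mul (hcs.mono hsub))
  have hmono : MonotoneOn H (Set.Ici tc) := by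
    apply monotoneOn_of_deriv_nonneg (convex_Ici tc) hHcont
    · intro x hx
      rw [interior_Ici] at hx
      obtain ⟨D, hH, _⟩ := hHd x hx
      exact hH.differentiableAt.differentiableWithinAt
    · intro x hx
      rw [interior_Ici] at hx
      obtain ⟨D, hH, hD⟩ := hHd x hx
      rw [hH.deriv]; exact hD
  -- main bound for t ≥ tc
  have hmain : ∀ t ≥ tc, π 0 i * Real.exp (-(K + t)) ≤ π t i := by
    intro t ht
    have ht0 : (0:ℝ) ≤ t := le_trans htc0 ht
    have hHt : H tc ≤ H t := hmono Set.self_mem_Ici ht ht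
    have hHtc : H tc = π 0 i * Real.exp (tc - (K + tc) * s tc) := by
      simp only [hHdef, hπ.init tc htc0 le_rfl]
    have h1 : π 0 i * Real.exp (tc - (K + tc) * s tc) ≤
        π t i * Real.exp (t - (K + t) * s t) := by rw [← hHtc]; exact hHt
    have hA : 0 ≤ (K + t) * s t := mul_nonneg (by linarith) (hs_nonneg t ht0)
    have hB : (K + tc) * s tc ≤ K + tc := by
      nlinarith [hstc, hs_nonneg tc htc0]
    have hexp : -(K + t) + (t - (K + t) * s t) ≤ tc - (K + tc) * s tc := by linarith
    have h2 : π 0 i * Real.exp (-(K + t)) * Real.exp (t - (K + t) * s t) ≤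
        π t i * Real.exp (t - (K + t) * s t) := by
      refine le_trans ?_ h1
      rw [mul_assoc, ← Real.exp_add]
      exact mul_le_mul_of_nonneg_left (Real.exp_le_exp.mpr hexp) (hπ0pos i).le
    exact le_of_mul_le_mul_right h2 (Real.exp_pos _)
  intro t ht
  rcases le_or_gt t tc with hle | hlt
  · have hinit := hπ.init t ht hle
    constructor
    · rw [hinit]; exact hπ0pos i
    · rw [hinit]
      have : Real.exp (-(K + t)) ≤ 1 := by
        rw [← Real.exp_zero]
        exact Real.exp_le_exp.mpr (by linarith)
      nlinarith [hπ0pos i]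
  · have hb := hmain t hlt.le
    constructor
    · have : 0 < π 0 i * Real.exp (-(K + t)) :=
        mul_pos (hπ0pos i) (Real.exp_pos _)
      linarith
    · exact hb
end

section
/- For all real numbers 0 < η < T < ∞ there exists a constant C < ∞ such that: for all k×k real matrices A and A' with every entry in the interval [η,T], and all vectors μ, μ' ∈ ℝ^k with strictly positive entries and ‖μ‖₁ = ‖μ'‖₁ = 1 satisfying μA = rμ and μ'A' = r'μ' for some real numbers r, r' > 0, one has ‖μ − μ'‖₁ ≤ C · max_{i,j∈[k]} |A_{i,j} − A'_{i,j}|. -/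
open Matrix

/-- `B ∈ B_θ(A)`: `B` has strictly positive entries and each entry differs from
the corresponding entry of `A` by at most `θ`. -/
def memBall {k : ℕ} (θ : ℝ) (A B : Matrix (Fin k) (Fin k) ℝ) : Prop :=
  (∀ i j, 0 < B i j) ∧ ∀ i j, |B i j - A i j| ≤ θ

/-- Lemma (muLipprop1): uniform Lipschitz continuity of the normalised principal
left-eigenvector on matrices with entries in [η,T]. -/
theorem principal_eigenvector_lipschitz
    {k : ℕ} (hk : 0 < k) (η T : ℝ) (hη : 0 < η) (hηT : η < T) :
    ∃ C : ℝ, ∀ A A' : Matrix (Fin k) (Fin k) ℝ,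
      (∀ i j, A i j ∈ Set.Icc η T) → (∀ i j, A' i j ∈ Set.Icc η T) →
      ∀ (μ μ' : Fin k → ℝ) (r r' : ℝ),
        (∀ i, 0 < μ i) → l1norm μ = 1 → 0 < r → Matrix.vecMul μ A = r • μ →
        (∀ i, 0 < μ' i) → l1norm μ' = 1 → 0 < r' → Matrix.vecMul μ' A' = r' • μ' →
        l1norm (μ - μ') ≤ C * ⨆ i, ⨆ j, |A i j - A' i j| := by
  classical
  have hT : 0 < T := hη.trans hηT
  refine ⟨2 * T ^ 3 / η ^ 4, ?_⟩
  intro A A' hA hA' μ μ' r r' hμpos hμ1 hr hμA hμ'pos hμ'1 hr' hμ'A'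
  have i0 : Fin k := ⟨0, hk⟩
  set δ := ⨆ i, ⨆ j, |A i j - A' i j| with hδdef
  have hδle : ∀ i j, |A i j - A' i j| ≤ δ := by
    intro i j
    have h1 : |A i j - A' i j| ≤ ⨆ j, |A i j - A' i j| :=
      le_ciSup (f := fun j => |A i j - A' i j|) (Set.Finite.bddAbove (Set.finite_range _)) j
    have h2 : (⨆ j, |A i j - A' i j|) ≤ δ :=
      le_ciSup (f := fun i => ⨆ j, |A i j - A' i j|) (Set.Finite.bddAbove (Set.finite_range _)) i
    exact h1.trans h2
  have hδ0 : 0 ≤ δ := (abs_nonneg _).trans (hδle i0 i0)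
  -- sums equal one
  have hsum : ∑ i, μ i = 1 := by
    have h : ∑ i, |μ i| = ∑ i, μ i := Finset.sum_congr rfl fun i _ => abs_of_pos (hμpos i)
    have h2 := hμ1
    unfold l1norm at h2
    rw [← h2, h]
  have hsum' : ∑ i, μ' i = 1 := by
    have h : ∑ i, |μ' i| = ∑ i, μ' i := Finset.sum_congr rfl fun i _ => abs_of_pos (hμ'pos i)
    have h2 := hμ'1
    unfold l1norm at h2
    rw [← h2, h]
  -- eigen equations componentwise
  have hP : ∀ j, ∑ i, μ i * A i j = r * μ j := by
    intro j
    have h := congrFun hμA j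
    simpa [Matrix.vecMul, dotProduct] using h
  have hQ' : ∀ j, ∑ i, μ' i * A' i j = r' * μ' j := by
    intro j
    have h := congrFun hμ'A' j
    simpa [Matrix.vecMul, dotProduct] using h
  -- min and max ratio
  obtain ⟨ia, -, hia⟩ := Finset.exists_min_image Finset.univ (fun i => μ i / μ' i)
    ⟨i0, Finset.mem_univ _⟩
  obtain ⟨ib, -, hib⟩ := Finset.exists_max_image Finset.univ (fun i => μ i / μ' i)
    ⟨i0, Finset.mem_univ _⟩
  set a := μ ia / μ' ia with hadef
  set b := μ ib / μ' ib with hbdef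
  have hlow : ∀ i, a * μ' i ≤ μ i := fun i =>
    (le_div_iff₀ (hμ'pos i)).mp (hia i (Finset.mem_univ i))
  have hhigh : ∀ i, μ i ≤ b * μ' i := fun i =>
    (div_le_iff₀ (hμ'pos i)).mp (hib i (Finset.mem_univ i))
  have ha0 : 0 < a := div_pos (hμpos ia) (hμ'pos ia)
  have hb0 : 0 < b := div_pos (hμpos ib) (hμ'pos ib)
  have hμa : a * μ' ia = μ ia := div_mul_cancel₀ _ (hμ'pos ia).ne'
  have hμb : b * μ' ib = μ ib := div_mul_cancel₀ _ (hμ'pos ib).ne'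
  have ha1 : a ≤ 1 := by
    have h := Finset.sum_le_sum (fun i (_ : i ∈ Finset.univ) => hlow i)
    rw [← Finset.mul_sum, hsum, hsum'] at h
    linarith
  have hb1 : 1 ≤ b := by
    have h := Finset.sum_le_sum (fun i (_ : i ∈ Finset.univ) => hhigh i)
    rw [← Finset.mul_sum, hsum, hsum'] at h
    linarith
  -- Q j = (μ' A)_j
  set Q : Fin k → ℝ := fun j => ∑ i, μ' i * A i j with hQdef
  have hQT : ∀ j, Q j ≤ T := by
    intro j
    have h : Q j ≤ ∑ i, μ' i * T :=
      Finset.sum_le_sum fun i _ => mul_le_mul_of_nonneg_left (hA i j).2 (hμ'pos i).le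
    rwa [← Finset.sum_mul, hsum', one_mul] at h
  have hQ'l : ∀ j, η ≤ r' * μ' j := by
    intro j
    rw [← hQ' j]
    have h : ∑ i, μ' i * η ≤ ∑ i, μ' i * A' i j :=
      Finset.sum_le_sum fun i _ => mul_le_mul_of_nonneg_left (hA' i j).1 (hμ'pos i).le
    rwa [← Finset.sum_mul, hsum', one_mul] at h
  have hQ'u : ∀ j, r' * μ' j ≤ T := by
    intro j
    rw [← hQ' j]
    have h : ∑ i, μ' i * A' i j ≤ ∑ i, μ' i * T :=
      Finset.sum_le_sum fun i _ => mul_le_mul_of_nonneg_left (hA' i j).2 (hμ'pos i).le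
    rwa [← Finset.sum_mul, hsum', one_mul] at h
  have hPl : ∀ j, η ≤ r * μ j := by
    intro j
    rw [← hP j]
    have h : ∑ i, μ i * η ≤ ∑ i, μ i * A i j :=
      Finset.sum_le_sum fun i _ => mul_le_mul_of_nonneg_left (hA i j).1 (hμpos i).le
    rwa [← Finset.sum_mul, hsum, one_mul] at h
  have hPu : ∀ j, r * μ j ≤ T := by
    intro j
    rw [← hP j]
    have h : ∑ i, μ i * A i j ≤ ∑ i, μ i * T :=
      Finset.sum_le_sum fun i _ => mul_le_mul_of_nonneg_left (hA i j).2 (hμpos i).le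
    rwa [← Finset.sum_mul, hsum, one_mul] at h
  -- perturbation bound
  have hpert : ∀ j, |Q j - r' * μ' j| ≤ δ := by
    intro j
    rw [← hQ' j]
    have h : Q j - ∑ i, μ' i * A' i j = ∑ i, μ' i * (A i j - A' i j) := by
      rw [hQdef]
      rw [← Finset.sum_sub_distrib]
      exact Finset.sum_congr rfl fun i _ => by ring
    rw [h]
    calc |∑ i, μ' i * (A i j - A' i j)| ≤ ∑ i, |μ' i * (A i j - A' i j)| :=
          Finset.abs_sum_le_sum_abs _ _
      _ ≤ ∑ i, μ' i * δ := Finset.sum_le_sum fun i _ => by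
          rw [abs_mul, abs_of_pos (hμ'pos i)]
          exact mul_le_mul_of_nonneg_left (hδle i j) (hμ'pos i).le
      _ = δ := by rw [← Finset.sum_mul, hsum', one_mul]
  -- one-step oscillation bounds
  have low : ∀ j, a * Q j + η * (1 - a) ≤ r * μ j := by
    intro j
    rw [← hP j]
    have h : ∀ i ∈ Finset.univ, a * (μ' i * A i j) + (μ i - a * μ' i) * η ≤ μ i * A i j := by
      intro i _
      have h0 : (0:ℝ) ≤ μ i - a * μ' i := by linarith [hlow i]
      have h1 := mul_le_mul_of_nonneg_left (hA i j).1 h0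
      nlinarith [h1]
    have h2 := Finset.sum_le_sum h
    have e : ∑ i, (a * (μ' i * A i j) + (μ i - a * μ' i) * η)
        = a * Q j + η * (1 - a) := by
      rw [Finset.sum_add_distrib, ← Finset.mul_sum, ← Finset.sum_mul,
        Finset.sum_sub_distrib, ← Finset.mul_sum, hsum, hsum', hQdef]
      ring
    linarith [e ▸ h2]
  have high : ∀ j, r * μ j ≤ b * Q j - η * (b - 1) := by
    intro j
    rw [← hP j]
    have h : ∀ i ∈ Finset.univ, μ i * A i j ≤ b * (μ' i * A i j) - (b * μ' i - μ i) * η := by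
      intro i _
      have h0 : (0:ℝ) ≤ b * μ' i - μ i := by linarith [hhigh i]
      have h1 := mul_le_mul_of_nonneg_left (hA i j).1 h0
      nlinarith [h1]
    have h2 := Finset.sum_le_sum h
    have e : ∑ i, (b * (μ' i * A i j) - (b * μ' i - μ i) * η)
        = b * Q j - η * (b - 1) := by
      rw [Finset.sum_sub_distrib, ← Finset.mul_sum, ← Finset.sum_mul,
        Finset.sum_sub_distrib, ← Finset.mul_sum, hsum, hsum', hQdef]
      ring
    linarith [e ▸ h2]
  -- scaled quantities
  set A₁ : ℝ := T * a + η * (1 - a) with hA₁def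
  set B₁ : ℝ := T * b - η * (b - 1) with hB₁def
  have hA₁0 : 0 < A₁ := by
    have p : 0 ≤ a * (T - η) := mul_nonneg ha0.le (by linarith)
    rw [hA₁def]; linarith
  have hB₁0 : 0 < B₁ := by
    have p : 0 ≤ b * (T - η) := mul_nonneg hb0.le (by linarith)
    rw [hB₁def]; linarith
  have hA₁T : A₁ ≤ T := by
    have p : 0 ≤ (1 - a) * (T - η) := mul_nonneg (by linarith) (by linarith)
    rw [hA₁def]; linarith
  have hB₁Tb : B₁ ≤ T * b := by
    have p : 0 ≤ η * (b - 1) := mul_nonneg hη.le (by linarith)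
    rw [hB₁def]; linarith
  -- scaled one-step bounds at the extremal indices
  have I1a : A₁ * Q ia ≤ T * (r * μ ia) := by
    have h1 := mul_le_mul_of_nonneg_left (low ia) hT.le
    have h2 : η * (1 - a) * (T - Q ia) ≥ 0 :=
      mul_nonneg (mul_nonneg hη.le (by linarith)) (by linarith [hQT ia])
    have e : A₁ * Q ia
        = T * (a * Q ia + η * (1 - a)) - η * (1 - a) * (T - Q ia) := by
      rw [hA₁def]; ring
    linarith [h1, h2, e.le, e.ge]
  have I2b : T * (r * μ ib) ≤ B₁ * Q ib := by
    have h1 := mul_le_mul_of_nonneg_left (high ib) hT.le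
    have h2 : η * (b - 1) * (T - Q ib) ≥ 0 :=
      mul_nonneg (mul_nonneg hη.le (by linarith)) (by linarith [hQT ib])
    have e : B₁ * Q ib
        = T * (b * Q ib - η * (b - 1)) + η * (b - 1) * (T - Q ib) := by
      rw [hB₁def]; ring
    linarith [h1, h2, e.le, e.ge]
  -- perturbation at extremal indices
  have hpa : r' * μ' ia - δ ≤ Q ia := by
    have := abs_le.mp (hpert ia); linarith [this.2]
  have hpb : Q ib ≤ r' * μ' ib + δ := by
    have := abs_le.mp (hpert ib); linarith [this.1]
  -- combined multiplicative inequalities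
  have I1' : A₁ * ((η - δ) * r') ≤ η * (T * (r * a)) := by
    have t1 : δ * η ≤ δ * (r' * μ' ia) := mul_le_mul_of_nonneg_left (hQ'l ia) hδ0
    have t3 : η * (r' * μ' ia - δ) ≤ η * Q ia := mul_le_mul_of_nonneg_left hpa hη.le
    have s1 : (η - δ) * (r' * μ' ia) ≤ η * Q ia := by linarith [t1, t3]
    have s2 : A₁ * ((η - δ) * (r' * μ' ia)) ≤ A₁ * (η * Q ia) :=
      mul_le_mul_of_nonneg_left s1 hA₁0.le
    have s3 : η * (A₁ * Q ia) ≤ η * (T * (r * μ ia)) :=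
      mul_le_mul_of_nonneg_left I1a hη.le
    have key : (A₁ * ((η - δ) * r')) * μ' ia ≤ (η * (T * (r * a))) * μ' ia := by
      calc (A₁ * ((η - δ) * r')) * μ' ia = A₁ * ((η - δ) * (r' * μ' ia)) := by ring
        _ ≤ A₁ * (η * Q ia) := s2
        _ = η * (A₁ * Q ia) := by ring
        _ ≤ η * (T * (r * μ ia)) := s3
        _ = (η * (T * (r * a))) * μ' ia := by rw [← hμa]; ring
    exact le_of_mul_le_mul_right key (hμ'pos ia)
  have I2' : η * (T * (r * b)) ≤ B₁ * ((η + δ) * r') := by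
    have t1 : δ * η ≤ δ * (r' * μ' ib) := mul_le_mul_of_nonneg_left (hQ'l ib) hδ0
    have t3 : η * Q ib ≤ η * (r' * μ' ib + δ) := mul_le_mul_of_nonneg_left hpb hη.le
    have s1 : η * Q ib ≤ (η + δ) * (r' * μ' ib) := by linarith [t1, t3]
    have s2 : B₁ * (η * Q ib) ≤ B₁ * ((η + δ) * (r' * μ' ib)) :=
      mul_le_mul_of_nonneg_left s1 hB₁0.le
    have s3 : η * (T * (r * μ ib)) ≤ η * (B₁ * Q ib) :=
      mul_le_mul_of_nonneg_left I2b hη.le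
    have key : (η * (T * (r * b))) * μ' ib ≤ (B₁ * ((η + δ) * r')) * μ' ib := by
      calc (η * (T * (r * b))) * μ' ib = η * (T * (r * μ ib)) := by rw [← hμb]; ring
        _ ≤ η * (B₁ * Q ib) := s3
        _ = B₁ * (η * Q ib) := by ring
        _ ≤ B₁ * ((η + δ) * (r' * μ' ib)) := s2
        _ = (B₁ * ((η + δ) * r')) * μ' ib := by ring
    exact le_of_mul_le_mul_right key (hμ'pos ib)
  -- multiply the two and cancel positive factors
  have hstar : A₁ * (η - δ) * b ≤ a * B₁ * (η + δ) := by
    have u1 : (0:ℝ) < η * (T * (r * b)) := by positivity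
    have u2 : (0:ℝ) < η * (T * (r * a)) := by positivity
    have hprod : (A₁ * ((η - δ) * r')) * (η * (T * (r * b)))
        ≤ (η * (T * (r * a))) * (B₁ * ((η + δ) * r')) := by
      calc (A₁ * ((η - δ) * r')) * (η * (T * (r * b)))
          ≤ (η * (T * (r * a))) * (η * (T * (r * b))) :=
            mul_le_mul_of_nonneg_right I1' u1.le
        _ ≤ (η * (T * (r * a))) * (B₁ * ((η + δ) * r')) :=
            mul_le_mul_of_nonneg_left I2' u2.le
    have hc : (0:ℝ) < η * (T * (r * r')) := by positivity
    refine le_of_mul_le_mul_right ?_ hc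
    calc A₁ * (η - δ) * b * (η * (T * (r * r')))
        = (A₁ * ((η - δ) * r')) * (η * (T * (r * b))) := by ring
      _ ≤ (η * (T * (r * a))) * (B₁ * ((η + δ) * r')) := hprod
      _ = a * B₁ * (η + δ) * (η * (T * (r * r'))) := by ring
  -- main estimate: η²(b-a) ≤ 2δTb
  have hmain : η ^ 2 * (b - a) ≤ 2 * δ * (T * b) := by
    have e1 : δ * (A₁ * b) ≤ δ * (T * b) :=
      mul_le_mul_of_nonneg_left (mul_le_mul_of_nonneg_right hA₁T hb0.le) hδ0
    have e2 : δ * (a * B₁) ≤ δ * (T * b) := by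
      have q1 : a * B₁ ≤ 1 * B₁ := mul_le_mul_of_nonneg_right ha1 hB₁0.le
      exact mul_le_mul_of_nonneg_left (by linarith [hB₁Tb]) hδ0
    have hid : η ^ 2 * (b - a)
        = (A₁ * (η - δ) * b - a * B₁ * (η + δ)) + δ * (A₁ * b) + δ * (a * B₁) := by
      rw [hA₁def, hB₁def]; ring
    linarith [hstar, e1, e2, hid.le, hid.ge]
  -- a priori bound on b
  have step1 : η ≤ r * μ' ia := by
    have h1 : μ ia ≤ μ' ia := by
      have p : 0 ≤ (1 - a) * μ' ia := mul_nonneg (by linarith) (hμ'pos ia).le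
      linarith [hμa.ge, p]
    have h2 := mul_le_mul_of_nonneg_left h1 hr.le
    linarith [hPl ia]
  have hηr' : η * r' ≤ T * r := by
    have h1 := mul_le_mul_of_nonneg_right step1 hr'.le
    have h2 := mul_le_mul_of_nonneg_left (hQ'u ia) hr.le
    linarith [h1, h2]
  have hbη : b * η ^ 2 ≤ T ^ 2 := by
    have h1 : r * (b * μ' ib) ≤ T := by rw [hμb]; exact hPu ib
    have h2 : η * (η * (r * b)) ≤ (r' * μ' ib) * (η * (r * b)) :=
      mul_le_mul_of_nonneg_right (hQ'l ib) (by positivity)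
    have h3 : (η * r') * (r * (b * μ' ib)) ≤ (η * r') * T :=
      mul_le_mul_of_nonneg_left h1 (by positivity)
    have h4 : (η * r') * T ≤ (T * r) * T := mul_le_mul_of_nonneg_right hηr' hT.le
    have h5 : η ^ 2 * (r * b) ≤ T ^ 2 * r := by linarith [h2, h3, h4]
    refine le_of_mul_le_mul_right ?_ hr
    linarith [h5]
  -- ℓ¹ bound by oscillation
  have hl1 : l1norm (μ - μ') ≤ b - a := by
    unfold l1norm
    have h : ∀ i ∈ Finset.univ, |(μ - μ') i| ≤ (b - a) * μ' i := by
      intro i _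
      have h1 := hlow i
      have h2 := hhigh i
      rw [Pi.sub_apply]
      rw [abs_le]
      have p1 : 0 ≤ (1 - a) * μ' i := mul_nonneg (by linarith) (hμ'pos i).le
      have p2 : 0 ≤ (b - 1) * μ' i := mul_nonneg (by linarith) (hμ'pos i).le
      constructor
      · linarith [h1, h2, p1, p2]
      · linarith [h1, h2, p1, p2]
    have h2 := Finset.sum_le_sum h
    rw [← Finset.mul_sum, hsum', mul_one] at h2
    exact h2
  -- finish
  have h4 : η ^ 4 * (b - a) ≤ 2 * T ^ 3 * δ := by
    have hA' := mul_le_mul_of_nonneg_left hmain (sq_nonneg η)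
    have hB' : (2 * δ * T) * (b * η ^ 2) ≤ (2 * δ * T) * T ^ 2 :=
      mul_le_mul_of_nonneg_left hbη (by positivity)
    linarith [hA', hB']
  have hfinal : b - a ≤ 2 * T ^ 3 / η ^ 4 * δ := by
    rw [div_mul_eq_mul_div, le_div_iff₀ (by positivity : (0:ℝ) < η ^ 4)]
    linarith [h4]
  linarith [hl1, hfinal]
end

section
/- Let 𝔸 be a compact subset of the set of k×k real matrices with nonnegative entries such that for every A ∈ 𝔸 the spectral radius ρ(A) is an eigenvalue of A which is a simple root of the characteristic polynomial of A. Then there exists a constant C < ∞ such that: for all A, A' ∈ 𝔸 and all vectors μ, μ' ∈ ℝ^k with nonnegative entries and ‖μ‖₁ = ‖μ'‖₁ = 1 satisfying μA = ρ(A)μ and μ'A' = ρ(A')μ', one has ‖μ − μ'‖₁ ≤ C · max_{i,j∈[k]} |A_{i,j} − A'_{i,j}|. -/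
open Matrix

open Polynomial Filter

noncomputable section

namespace PFAux

variable {k : ℕ}

abbrev Mk (k : ℕ) := Matrix (Fin k) (Fin k) ℝ

lemma eval_charpoly (A : Mk k) (t : ℝ) :
    (Matrix.charpoly A).eval t = Matrix.det (t • (1 : Mk k) - A) := by
  rw [Matrix.charpoly, eval_det, Matrix.matPolyEquiv_charmatrix]
  simp only [eval_sub, eval_X, eval_C]
  congr 1
  ext i j
  simp [Matrix.scalar, Matrix.smul_apply, Matrix.one_apply, Matrix.diagonal]

lemma charpoly_transpose (A : Mk k) : Matrix.charpoly Aᵀ = Matrix.charpoly A := by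
  rw [Matrix.charpoly, Matrix.charpoly, ← Matrix.det_transpose]
  congr 1
  ext i j
  by_cases h : i = j
  · subst h; simp [Matrix.charmatrix_apply_eq]
  · rw [Matrix.transpose_apply, Matrix.charmatrix_apply_ne _ _ _ h,
      Matrix.charmatrix_apply_ne _ _ _ (Ne.symm h), Matrix.transpose_apply]


lemma left_eigen_unique (A : Mk k) {r : ℝ}
    (hmult : (Matrix.charpoly A).rootMultiplicity r = 1)
    {μ : Fin k → ℝ} (hμ : Matrix.vecMul μ A = r • μ) (hμ1 : ∑ i, μ i = 1)
    {v : Fin k → ℝ} (hv : Matrix.vecMul v A = r • v) (hv0 : ∑ i, v i = 0) : v = 0 := by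
  by_contra hvne
  have hindep : LinearIndependent ℝ ![v, μ] := by
    rw [LinearIndependent.pair_iff]
    intro s t hst
    have hsum : s * (∑ i, v i) + t * (∑ i, μ i) = 0 := by
      have := congrArg (fun w => ∑ i, w i) hst
      simpa [Finset.mul_sum, ← Finset.sum_add_distrib] using this
    rw [hv0, hμ1] at hsum
    have ht : t = 0 := by linarith
    subst ht
    have hz : s • v = 0 := by simpa using hst
    rcases smul_eq_zero.1 hz with h | h
    · exact ⟨h, rfl⟩
    · exact absurd h hvne
  set s : Set (Fin k → ℝ) := Set.range ![v, μ] with hs_def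
  have hs : LinearIndepOn ℝ id s := hindep.linearIndepOn_id
  let b := Module.Basis.extend hs
  haveI : Fintype (hs.extend (Set.subset_univ s)) := IsNoetherian.fintypeBasisIndex b
  haveI : DecidableEq ((hs.extend (Set.subset_univ s) : Set (Fin k → ℝ))) := Classical.decEq _
  set f : (Fin k → ℝ) →ₗ[ℝ] (Fin k → ℝ) := Matrix.vecMulLinear A with hf_def
  have hfc : f.charpoly = Matrix.charpoly A := by
    have h1 : f = Matrix.toLin' Aᵀ := by
      apply LinearMap.ext; intro x
      show Matrix.vecMul x A = Matrix.toLin' Aᵀ x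
      rw [Matrix.toLin'_apply, Matrix.mulVec_transpose]
    rw [h1, ← LinearMap.charpoly_toMatrix (Matrix.toLin' Aᵀ) (Pi.basisFun ℝ (Fin k)),
      LinearMap.toMatrix_eq_toMatrix', LinearMap.toMatrix'_toLin', charpoly_transpose]
  have hvmem : v ∈ hs.extend (Set.subset_univ s) :=
    hs.subset_extend _ (by exact ⟨0, rfl⟩)
  have hμmem : μ ∈ hs.extend (Set.subset_univ s) :=
    hs.subset_extend _ (by exact ⟨1, rfl⟩)
  set iv : (hs.extend (Set.subset_univ s) : Set (Fin k → ℝ)) := ⟨v, hvmem⟩ with hiv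
  set iw : (hs.extend (Set.subset_univ s) : Set (Fin k → ℝ)) := ⟨μ, hμmem⟩ with hiw
  have hivw : iv ≠ iw := by
    intro h
    have : v = μ := congrArg Subtype.val h
    rw [this] at hv0
    rw [hμ1] at hv0
    norm_num at hv0
  set B := LinearMap.toMatrix b b f with hB_def
  have hBc : B.charpoly = Matrix.charpoly A := by
    rw [hB_def, LinearMap.charpoly_toMatrix, hfc]
  have hcol : ∀ (x : Fin k → ℝ), Matrix.vecMul x A = r • x →
      ∀ (ix : (hs.extend (Set.subset_univ s) : Set (Fin k → ℝ))), b ix = x →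
      (fun i => Matrix.charmatrix B i ix) = (X - C r) • (fun i => if i = ix then (1:ℝ[X]) else 0) := by
    intro x hx ix hbx
    have hBx : ∀ i, B i ix = r * (b.repr x) i := by
      intro i
      rw [hB_def, LinearMap.toMatrix_apply, hbx]
      have : f x = r • x := by simp [hf_def, hx]
      rw [this, _root_.map_smul]
      simp
    have hrepr : b.repr x = Finsupp.single ix 1 := by
      rw [← hbx, b.repr_self]
    funext i
    by_cases hi : i = ix
    · subst hi
      rw [Matrix.charmatrix_apply_eq, hBx, hrepr]
      simp [Finsupp.single_apply]
    · rw [Matrix.charmatrix_apply_ne _ _ _ hi, hBx, hrepr]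
      simp [Finsupp.single_apply, Ne.symm hi, hi]
  have hbv : b iv = v := Module.Basis.extend_apply_self hs iv
  have hbw : b iw = μ := Module.Basis.extend_apply_self hs iw
  have hviv := hcol v hv iv hbv
  have hwiw := hcol μ hμ iw hbw
  set D := Matrix.charmatrix B with hD_def
  set D₁ := D.updateCol iv (fun i => if i = iv then (1:ℝ[X]) else 0) with hD₁_def
  have e1 : Matrix.det D = (X - C r) * Matrix.det D₁ := by
    conv_lhs => rw [← Matrix.updateCol_eq_self D iv]
    rw [show (fun i => D i iv) = (X - C r) • (fun i => if i = iv then (1:ℝ[X]) else 0) from hviv,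
      Matrix.det_updateCol_smul]
  have hcol2 : (fun i => D₁ i iw) = (X - C r) • (fun i => if i = iw then (1:ℝ[X]) else 0) := by
    funext i
    rw [hD₁_def, Matrix.updateCol_apply]
    rw [if_neg (fun h => hivw h.symm)]
    exact congrFun hwiw i
  have e2 : Matrix.det D₁ = (X - C r) * Matrix.det (D₁.updateCol iw (fun i => if i = iw then (1:ℝ[X]) else 0)) := by
    conv_lhs => rw [← Matrix.updateCol_eq_self D₁ iw]
    rw [show (fun i => D₁ i iw) = (X - C r) • (fun i => if i = iw then (1:ℝ[X]) else 0) from hcol2,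
      Matrix.det_updateCol_smul]
  have hdvd : (X - C r) ^ 2 ∣ Matrix.charpoly B := by
    refine ⟨Matrix.det (D₁.updateCol iw (fun i => if i = iw then (1:ℝ[X]) else 0)), ?_⟩
    rw [Matrix.charpoly, ← hD_def, e1, e2]
    ring
  rw [hBc] at hdvd
  have hne : Matrix.charpoly A ≠ 0 := (Matrix.charpoly_monic A).ne_zero
  have h2 : 2 ≤ (Matrix.charpoly A).rootMultiplicity r :=
    (Polynomial.le_rootMultiplicity_iff hne).2 hdvd
  rw [hmult] at h2
  norm_num at h2


section Spectral

attribute [local instance] Matrix.linftyOpNormedAddCommGroup Matrix.linftyOpNormedRing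
  Matrix.linftyOpNormedAlgebra

lemma mapC_sub (t : ℝ) (B : Mk k) :
    ((t • (1 : Mk k) - B).map Complex.ofReal)
      = (t : ℂ) • (1 : Matrix (Fin k) (Fin k) ℂ) - B.map Complex.ofReal := by
  ext i j
  by_cases h : i = j <;>
    simp [Matrix.map_apply, Matrix.one_apply, h, Complex.ofReal_sub, sub_eq_add_neg]

lemma spec_nonempty (hk : 0 < k) (B : Mk k) :
    (spectrum ℂ (B.map Complex.ofReal)).Nonempty := by
  haveI : Nonempty (Fin k) := ⟨⟨0, hk⟩⟩
  exact spectrum.nonempty _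

lemma spec_compact (B : Mk k) :
    IsCompact ((fun z : ℂ => ‖z‖) '' spectrum ℂ (B.map Complex.ofReal)) :=
  (spectrum.isCompact _).image continuous_norm

lemma perronRoot_mem (hk : 0 < k) (B : Mk k) :
    perronRoot B ∈ (fun z : ℂ => ‖z‖) '' spectrum ℂ (B.map Complex.ofReal) :=
  (spec_compact B).sSup_mem ((spec_nonempty hk B).image _)

lemma abs_le_perronRoot (B : Mk k) {z : ℂ} (hz : z ∈ spectrum ℂ (B.map Complex.ofReal)) :
    ‖z‖ ≤ perronRoot B :=
  le_csSup (spec_compact B).bddAbove ⟨z, hz, rfl⟩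

lemma perronRoot_nonneg (hk : 0 < k) (B : Mk k) : 0 ≤ perronRoot B := by
  obtain ⟨z, hz, he⟩ := perronRoot_mem hk B
  rw [← he]
  exact norm_nonneg z

lemma mem_spectrum_of_root {t : ℝ} {B : Mk k}
    (h : Matrix.det (t • (1 : Mk k) - B) = 0) :
    (t : ℂ) ∈ spectrum ℂ (B.map Complex.ofReal) := by
  rw [spectrum.mem_iff]
  intro hu
  rw [Matrix.isUnit_iff_isUnit_det] at hu
  have e1 : algebraMap ℂ (Matrix (Fin k) (Fin k) ℂ) (t : ℂ) - B.map Complex.ofReal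
      = (t • (1 : Mk k) - B).map Complex.ofReal := by
    rw [mapC_sub, Algebra.algebraMap_eq_smul_one]
  rw [e1] at hu
  rw [show Matrix.map (t • (1 : Mk k) - B) Complex.ofReal
      = Complex.ofRealHom.mapMatrix (t • (1 : Mk k) - B) from rfl, ← RingHom.map_det, h] at hu
  simp at hu

lemma root_le_perronRoot (hk : 0 < k) {t : ℝ} {B : Mk k}
    (h : Matrix.det (t • (1 : Mk k) - B) = 0) : t ≤ perronRoot B := by
  have := abs_le_perronRoot B (mem_spectrum_of_root h)
  calc t ≤ |t| := le_abs_self t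
  _ = ‖(t : ℂ)‖ := by rw [Complex.norm_real, Real.norm_eq_abs]
  _ ≤ _ := this


lemma perronRoot_pow_le (hk : 0 < k) (B : Mk k) (n : ℕ) :
    perronRoot B ^ (n + 1) ≤ ‖(B.map Complex.ofReal) ^ (n + 1)‖ := by
  haveI : Nonempty (Fin k) := ⟨⟨0, hk⟩⟩
  obtain ⟨z, hz, hze⟩ := perronRoot_mem hk B
  have hmem : z ^ (n + 1) ∈ spectrum ℂ ((B.map Complex.ofReal) ^ (n + 1)) := by
    rw [spectrum.map_pow]
    exact ⟨z, hz, rfl⟩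
  calc perronRoot B ^ (n + 1) = ‖z ^ (n + 1)‖ := by
        rw [← hze, norm_pow]
  _ = ‖z ^ (n + 1)‖ := rfl
  _ ≤ ‖(B.map Complex.ofReal) ^ (n + 1)‖ := spectrum.norm_le_norm_of_mem hmem

lemma continuous_mapC : Continuous (fun B : Mk k => B.map Complex.ofReal) := by
  apply continuous_matrix
  intro i j
  exact Complex.continuous_ofReal.comp ((continuous_apply_apply i j))

lemma perronRoot_usc (hk : 0 < k) (A : Mk k) {ε : ℝ} (hε : 0 < ε) :
    ∀ᶠ B in nhds A, perronRoot B < perronRoot A + ε := by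
  haveI : Nonempty (Fin k) := ⟨⟨0, hk⟩⟩
  set a := A.map Complex.ofReal with ha
  -- the spectral radius of `a` is less than `ofReal (perronRoot A + ε)`
  have hsr : spectralRadius ℂ a < ENNReal.ofReal (perronRoot A + ε) := by
    have h1 : spectralRadius ℂ a ≤ ENNReal.ofReal (perronRoot A) := by
      rw [spectralRadius]
      refine iSup₂_le fun z hz => ?_
      have : ‖z‖ ≤ perronRoot A := abs_le_perronRoot A hz
      have hz' : ‖z‖₊ ≤ (perronRoot A).toNNReal := by
        rw [← norm_toNNReal]
        exact Real.toNNReal_mono this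
      calc (‖z‖₊ : ENNReal) ≤ ((perronRoot A).toNNReal : ENNReal) := by exact_mod_cast hz'
      _ = ENNReal.ofReal (perronRoot A) := rfl
    refine lt_of_le_of_lt h1 ?_
    rw [ENNReal.ofReal_lt_ofReal_iff (by linarith [perronRoot_nonneg hk A])]
    linarith
  -- Gelfand's formula gives an `n` with `‖a ^ (n+1)‖ ^ (1/(n+1)) < perronRoot A + ε`
  have hgel := spectrum.pow_norm_pow_one_div_tendsto_nhds_spectralRadius a
  have hev : ∀ᶠ n : ℕ in atTop,
      ENNReal.ofReal (‖a ^ n‖ ^ (1 / (n : ℝ))) < ENNReal.ofReal (perronRoot A + ε) :=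
    hgel.eventually_lt_const hsr
  obtain ⟨n, hn⟩ := (hev.and (eventually_ge_atTop 1)).exists
  obtain ⟨hlt, hn1⟩ := hn
  have hreal : ‖a ^ n‖ ^ (1 / (n : ℝ)) < perronRoot A + ε := by
    by_contra hcon
    push_neg at hcon
    exact absurd (ENNReal.ofReal_le_ofReal hcon) (not_le.2 hlt)
  obtain ⟨m, rfl⟩ : ∃ m, n = m + 1 := ⟨n - 1, by omega⟩
  -- continuity of `B ↦ ‖(B.map ofReal) ^ (m+1)‖ ^ (1/(m+1))`
  have hcont : Continuous (fun B : Mk k => ‖(B.map Complex.ofReal) ^ (m + 1)‖ ^ (1 / ((m:ℝ) + 1))) := by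
    apply Continuous.rpow_const
    · exact (continuous_norm.comp ((continuous_pow (m+1)).comp continuous_mapC))
    · intro _; right; positivity
  have hAval : ‖(A.map Complex.ofReal) ^ (m + 1)‖ ^ (1 / ((m:ℝ) + 1)) < perronRoot A + ε := by
    have : ((m : ℝ) + 1) = ((m + 1 : ℕ) : ℝ) := by push_cast; ring
    rw [this]
    exact_mod_cast hreal
  have := (hcont.continuousAt (x := A)).eventually_lt continuousAt_const hAval
  filter_upwards [this] with B hB
  -- `perronRoot B ≤ ‖(B.map ofReal) ^ (m+1)‖ ^ (1/(m+1))`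
  have h1 : perronRoot B ≤ ‖(B.map Complex.ofReal) ^ (m + 1)‖ ^ (1 / ((m:ℝ) + 1)) := by
    have h2 := perronRoot_pow_le hk B m
    have h3 : (perronRoot B ^ (m + 1) : ℝ) ^ (1 / ((m:ℝ) + 1))
        ≤ ‖(B.map Complex.ofReal) ^ (m + 1)‖ ^ (1 / ((m:ℝ) + 1)) := by
      apply Real.rpow_le_rpow (pow_nonneg (perronRoot_nonneg hk B) _) h2 (by positivity)
    rwa [← Real.rpow_natCast (perronRoot B) (m + 1), ← Real.rpow_mul (perronRoot_nonneg hk B),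
      (by push_cast; field_simp : ((m + 1 : ℕ) : ℝ) * (1 / ((m:ℝ) + 1)) = 1), Real.rpow_one] at h3
  linarith

end Spectral


section Smooth

attribute [local instance] Matrix.normedAddCommGroup Matrix.normedSpace

lemma contDiff_entry (i j : Fin k) (n : WithTop ℕ∞) :
    ContDiff ℝ n (fun B : Mk k => B i j) := by
  have h1 : ContDiff ℝ n (fun B : Mk k => B i) := contDiff_pi.mp contDiff_id i
  exact contDiff_pi.mp h1 j

lemma contDiff_det (n : WithTop ℕ∞) : ContDiff ℝ n (fun B : Mk k => B.det) := by
  have hrw : (fun B : Mk k => B.det)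
      = fun B : Mk k => ∑ σ : Equiv.Perm (Fin k),
          (((Equiv.Perm.sign σ : ℤ) : ℝ)) * ∏ i, B (σ i) i := by
    funext B
    rw [Matrix.det_apply']
  rw [hrw]
  apply ContDiff.sum
  intro σ _
  have h := contDiff_prod' (fun i (_ : i ∈ Finset.univ) => contDiff_entry (k := k) (σ i) i n)
  have h' : ContDiff ℝ n (fun B : Mk k => ∏ i, B (σ i) i) := by
    have he : (fun B : Mk k => ∏ i, B (σ i) i) = ∏ i, fun B : Mk k => B (σ i) i := by
      funext B
      rw [Finset.prod_apply]
    rw [he]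
    exact h
  exact contDiff_const.mul h'

/-- the function `(B, t) ↦ det (t•1 - B)`. -/
def Fdet (p : Mk k × ℝ) : ℝ := Matrix.det (p.2 • (1 : Mk k) - p.1)

lemma contDiff_Fdet (n : WithTop ℕ∞) : ContDiff ℝ n (Fdet (k := k)) :=
  (contDiff_det n).comp ((contDiff_snd.smul contDiff_const).sub contDiff_fst)

lemma exists_lambda (hk : 0 < k) (A : Mk k)
    (hmult : (Matrix.charpoly A).rootMultiplicity (perronRoot A) = 1) :
    ∃ lam : Mk k → ℝ,
      lam A = perronRoot A ∧
      ContDiffAt ℝ 1 lam A ∧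
      (∀ᶠ B in nhds A, Matrix.det (lam B • (1 : Mk k) - B) = 0) ∧
      ∃ δ > (0:ℝ), ∀ᶠ B in nhds A, ∀ t : ℝ, |t - perronRoot A| < δ →
          Matrix.det (t • (1 : Mk k) - B) = 0 → t = lam B := by
  set ρ := perronRoot A with hρ
  have hne : Matrix.charpoly A ≠ 0 := (Matrix.charpoly_monic A).ne_zero
  have hroot : (Matrix.charpoly A).IsRoot ρ :=
    (Polynomial.rootMultiplicity_pos hne).1 (by rw [hmult]; norm_num)
  have hd0 : (Polynomial.derivative (Matrix.charpoly A)).eval ρ ≠ 0 := by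
    intro h0
    have hdp : Polynomial.derivative (Matrix.charpoly A) ≠ 0 := by
      intro hd0'
      have h1 := Polynomial.natDegree_eq_zero_of_derivative_eq_zero hd0'
      have h2 : (Matrix.charpoly A).natDegree = k := by
        simpa using Matrix.charpoly_natDegree_eq_dim A
      omega
    have hd := Polynomial.derivative_rootMultiplicity_of_root hroot
    have h1 : 0 < Polynomial.rootMultiplicity ρ (Polynomial.derivative (Matrix.charpoly A)) :=
      (Polynomial.rootMultiplicity_pos hdp).2 h0
    rw [hd, hmult] at h1
    norm_num at h1
  -- total derivative of Fdet
  have hF : ContDiff ℝ 1 (Fdet (k := k)) := contDiff_Fdet 1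
  have hFd : DifferentiableAt ℝ (Fdet (k := k)) (A, ρ) :=
    (hF.differentiable one_ne_zero).differentiableAt
  set Φ := fderiv ℝ (Fdet (k := k)) (A, ρ) with hΦ
  have hΦd : HasFDerivAt (Fdet (k := k)) Φ (A, ρ) := hFd.hasFDerivAt
  set c := Φ ((0 : Mk k), (1 : ℝ)) with hc
  have hcval : c = (Polynomial.derivative (Matrix.charpoly A)).eval ρ := by
    have h1 : HasDerivAt (fun t : ℝ => Fdet (k := k) (A, t)) c ρ := by
      have hj : HasDerivAt (fun t : ℝ => ((A : Mk k), t)) (((0 : Mk k), (1 : ℝ))) ρ :=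
        HasDerivAt.prodMk (hasDerivAt_const ρ A) (hasDerivAt_id ρ)
      exact hΦd.comp_hasDerivAt ρ hj
    have h2 : HasDerivAt (fun t : ℝ => Fdet (k := k) (A, t))
        ((Polynomial.derivative (Matrix.charpoly A)).eval ρ) ρ := by
      have he : (fun t : ℝ => Fdet (k := k) (A, t)) = fun t => (Matrix.charpoly A).eval t := by
        funext t
        rw [eval_charpoly]
        rfl
      rw [he]
      exact Polynomial.hasDerivAt _ ρ
    exact h1.unique h2
  have hc0 : c ≠ 0 := by rw [hcval]; exact hd0
  have hΦsplit : ∀ (u : Mk k) (v : ℝ), Φ (u, v) = Φ (u, 0) + v * c := by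
    intro u v
    have hdec : ((u, v) : Mk k × ℝ) = (u, 0) + v • (((0 : Mk k), (1 : ℝ))) := by
      simp [Prod.ext_iff]
    rw [hdec, map_add, Φ.map_smul]
    simp [hc, smul_eq_mul]
  -- the continuous linear equivalence
  set fwd : (Mk k × ℝ) →L[ℝ] (Mk k × ℝ) := (ContinuousLinearMap.fst ℝ (Mk k) ℝ).prod Φ with hfwd
  set bwd : (Mk k × ℝ) →L[ℝ] (Mk k × ℝ) :=
    (ContinuousLinearMap.fst ℝ (Mk k) ℝ).prod
      (c⁻¹ • ((ContinuousLinearMap.snd ℝ (Mk k) ℝ) -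
        Φ.comp ((ContinuousLinearMap.inl ℝ (Mk k) ℝ).comp
          (ContinuousLinearMap.fst ℝ (Mk k) ℝ)))) with hbwd
  have hleft : Function.LeftInverse bwd fwd := by
    rintro ⟨u, v⟩
    simp only [hfwd, hbwd, ContinuousLinearMap.prod_apply, ContinuousLinearMap.coe_fst',
      ContinuousLinearMap.smul_apply, ContinuousLinearMap.sub_apply,
      ContinuousLinearMap.coe_snd', ContinuousLinearMap.comp_apply,
      ContinuousLinearMap.inl_apply]
    simp only [smul_eq_mul]
    rw [hΦsplit u v]
    field_simp
    simp [hc0]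
  have hright : Function.RightInverse bwd fwd := by
    rintro ⟨u, v⟩
    simp only [hfwd, hbwd, ContinuousLinearMap.prod_apply, ContinuousLinearMap.coe_fst',
      ContinuousLinearMap.smul_apply, ContinuousLinearMap.sub_apply,
      ContinuousLinearMap.coe_snd', ContinuousLinearMap.comp_apply,
      ContinuousLinearMap.inl_apply]
    simp only [smul_eq_mul]
    rw [hΦsplit u (c⁻¹ * (v - Φ (u, 0)))]
    field_simp
    simp
  set Ψ : (Mk k × ℝ) ≃L[ℝ] (Mk k × ℝ) :=
    ContinuousLinearEquiv.equivOfInverse fwd bwd hleft hright with hΨ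
  set psi : Mk k × ℝ → Mk k × ℝ := fun p => (p.1, Fdet p) with hpsi
  have hpsiF : HasFDerivAt psi (Ψ : (Mk k × ℝ) →L[ℝ] (Mk k × ℝ)) (A, ρ) := by
    have : (Ψ : (Mk k × ℝ) →L[ℝ] (Mk k × ℝ)) = fwd := rfl
    rw [this, hfwd]
    exact (hasFDerivAt_fst).prodMk hΦd
  have hpsiCD : ContDiffAt ℝ 1 psi (A, ρ) := (contDiff_fst.prodMk hF).contDiffAt
  have hstrict : HasStrictFDerivAt psi (Ψ : (Mk k × ℝ) →L[ℝ] (Mk k × ℝ)) (A, ρ) :=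
    hpsiCD.hasStrictFDerivAt' hpsiF one_ne_zero
  set linv : Mk k × ℝ → Mk k × ℝ := hstrict.localInverse psi Ψ (A, ρ) with hlinv
  have h0 : psi (A, ρ) = (A, 0) := by
    have : Fdet (k := k) (A, ρ) = 0 := by
      show Matrix.det (ρ • (1 : Mk k) - A) = 0
      rw [← eval_charpoly]
      exact hroot
    simp [hpsi, this]
  set lam : Mk k → ℝ := fun B => (linv (B, 0)).2 with hlam
  refine ⟨lam, ?_, ?_, ?_, ?_⟩
  · have h1 : linv (psi (A, ρ)) = (A, ρ) := hstrict.localInverse_apply_image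
    rw [h0] at h1
    rw [hlam]
    simp [h1]
  · -- ContDiffAt
    have hCD : ContDiffAt ℝ 1 (hpsiCD.localInverse hpsiF one_ne_zero) (psi (A, ρ)) :=
      hpsiCD.to_localInverse hpsiF one_ne_zero
    have hCD' : ContDiffAt ℝ 1 linv (A, 0) := by
      rw [← h0]
      exact hCD
    have hemb : ContDiffAt ℝ 1 (fun B : Mk k => ((B, 0) : Mk k × ℝ)) A :=
      (contDiff_id.prodMk contDiff_const).contDiffAt
    have hsnd : ContDiffAt ℝ 1 (fun p : Mk k × ℝ => p.2) (linv (A, 0)) :=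
      contDiff_snd.contDiffAt
    exact hsnd.comp A (hCD'.comp A hemb)
  · have hev := hstrict.eventually_right_inverse
    rw [h0] at hev
    have hmap : Filter.Tendsto (fun B : Mk k => ((B, 0) : Mk k × ℝ)) (nhds A) (nhds ((A, 0) : Mk k × ℝ)) :=
      Continuous.tendsto (continuous_id.prodMk continuous_const) A
    filter_upwards [hmap.eventually hev] with B hB
    have h1 : (linv (B, 0)).1 = B := congrArg Prod.fst hB
    have h2 : Fdet (linv (B, 0)) = 0 := congrArg Prod.snd hB
    have h3 : linv (B, 0) = (B, lam B) := Prod.ext h1 rfl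
    rw [h3] at h2
    exact h2
  · have hevL := hstrict.eventually_left_inverse
    obtain ⟨U, hU, V, hV, hUV⟩ := mem_nhds_prod_iff.1 hevL
    obtain ⟨δ, hδ0, hball⟩ := Metric.mem_nhds_iff.1 hV
    refine ⟨δ, hδ0, ?_⟩
    filter_upwards [hU] with B hB
    intro t ht hdet
    have htV : t ∈ V := hball (by simpa [Real.dist_eq] using ht)
    have hmem : ((B, t) : Mk k × ℝ) ∈ U ×ˢ V := ⟨hB, htV⟩
    have h1 : linv (psi (B, t)) = (B, t) := hUV hmem
    have h2 : psi (B, t) = (B, 0) := by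
      simp [hpsi, show Fdet (k := k) (B, t) = 0 from hdet]
    rw [h2] at h1
    exact (congrArg Prod.snd h1).symm


lemma perronRoot_eventually (hk : 0 < k) (𝔸 : Set (Mk k))
    (h𝔸 : ∀ A ∈ 𝔸, (Matrix.charpoly A).rootMultiplicity (perronRoot A) = 1)
    (A : Mk k) (hA : A ∈ 𝔸) :
    ∃ lam : Mk k → ℝ, lam A = perronRoot A ∧ ContDiffAt ℝ 1 lam A ∧
      (∀ᶠ B in nhds A, Matrix.det (lam B • (1 : Mk k) - B) = 0) ∧
      (∀ᶠ B in nhds A, B ∈ 𝔸 → perronRoot B = lam B) := by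
  obtain ⟨lam, hlamA, hCD, hroots, δ, hδ, huniq⟩ := exists_lambda hk A (h𝔸 A hA)
  refine ⟨lam, hlamA, hCD, hroots, ?_⟩
  have hcont : Filter.Tendsto lam (nhds A) (nhds (perronRoot A)) := by
    have := hCD.continuousAt
    rwa [ContinuousAt, hlamA] at this
  have h1 : ∀ᶠ B in nhds A, |lam B - perronRoot A| < δ/2 := by
    have := Metric.tendsto_nhds.mp hcont (δ/2) (by linarith)
    filter_upwards [this] with B hB
    rwa [Real.dist_eq] at hB
  have h2 := perronRoot_usc hk A (ε := δ/2) (by linarith)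
  filter_upwards [h1, h2, hroots, huniq] with B hB1 hB2 hB3 hB4 hB𝔸
  have hrootB : Matrix.det (perronRoot B • (1 : Mk k) - B) = 0 := by
    rw [← eval_charpoly]
    exact (Polynomial.rootMultiplicity_pos (Matrix.charpoly_monic B).ne_zero).1
      (by rw [h𝔸 B hB𝔸]; norm_num)
  have hlow : perronRoot A - δ/2 < perronRoot B := by
    have := root_le_perronRoot hk (B := B) (t := lam B) hB3
    have habs := abs_lt.1 hB1
    linarith [habs.1]
  have hclose : |perronRoot B - perronRoot A| < δ := by
    rw [abs_lt]
    constructor <;> linarith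
  exact hB4 (perronRoot B) hclose hrootB

lemma contDiff_updateColumn (j₀ : Fin k) (n : WithTop ℕ∞) :
    ContDiff ℝ n (fun M : Mk k => M.updateCol j₀ (fun _ => (1:ℝ))) := by
  apply contDiff_pi.2; intro i; apply contDiff_pi.2; intro j
  by_cases h : j = j₀
  · subst h
    simpa [Matrix.updateCol_apply] using contDiff_const (c := (1:ℝ))
  · simp only [Matrix.updateCol_apply, if_neg h]
    exact contDiff_entry i j n

lemma contDiff_updateRow (i₀ : Fin k) (v : Fin k → ℝ) (n : WithTop ℕ∞) :
    ContDiff ℝ n (fun M : Mk k => M.updateRow i₀ v) := by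
  apply contDiff_pi.2; intro i; apply contDiff_pi.2; intro j
  by_cases h : i = i₀
  · subst h
    simpa [Matrix.updateRow_apply] using contDiff_const (c := v j)
  · simp only [Matrix.updateRow_apply, if_neg h]
    exact contDiff_entry i j n

lemma contDiff_adjugate (i j : Fin k) (n : WithTop ℕ∞) :
    ContDiff ℝ n (fun M : Mk k => M.adjugate i j) := by
  have he : (fun M : Mk k => M.adjugate i j)
      = (fun M : Mk k => M.det) ∘ (fun M : Mk k => M.updateRow j (Pi.single i 1)) := by
    funext M
    simp [Matrix.adjugate_apply]
  rw [he]
  exact (contDiff_det n).comp (contDiff_updateRow j (Pi.single i 1) n)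

lemma vecMul_smul_one_sub (t : ℝ) (B : Mk k) (v : Fin k → ℝ) :
    Matrix.vecMul v (t • (1 : Mk k) - B) = t • v - Matrix.vecMul v B := by
  rw [Matrix.vecMul_sub]
  congr 1
  funext j
  simp [Matrix.vecMul, dotProduct, Matrix.smul_apply, Matrix.one_apply, mul_ite,
    Finset.sum_ite_eq', mul_comm]

lemma local_lip (hk : 0 < k) (𝔸 : Set (Mk k))
    (h𝔸 : ∀ A ∈ 𝔸, (Matrix.charpoly A).rootMultiplicity (perronRoot A) = 1)
    (A : Mk k) (hA : A ∈ 𝔸) (μ₀ : Fin k → ℝ)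
    (hμ₀ : Matrix.vecMul μ₀ A = perronRoot A • μ₀) (hμ₀1 : ∑ i, μ₀ i = 1) :
    ∃ ε > (0:ℝ), ∃ L : ℝ, 0 ≤ L ∧ ∀ B ∈ 𝔸 ∩ Metric.ball A ε, ∀ B' ∈ 𝔸 ∩ Metric.ball A ε,
      ∀ μ μ' : Fin k → ℝ, Matrix.vecMul μ B = perronRoot B • μ → (∑ i, μ i) = 1 →
        Matrix.vecMul μ' B' = perronRoot B' • μ' → (∑ i, μ' i) = 1 →
        l1norm (μ - μ') ≤ L * dist B B' := by
  classical
  obtain ⟨lam, hlamA, hlamCD, hroots, hev⟩ := perronRoot_eventually hk 𝔸 h𝔸 A hA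
  set ρ := perronRoot A with hρdef
  set M₀ : Mk k := ρ • (1 : Mk k) - A with hM₀
  -- choose j₀
  have hdet0 : M₀.det = 0 := by
    rw [← eval_charpoly]
    exact (Polynomial.rootMultiplicity_pos (Matrix.charpoly_monic A).ne_zero).1
      (by rw [h𝔸 A hA]; norm_num)
  obtain ⟨u, hu0, huv⟩ := (Matrix.exists_mulVec_eq_zero_iff).2 hdet0
  obtain ⟨j₀, hj₀⟩ : ∃ j₀, u j₀ ≠ 0 := Function.ne_iff.1 hu0
  set cols : Fin k → (Fin k → ℝ) := fun j i => M₀ i j with hcols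
  have hcolspan : cols j₀ ∈ Submodule.span ℝ (cols '' {j | j ≠ j₀}) := by
    have hsum : ∑ j, u j • cols j = 0 := by
      funext i
      have hz := congrFun huv i
      simp only [Matrix.mulVec, dotProduct, Pi.zero_apply] at hz
      simp only [Finset.sum_apply, Pi.smul_apply, hcols, smul_eq_mul, Pi.zero_apply]
      rw [← hz]
      exact Finset.sum_congr rfl fun j _ => mul_comm _ _
    have h1 : u j₀ • cols j₀ = -∑ j ∈ Finset.univ.erase j₀, u j • cols j := by
      have h2 := Finset.add_sum_erase Finset.univ (fun j => u j • cols j) (Finset.mem_univ j₀)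
      rw [hsum] at h2
      linear_combination (norm := module) h2
    have h3 : cols j₀ = (u j₀)⁻¹ • (u j₀ • cols j₀) := (inv_smul_smul₀ hj₀ _).symm
    rw [h3, h1]
    refine Submodule.smul_mem _ _ (Submodule.neg_mem _ (Submodule.sum_mem _ fun j hj => ?_))
    refine Submodule.smul_mem _ _ (Submodule.subset_span ?_)
    exact ⟨j, (Finset.mem_erase.1 hj).1, rfl⟩
  set T : Mk k → Mk k := fun B => (lam B • (1 : Mk k) - B).updateCol j₀ (fun _ => (1:ℝ)) with hT
  have hvecT : ∀ (B : Mk k) (v : Fin k → ℝ),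
      Matrix.vecMul v (T B) = fun j => if j = j₀ then (∑ i, v i)
        else (Matrix.vecMul v (lam B • (1 : Mk k) - B)) j := by
    intro B v
    funext j
    simp only [hT, Matrix.vecMul, dotProduct, Matrix.updateCol_apply]
    by_cases h : j = j₀
    · simp [h]
    · simp [h]
  have hTAdet : (T A).det ≠ 0 := by
    rw [Ne, ← Matrix.exists_vecMul_eq_zero_iff]
    rintro ⟨v, hv0, hv⟩
    rw [hvecT] at hv
    have hsum0 : ∑ i, v i = 0 := by
      have := congrFun hv j₀
      simpa using this
    have hMA : lam A • (1 : Mk k) - A = M₀ := by rw [hlamA, hM₀]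
    have hj : ∀ j, j ≠ j₀ → Matrix.vecMul v M₀ j = 0 := by
      intro j hjne
      have := congrFun hv j
      rw [if_neg hjne] at this
      rwa [hMA] at this
    set φ : (Fin k → ℝ) →ₗ[ℝ] ℝ :=
      { toFun := fun x => ∑ i, v i * x i
        map_add' := by intro a b; simp [mul_add, Finset.sum_add_distrib]
        map_smul' := by
          intro c x
          simp only [Pi.smul_apply, smul_eq_mul, RingHom.id_apply, Finset.mul_sum]
          exact Finset.sum_congr rfl fun i _ => by ring } with hφ
    have hφcols : ∀ j, φ (cols j) = Matrix.vecMul v M₀ j := by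
      intro j
      simp [hφ, hcols, Matrix.vecMul, dotProduct]
    have hsub : Submodule.span ℝ (cols '' {j | j ≠ j₀}) ≤ LinearMap.ker φ := by
      rw [Submodule.span_le]
      rintro x ⟨j, hjne, rfl⟩
      rw [SetLike.mem_coe, LinearMap.mem_ker, hφcols]
      exact hj j hjne
    have hφj₀ : φ (cols j₀) = 0 := LinearMap.mem_ker.1 (hsub hcolspan)
    have hvM : Matrix.vecMul v M₀ = 0 := by
      funext j
      by_cases h : j = j₀
      · subst h
        rw [← hφcols]
        exact hφj₀
      · exact hj j h
    have hvA : Matrix.vecMul v A = ρ • v := by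
      rw [hM₀] at hvM
      rw [vecMul_smul_one_sub] at hvM
      exact (sub_eq_zero.1 hvM).symm
    exact hv0 (left_eigen_unique A (h𝔸 A hA) hμ₀ hμ₀1 hvA hsum0)
  set w : Mk k → (Fin k → ℝ) := fun B j => (T B)⁻¹ j₀ j with hw
  have hTCD : ContDiffAt ℝ 1 T A := by
    have hinner : ContDiffAt ℝ 1 (fun B : Mk k => lam B • (1 : Mk k) - B) A :=
      (hlamCD.smul contDiffAt_const).sub contDiffAt_id
    exact ((contDiff_updateColumn j₀ 1).contDiffAt).comp A hinner
  have hdetTCD : ContDiffAt ℝ 1 (fun B => (T B).det) A := ((contDiff_det 1).contDiffAt).comp A hTCD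
  have hwCD : ContDiffAt ℝ 1 w A := by
    apply contDiffAt_pi.2
    intro j
    have h1 : ContDiffAt ℝ 1 (fun B => (T B).adjugate j₀ j) A :=
      ((contDiff_adjugate j₀ j 1).contDiffAt).comp A hTCD
    have h2 : ContDiffAt ℝ 1 (fun B => ((T B).det)⁻¹) A := hdetTCD.inv hTAdet
    have he : (fun B => w B j) = fun B => ((T B).det)⁻¹ * (T B).adjugate j₀ j := by
      funext B
      rw [hw]
      show (T B)⁻¹ j₀ j = _
      rw [Matrix.inv_def, Matrix.smul_apply, Ring.inverse_eq_inv', smul_eq_mul]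
    rw [he]
    exact h2.mul h1
  obtain ⟨K, t, ht, hlip⟩ := hwCD.exists_lipschitzOnWith
  have hdetne : ∀ᶠ B in nhds A, (T B).det ≠ 0 := hdetTCD.continuousAt.eventually_ne hTAdet
  have hall : ∀ᶠ B in nhds A, (((T B).det ≠ 0 ∧ Matrix.det (lam B • (1 : Mk k) - B) = 0) ∧
      (B ∈ 𝔸 → perronRoot B = lam B)) ∧ B ∈ t :=
    ((hdetne.and hroots).and hev).and (Filter.eventually_of_mem ht fun x hx => hx)
  obtain ⟨ε, hε0, hball⟩ := Metric.eventually_nhds_iff_ball.1 hall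
  refine ⟨ε, hε0, (k : ℝ) * (K : ℝ), by positivity, ?_⟩
  rintro B ⟨hB𝔸, hBball⟩ B' ⟨hB'𝔸, hB'ball⟩ μ μ' hμe hμs hμ'e hμ's
  obtain ⟨⟨⟨hBdet, hBroot⟩, hBρ⟩, hBt⟩ := hball B hBball
  obtain ⟨⟨⟨hB'det, hB'root⟩, hB'ρ⟩, hB't⟩ := hball B' hB'ball
  have key : ∀ (Bb : Mk k), Bb ∈ 𝔸 → (T Bb).det ≠ 0 → perronRoot Bb = lam Bb →
      ∀ ν : Fin k → ℝ, Matrix.vecMul ν Bb = perronRoot Bb • ν → (∑ i, ν i) = 1 → ν = w Bb := by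
    intro Bb hBb hdet hρl ν hν hνs
    have hν0 : Matrix.vecMul ν (lam Bb • (1 : Mk k) - Bb) = 0 := by
      rw [vecMul_smul_one_sub, ← hρl, hν]
      simp
    have h1 : Matrix.vecMul ν (T Bb) = fun j => if j = j₀ then 1 else 0 := by
      rw [hvecT]
      funext j
      by_cases h : j = j₀ <;> simp [h, hνs, hν0]
    have h3 : (T Bb)⁻¹ * (T Bb) = 1 := Matrix.nonsing_inv_mul _ (isUnit_iff_ne_zero.2 hdet)
    have h2 : Matrix.vecMul (w Bb) (T Bb) = fun j => if j = j₀ then 1 else 0 := by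
      funext j
      have h4 := congrFun (congrFun h3 j₀) j
      rw [Matrix.mul_apply] at h4
      simp only [Matrix.vecMul, dotProduct, hw]
      rw [h4, Matrix.one_apply]
      by_cases h : j = j₀
      · simp [h]
      · rw [if_neg (fun hh => h hh.symm), if_neg h]
    have h5 : Matrix.vecMul (ν - w Bb) (T Bb) = 0 := by
      rw [Matrix.sub_vecMul, h1, h2]
      simp
    have h6 : ν - w Bb = 0 := by
      have h7 := congrArg (fun x => Matrix.vecMul x ((T Bb)⁻¹)) h5
      simpa [Matrix.vecMul_vecMul, Matrix.mul_nonsing_inv _ (isUnit_iff_ne_zero.2 hdet),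
        Matrix.vecMul_one, Matrix.zero_vecMul] using h7
    exact sub_eq_zero.1 h6
  have hμw : μ = w B := key B hB𝔸 hBdet (hBρ hB𝔸) μ hμe hμs
  have hμ'w : μ' = w B' := key B' hB'𝔸 hB'det (hB'ρ hB'𝔸) μ' hμ'e hμ's
  rw [hμw, hμ'w]
  have hd : dist (w B) (w B') ≤ (K : ℝ) * dist B B' := hlip.dist_le_mul B hBt B' hB't
  have hl1 : l1norm (w B - w B') ≤ (k : ℝ) * dist (w B) (w B') := by
    rw [show l1norm (w B - w B') = ∑ i, |(w B - w B') i| from rfl]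
    calc ∑ i, |(w B - w B') i| ≤ ∑ _i : Fin k, ‖w B - w B'‖ := by
          refine Finset.sum_le_sum fun i _ => ?_
          rw [← Real.norm_eq_abs]
          exact norm_le_pi_norm (w B - w B') i
    _ = (k : ℝ) * ‖w B - w B'‖ := by
          rw [Finset.sum_const, Finset.card_univ, Fintype.card_fin, nsmul_eq_mul]
    _ = (k : ℝ) * dist (w B) (w B') := by rw [dist_eq_norm]
  calc l1norm (w B - w B') ≤ (k : ℝ) * ((K : ℝ) * dist B B') :=
        le_trans hl1 (mul_le_mul_of_nonneg_left hd (by positivity))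
  _ = (k : ℝ) * (K : ℝ) * dist B B' := by ring


lemma continuous_vecMulFun : Continuous (fun p : (Fin k → ℝ) × Mk k => Matrix.vecMul p.1 p.2) := by
  apply continuous_pi
  intro j
  simp only [Matrix.vecMul, dotProduct]
  apply continuous_finset_sum
  intro i _
  exact ((continuous_apply i).comp continuous_fst).mul
    ((continuous_apply_apply i j).comp continuous_snd)

set_option maxHeartbeats 1000000 in
lemma closure_eig (hk : 0 < k) (𝔸 : Set (Mk k)) (hcomp : IsCompact 𝔸)
    (h𝔸 : ∀ A ∈ 𝔸, (Matrix.charpoly A).rootMultiplicity (perronRoot A) = 1)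
    (𝔸' : Set (Mk k))
    (hsub : ∀ B ∈ 𝔸', B ∈ 𝔸 ∧ ∃ ν : Fin k → ℝ, (∀ i, 0 ≤ ν i) ∧ (∑ i, ν i) = 1 ∧
      Matrix.vecMul ν B = perronRoot B • ν)
    (A : Mk k) (hA : A ∈ closure 𝔸') :
    A ∈ 𝔸 ∧ ∃ ν : Fin k → ℝ, (∀ i, 0 ≤ ν i) ∧ (∑ i, ν i) = 1 ∧
      Matrix.vecMul ν A = perronRoot A • ν := by
  haveI : FrechetUrysohnSpace (Mk k) := inferInstanceAs (FrechetUrysohnSpace (Fin k → Fin k → ℝ))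
  obtain ⟨x, hx𝔸', hxlim⟩ := mem_closure_iff_seq_limit.1 hA
  have hx𝔸 : ∀ n, x n ∈ 𝔸 := fun n => (hsub _ (hx𝔸' n)).1
  have hA𝔸 : A ∈ 𝔸 := hcomp.isClosed.mem_of_tendsto hxlim (Filter.Eventually.of_forall hx𝔸)
  refine ⟨hA𝔸, ?_⟩
  choose ν hν0 hνs hνe using fun n => (hsub _ (hx𝔸' n)).2
  set S : Set (Fin k → ℝ) := {v | (∀ i, 0 ≤ v i) ∧ (∑ i, v i) = 1} with hS
  have hScomp : IsCompact S := by
    have hsub2 : S ⊆ Set.Icc (0 : Fin k → ℝ) 1 := by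
      rintro v ⟨h0, h1⟩
      constructor
      · intro i; exact h0 i
      · intro i
        calc v i ≤ ∑ j, v j := Finset.single_le_sum (fun j _ => h0 j) (Finset.mem_univ i)
        _ = 1 := h1
    have hclosed : IsClosed S := by
      have he : S = (⋂ i, {v : Fin k → ℝ | 0 ≤ v i}) ∩ {v | (∑ i, v i) = 1} := by
        ext v
        simp [hS, Set.mem_iInter]
      rw [he]
      exact IsClosed.inter
        (isClosed_iInter fun i => isClosed_le continuous_const (continuous_apply i))
        (isClosed_eq (continuous_finset_sum _ fun i _ => continuous_apply i) continuous_const)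
    exact isCompact_Icc.of_isClosed_subset hclosed hsub2
  obtain ⟨a, haS, φ, hφmono, hφlim⟩ := hScomp.tendsto_subseq (fun n => ⟨hν0 n, hνs n⟩)
  refine ⟨a, haS.1, haS.2, ?_⟩
  obtain ⟨lam, hlamA, hlamCD, _, hev⟩ := perronRoot_eventually hk 𝔸 h𝔸 A hA𝔸
  have hxφlim : Filter.Tendsto (fun n => x (φ n)) Filter.atTop (nhds A) :=
    hxlim.comp hφmono.tendsto_atTop
  have hρlim : Filter.Tendsto (fun n => perronRoot (x (φ n))) Filter.atTop
      (nhds (perronRoot A)) := by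
    have h1 : (fun n => perronRoot (x (φ n))) =ᶠ[Filter.atTop] fun n => lam (x (φ n)) := by
      filter_upwards [hxφlim.eventually hev] with n hn
      exact hn (hx𝔸 (φ n))
    have h2 : Filter.Tendsto (fun n => lam (x (φ n))) Filter.atTop (nhds (perronRoot A)) := by
      have := hlamCD.continuousAt.tendsto.comp hxφlim
      rwa [hlamA] at this
    exact Filter.Tendsto.congr' (Filter.EventuallyEq.symm h1) h2
  have hLHS : Filter.Tendsto (fun n => Matrix.vecMul (ν (φ n)) (x (φ n))) Filter.atTop
      (nhds (Matrix.vecMul a A)) :=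
    (continuous_vecMulFun.tendsto (a, A)).comp (hφlim.prodMk_nhds hxφlim)
  have hRHS : Filter.Tendsto (fun n => perronRoot (x (φ n)) • ν (φ n)) Filter.atTop
      (nhds (perronRoot A • a)) := hρlim.smul hφlim
  have heq : ∀ n, Matrix.vecMul (ν (φ n)) (x (φ n)) = perronRoot (x (φ n)) • ν (φ n) :=
    fun n => hνe (φ n)
  exact tendsto_nhds_unique (hLHS.congr heq) hRHS

lemma dist_le_iSup (hk : 0 < k) (A A' : Mk k) :
    dist A A' ≤ ⨆ i, ⨆ j, |A i j - A' i j| := by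
  have hbddj : ∀ i, BddAbove (Set.range fun j => |A i j - A' i j|) :=
    fun i => (Set.finite_range _).bddAbove
  have hbddi : BddAbove (Set.range fun i => ⨆ j, |A i j - A' i j|) :=
    (Set.finite_range _).bddAbove
  have hbdd : ∀ i j, |A i j - A' i j| ≤ ⨆ i, ⨆ j, |A i j - A' i j| := by
    intro i j
    calc |A i j - A' i j| ≤ ⨆ j, |A i j - A' i j| := le_ciSup (hbddj i) j
    _ ≤ ⨆ i, ⨆ j, |A i j - A' i j| := le_ciSup hbddi i
  have hR0 : 0 ≤ ⨆ i, ⨆ j, |A i j - A' i j| :=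
    le_trans (abs_nonneg _) (hbdd ⟨0, hk⟩ ⟨0, hk⟩)
  rw [dist_eq_norm]
  rw [Matrix.norm_le_iff hR0]
  intro i j
  rw [Real.norm_eq_abs]
  exact hbdd i j

lemma l1norm_sub_le_two {μ μ' : Fin k → ℝ} (h1 : (∑ i, |μ i|) = 1) (h2 : (∑ i, |μ' i|) = 1) :
    l1norm (μ - μ') ≤ 2 := by
  show (∑ i, |(μ - μ') i|) ≤ 2
  calc ∑ i, |(μ - μ') i| ≤ ∑ i, (|μ i| + |μ' i|) :=
        Finset.sum_le_sum fun i _ => abs_sub _ _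
  _ = 1 + 1 := by rw [Finset.sum_add_distrib, h1, h2]
  _ = 2 := by norm_num

end Smooth

section Main

attribute [local instance] Matrix.normedAddCommGroup Matrix.normedSpace

set_option maxHeartbeats 1000000 in
lemma main_aux (hk : 0 < k) (𝔸 : Set (Mk k)) (hcomp : IsCompact 𝔸)
    (h𝔸 : ∀ A ∈ 𝔸, (∀ i j, 0 ≤ A i j) ∧
      (Matrix.charpoly A).rootMultiplicity (perronRoot A) = 1) :
    ∃ C : ℝ, ∀ A ∈ 𝔸, ∀ A' ∈ 𝔸, ∀ μ μ' : Fin k → ℝ,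
      (∀ i, 0 ≤ μ i) → l1norm μ = 1 → Matrix.vecMul μ A = perronRoot A • μ →
      (∀ i, 0 ≤ μ' i) → l1norm μ' = 1 → Matrix.vecMul μ' A' = perronRoot A' • μ' →
      l1norm (μ - μ') ≤ C * ⨆ i, ⨆ j, |A i j - A' i j| := by
  classical
  have h𝔸m : ∀ A ∈ 𝔸, (Matrix.charpoly A).rootMultiplicity (perronRoot A) = 1 :=
    fun A hA => (h𝔸 A hA).2
  have hsum : ∀ (ν : Fin k → ℝ), (∀ i, 0 ≤ ν i) → l1norm ν = 1 → (∑ i, ν i) = 1 := by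
    intro ν h0 h1
    rw [← h1]
    exact Finset.sum_congr rfl fun i _ => (abs_of_nonneg (h0 i)).symm
  set 𝔸' : Set (Mk k) := {B | B ∈ 𝔸 ∧ ∃ ν : Fin k → ℝ, (∀ i, 0 ≤ ν i) ∧ (∑ i, ν i) = 1 ∧
      Matrix.vecMul ν B = perronRoot B • ν} with h𝔸'def
  set K : Set (Mk k) := closure 𝔸' with hKdef
  have hKsub : K ⊆ 𝔸 := fun A hA =>
    (closure_eig hk 𝔸 hcomp h𝔸m 𝔸' (fun B hB => hB) A hA).1
  have hKcomp : IsCompact K := hcomp.of_isClosed_subset isClosed_closure hKsub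
  have hloc : ∀ A ∈ K, ∃ ε > (0:ℝ), ∃ L : ℝ, 0 ≤ L ∧
      ∀ B ∈ 𝔸 ∩ Metric.ball A ε, ∀ B' ∈ 𝔸 ∩ Metric.ball A ε,
      ∀ μ μ' : Fin k → ℝ, Matrix.vecMul μ B = perronRoot B • μ → (∑ i, μ i) = 1 →
        Matrix.vecMul μ' B' = perronRoot B' • μ' → (∑ i, μ' i) = 1 →
        l1norm (μ - μ') ≤ L * dist B B' := by
    intro A hA
    obtain ⟨hA𝔸, ν, hν0, hνs, hνe⟩ := closure_eig hk 𝔸 hcomp h𝔸m 𝔸' (fun B hB => hB) A hA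
    exact local_lip hk 𝔸 h𝔸m A hA𝔸 ν hνe hνs
  choose! ε hε L hL0 hLP using hloc
  obtain ⟨t, ht⟩ := hKcomp.elim_nhds_subcover' (fun A hA => Metric.ball A (ε A / 2))
      (fun A hA => Metric.ball_mem_nhds _ (by linarith [hε A hA]))
  rcases t.eq_empty_or_nonempty with hte | htne
  · refine ⟨0, ?_⟩
    intro A hA A' hA' μ μ' hμ0 hμ1 hμe hμ'0 hμ'1 hμ'e
    exfalso
    have hA𝔸' : A ∈ 𝔸' := ⟨hA, μ, hμ0, hsum μ hμ0 hμ1, hμe⟩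
    have hmem := ht (subset_closure hA𝔸')
    rw [hte] at hmem
    simpa using hmem
  · set δ : ℝ := t.inf' htne (fun x => ε ↑x / 2) with hδdef
    have hδ0 : 0 < δ := by
      rw [hδdef, Finset.lt_inf'_iff]
      intro x hx
      have := hε ↑x x.2
      linarith
    set Lm : ℝ := t.sup' htne (fun x => L ↑x) with hLmdef
    set C : ℝ := max (2/δ) (max Lm 0) with hCdef
    have hC0 : (0:ℝ) ≤ C := le_trans (le_max_right _ _) (le_max_right _ _)
    refine ⟨C, ?_⟩
    intro A hA A' hA' μ μ' hμ0 hμ1 hμe hμ'0 hμ'1 hμ'e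
    have hμs := hsum μ hμ0 hμ1
    have hμ's := hsum μ' hμ'0 hμ'1
    have hAK : A ∈ K := subset_closure ⟨hA, μ, hμ0, hμs, hμe⟩
    have hA'K : A' ∈ K := subset_closure ⟨hA', μ', hμ'0, hμ's, hμ'e⟩
    have hdist := dist_le_iSup hk A A'
    by_cases hcase : dist A A' < δ
    · have hcov := ht hAK
      simp only [Set.mem_iUnion] at hcov
      obtain ⟨x, hxt, hAx⟩ := hcov
      have hδx : δ ≤ ε ↑x / 2 := Finset.inf'_le _ hxt
      have hAx' : A ∈ Metric.ball (↑x : Mk k) (ε ↑x) := by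
        rw [Metric.mem_ball] at hAx ⊢
        have := hε ↑x x.2
        linarith
      have hA'x : A' ∈ Metric.ball (↑x : Mk k) (ε ↑x) := by
        rw [Metric.mem_ball] at hAx ⊢
        have h3 := dist_triangle A' A ↑x
        have h4 : dist A' A < δ := by rwa [dist_comm]
        linarith
      have hb := hLP ↑x x.2 A ⟨hA, hAx'⟩ A' ⟨hA', hA'x⟩ μ μ' hμe hμs hμ'e hμ's
      have hLx : L ↑x ≤ C := by
        have h5 : L ↑x ≤ Lm := by
          rw [hLmdef]
          apply Finset.le_sup' (fun y : ↥K => L ↑y) hxt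
        have h6 : Lm ≤ C := le_trans (le_max_left _ _) (le_max_right _ _)
        linarith
      calc l1norm (μ - μ') ≤ L ↑x * dist A A' := hb
      _ ≤ C * dist A A' := mul_le_mul_of_nonneg_right hLx dist_nonneg
      _ ≤ C * (⨆ i, ⨆ j, |A i j - A' i j|) := mul_le_mul_of_nonneg_left hdist hC0
    · push_neg at hcase
      have h2 : l1norm (μ - μ') ≤ 2 := l1norm_sub_le_two hμ1 hμ'1
      have h3 : (2:ℝ) ≤ C * dist A A' := by
        have h4 : 2/δ ≤ C := le_max_left _ _
        calc (2:ℝ) = (2/δ) * δ := by field_simp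
        _ ≤ (2/δ) * dist A A' := mul_le_mul_of_nonneg_left hcase (by positivity)
        _ ≤ C * dist A A' := mul_le_mul_of_nonneg_right h4 dist_nonneg
      calc l1norm (μ - μ') ≤ 2 := h2
      _ ≤ C * dist A A' := h3
      _ ≤ C * (⨆ i, ⨆ j, |A i j - A' i j|) := mul_le_mul_of_nonneg_left hdist hC0

end Main

end PFAux

end

/-- Lemma (muLipprop2): Lipschitz continuity of the normalised principal
left-eigenvector on a compact set of nonnegative matrices with simple Perron root. -/
theorem principal_eigenvector_lipschitz_compact
    {k : ℕ} (hk : 0 < k) (𝔸 : Set (Matrix (Fin k) (Fin k) ℝ)) (hcomp : IsCompact 𝔸)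
    (h𝔸 : ∀ A ∈ 𝔸, (∀ i j, 0 ≤ A i j) ∧
      (Matrix.charpoly A).rootMultiplicity (perronRoot A) = 1) :
    ∃ C : ℝ, ∀ A ∈ 𝔸, ∀ A' ∈ 𝔸, ∀ μ μ' : Fin k → ℝ,
      (∀ i, 0 ≤ μ i) → l1norm μ = 1 → Matrix.vecMul μ A = perronRoot A • μ →
      (∀ i, 0 ≤ μ' i) → l1norm μ' = 1 → Matrix.vecMul μ' A' = perronRoot A' • μ' →
      l1norm (μ - μ') ≤ C * ⨆ i, ⨆ j, |A i j - A' i j| :=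
  PFAux.main_aux hk 𝔸 hcomp h𝔸
end

section
/- Let A be a k×k matrix with strictly positive entries, let L ≥ 1 be an integer, and let θ > 0 satisfy min_{i,j∈[k]} A_{i,j} > θ. Let x^{(1)},…,x^{(L)} ∈ ℝ_{≥0}^k \ {0} be nonnegative nonzero vectors, let D^{(1)},…,D^{(L)} ∈ B_θ(A), and let p₁,…,p_L > 0 satisfy Σ_{l=1}^L p_l = 1. Then there exists a matrix D̄ ∈ B_θ(A) such that p₁ x^{(1)}D^{(1)} + … + p_L x^{(L)}D^{(L)} = (p₁ x^{(1)} + … + p_L x^{(L)}) D̄. -/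
open Matrix

/-- Lemma 4.5 (mixmatrices): a convex combination of images of vectors under matrices
in B_θ(A) is the image of the corresponding convex combination under a single matrix
in B_θ(A). -/
theorem mix_matrices
    {k L : ℕ} (hk : 0 < k) (hL : 0 < L)
    (A : Matrix (Fin k) (Fin k) ℝ) (hA : ∀ i j, 0 < A i j)
    (θ : ℝ) (hθ : 0 < θ) (hθA : ∀ i j, θ < A i j)
    (x : Fin L → Fin k → ℝ) (hxnonneg : ∀ l i, 0 ≤ x l i) (hxne : ∀ l, x l ≠ 0)
    (D : Fin L → Matrix (Fin k) (Fin k) ℝ) (hD : ∀ l, memBall θ A (D l))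
    (p : Fin L → ℝ) (hp : ∀ l, 0 < p l) (hpsum : ∑ l, p l = 1) :
    ∃ Dbar : Matrix (Fin k) (Fin k) ℝ, memBall θ A Dbar ∧
      ∑ l, p l • Matrix.vecMul (x l) (D l) = Matrix.vecMul (∑ l, p l • x l) Dbar := by
  set y : Fin k → ℝ := fun i => ∑ l, p l * x l i with hy
  have hynn : ∀ i, 0 ≤ y i := fun i =>
    Finset.sum_nonneg fun l _ => mul_nonneg (hp l).le (hxnonneg l i)
  have hterm_nn : ∀ i l, 0 ≤ p l * x l i := fun i l =>
    mul_nonneg (hp l).le (hxnonneg l i)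
  have hy0 : ∀ i, y i = 0 → ∀ l, x l i = 0 := by
    intro i hi l
    have := (Finset.sum_eq_zero_iff_of_nonneg (fun l _ => hterm_nn i l)).mp hi l
      (Finset.mem_univ l)
    have hpl := (hp l).ne'
    exact by
      rcases mul_eq_zero.mp this with h | h
      · exact absurd h hpl
      · exact h
  classical
  refine ⟨Matrix.of fun i j => if h : y i = 0 then A i j
    else (∑ l, p l * x l i * D l i j) / y i, ⟨?_, ?_⟩, ?_⟩
  · intro i j
    simp only [Matrix.of_apply]
    split_ifs with h
    · exact hA i j
    · have hyi : 0 < y i := lt_of_le_of_ne (hynn i) (Ne.symm h)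
      apply div_pos _ hyi
      -- numerator positive: some term positive
      have : ∃ l, 0 < p l * x l i := by
        by_contra hcon
        push_neg at hcon
        have : y i = 0 := by
          show (∑ l, p l * x l i) = 0
          exact Finset.sum_eq_zero fun l _ => le_antisymm (hcon l) (hterm_nn i l)
        exact h this
      obtain ⟨l0, hl0⟩ := this
      have : 0 < p l0 * x l0 i * D l0 i j := mul_pos hl0 ((hD l0).1 i j)
      refine lt_of_lt_of_le this ?_
      refine Finset.single_le_sum (f := fun l => p l * x l i * D l i j) (fun l _ => ?_) (Finset.mem_univ l0)
      exact mul_nonneg (hterm_nn i l) ((hD l).1 i j).le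
  · intro i j
    simp only [Matrix.of_apply]
    split_ifs with h
    · simpa using hθ.le
    · have hyi : 0 < y i := lt_of_le_of_ne (hynn i) (Ne.symm h)
      rw [div_sub' hyi.ne', abs_div, abs_of_pos hyi, div_le_iff₀ hyi]
      have : (∑ l, p l * x l i * D l i j) - y i * A i j
          = ∑ l, p l * x l i * (D l i j - A i j) := by
        simp only [hy, Finset.sum_mul, ← Finset.sum_sub_distrib]
        exact Finset.sum_congr rfl fun l _ => by ring
      rw [this]
      calc |∑ l, p l * x l i * (D l i j - A i j)|
          ≤ ∑ l, |p l * x l i * (D l i j - A i j)| := Finset.abs_sum_le_sum_abs _ _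
        _ ≤ ∑ l, p l * x l i * θ := by
            refine Finset.sum_le_sum fun l _ => ?_
            rw [abs_mul, abs_of_nonneg (hterm_nn i l)]
            exact mul_le_mul_of_nonneg_left ((hD l).2 i j) (hterm_nn i l)
        _ = θ * y i := by rw [hy, ← Finset.sum_mul]; ring
  · funext j
    simp only [Matrix.vecMul, dotProduct, Finset.sum_apply, Pi.smul_apply,
      Matrix.of_apply, smul_eq_mul]
    calc ∑ l, p l * ∑ i, x l i * D l i j
        = ∑ i, ∑ l, p l * (x l i * D l i j) := by
          simp_rw [Finset.mul_sum]; exact Finset.sum_comm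
      _ = _ := by
          refine Finset.sum_congr rfl fun i _ => ?_
          have hyi : (∑ l, p l * x l i) = y i := rfl
          split_ifs with h
          · simp [hy0 i h]
          · rw [hyi, mul_div_cancel₀ _ h]
            exact Finset.sum_congr rfl fun l _ => by ring
end

section
/- For all real numbers 0 < η < T < ∞ with η < 1, and every δ > 0, there exist θ ∈ (0, η²) and an integer R ≥ 1 such that: for every v ∈ ℝ_{≥0}^k \ {0}, every k×k matrix κ with all entries in [η,T], every π ∈ Π_{≤1} with π_i ∈ [η,1] for all i ∈ [k], and all matrices D^{(1)},…,D^{(R)} ∈ B_θ(κ∘π), one has ‖ vD^{(1)}⋯D^{(R)} / ‖vD^{(1)}⋯D^{(R)}‖₁ − μ(κ∘π) ‖₁ < δ. -/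
open Matrix

namespace ConveAux
open Finset Matrix
variable {k : ℕ}

lemma vecMul_list_prod (l : List (Matrix (Fin k) (Fin k) ℝ)) (v : Fin k → ℝ) :
    Matrix.vecMul v l.prod = l.foldl (fun w M => Matrix.vecMul w M) v := by
  induction l generalizing v with
  | nil => simp
  | cons M l ih => simp [List.prod_cons, ← Matrix.vecMul_vecMul, ih]

lemma vecMul_apply (v : Fin k → ℝ) (M : Matrix (Fin k) (Fin k) ℝ) (j : Fin k) :
    Matrix.vecMul v M j = ∑ i, v i * M i j := by
  simp [Matrix.vecMul, dotProduct]

noncomputable def mlo (hne : (Finset.univ : Finset (Fin k)).Nonempty) (μ x : Fin k → ℝ) : ℝ :=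
  Finset.univ.inf' hne fun i => x i / μ i

noncomputable def mhi (hne : (Finset.univ : Finset (Fin k)).Nonempty) (μ x : Fin k → ℝ) : ℝ :=
  Finset.univ.sup' hne fun i => x i / μ i

lemma mlo_mul_le {hne : (Finset.univ : Finset (Fin k)).Nonempty} {μ x : Fin k → ℝ}
    (hμ : ∀ i, 0 < μ i) (i : Fin k) : mlo hne μ x * μ i ≤ x i := by
  have h : mlo hne μ x ≤ x i / μ i := Finset.inf'_le _ (Finset.mem_univ i)
  rw [le_div_iff₀ (hμ i)] at h; exact h

lemma le_mhi_mul {hne : (Finset.univ : Finset (Fin k)).Nonempty} {μ x : Fin k → ℝ}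
    (hμ : ∀ i, 0 < μ i) (i : Fin k) : x i ≤ mhi hne μ x * μ i := by
  have h : x i / μ i ≤ mhi hne μ x := Finset.le_sup' (fun i => x i / μ i) (Finset.mem_univ i)
  rw [div_le_iff₀ (hμ i)] at h; exact h

lemma mlo_pos {hne : (Finset.univ : Finset (Fin k)).Nonempty} {μ x : Fin k → ℝ}
    (hμ : ∀ i, 0 < μ i) (hx : ∀ i, 0 < x i) : 0 < mlo hne μ x := by
  rw [mlo, Finset.lt_inf'_iff]
  exact fun i _ => div_pos (hx i) (hμ i)

lemma mlo_le_mhi {hne : (Finset.univ : Finset (Fin k)).Nonempty} {μ x : Fin k → ℝ} :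
    mlo hne μ x ≤ mhi hne μ x := by
  obtain ⟨i, _⟩ := hne
  exact le_trans (Finset.inf'_le _ (Finset.mem_univ i))
    (Finset.le_sup' (fun i => x i / μ i) (Finset.mem_univ i))

lemma le_mlo {hne : (Finset.univ : Finset (Fin k)).Nonempty} {μ x : Fin k → ℝ} (c : ℝ)
    (h : ∀ i, c ≤ x i / μ i) : c ≤ mlo hne μ x := Finset.le_inf' hne _ fun i _ => h i

lemma mhi_le {hne : (Finset.univ : Finset (Fin k)).Nonempty} {μ x : Fin k → ℝ} (c : ℝ)
    (h : ∀ i, x i / μ i ≤ c) : mhi hne μ x ≤ c := Finset.sup'_le hne _ fun i _ => h i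

lemma first_step (hne : (Finset.univ : Finset (Fin k)).Nonempty)
    (μ : Fin k → ℝ) (hμ : ∀ i, 0 < μ i)
    (r T a b c₀ : ℝ) (hr : 0 < r) (ha : 0 < a) (hc : 0 < c₀)
    (hcμ : ∀ j, c₀ ≤ r * μ j) (hrT : ∀ j, r * μ j ≤ T)
    (B : Matrix (Fin k) (Fin k) ℝ) (hBa : ∀ i j, a ≤ B i j) (hBb : ∀ i j, B i j ≤ b)
    (v : Fin k → ℝ) (hv : ∀ i, 0 ≤ v i) (hv0 : v ≠ 0) :
    (∀ j, 0 < Matrix.vecMul v B j) ∧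
      mhi hne μ (Matrix.vecMul v B) ≤ (b * T / (a * c₀)) * mlo hne μ (Matrix.vecMul v B) := by
  have hT : 0 < T := lt_of_lt_of_le hc (le_trans (hcμ (Classical.choice (by
    obtain ⟨i, _⟩ := hne; exact ⟨i⟩))) (hrT _))
  obtain ⟨i₀, -⟩ := id hne
  have hb : 0 < b := lt_of_lt_of_le ha (le_trans (hBa i₀ i₀) (hBb i₀ i₀))
  set W := ∑ i, v i with hW
  have hW0 : 0 < W := by
    obtain ⟨i, hi⟩ := Function.ne_iff.mp hv0
    have : 0 < v i := lt_of_le_of_ne (hv i) (Ne.symm (by simpa using hi))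
    exact lt_of_lt_of_le this (Finset.single_le_sum (fun j _ => hv j) (Finset.mem_univ i))
  have hlow : ∀ j, a * W ≤ Matrix.vecMul v B j := by
    intro j
    rw [vecMul_apply, hW, Finset.mul_sum]
    exact Finset.sum_le_sum fun i _ => by nlinarith [hBa i j, hv i]
  have hup : ∀ j, Matrix.vecMul v B j ≤ b * W := by
    intro j
    rw [vecMul_apply, hW, Finset.mul_sum]
    exact Finset.sum_le_sum fun i _ => by nlinarith [hBb i j, hBa i j, hv i]
  have hpos : ∀ j, 0 < Matrix.vecMul v B j := fun j =>
    lt_of_lt_of_le (by positivity) (hlow j)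
  refine ⟨hpos, ?_⟩
  have hml : a * W * r / T ≤ mlo hne μ (Matrix.vecMul v B) := by
    apply le_mlo
    intro i
    rw [div_le_div_iff₀ hT (hμ i)]
    nlinarith [mul_le_mul_of_nonneg_left (hrT i) (by positivity : (0:ℝ) ≤ a * W),
      mul_le_mul_of_nonneg_right (hlow i) (le_of_lt hT)]
  have hmh : mhi hne μ (Matrix.vecMul v B) ≤ b * W * r / c₀ := by
    apply mhi_le
    intro i
    rw [div_le_div_iff₀ (hμ i) hc]
    nlinarith [mul_le_mul_of_nonneg_left (hcμ i) (by positivity : (0:ℝ) ≤ b * W),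
      mul_le_mul_of_nonneg_right (hup i) (le_of_lt hc)]
  have key : b * W * r / c₀ = (b * T / (a * c₀)) * (a * W * r / T) := by
    field_simp
  calc mhi hne μ (Matrix.vecMul v B) ≤ b * W * r / c₀ := hmh
    _ = (b * T / (a * c₀)) * (a * W * r / T) := key
    _ ≤ (b * T / (a * c₀)) * mlo hne μ (Matrix.vecMul v B) := by
        apply mul_le_mul_of_nonneg_left hml
        positivity

set_option maxHeartbeats 2000000 in
lemma step (hne : (Finset.univ : Finset (Fin k)).Nonempty)
    (μ : Fin k → ℝ) (hμ : ∀ i, 0 < μ i) (hμ1 : ∑ i, μ i = 1)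
    (r T a ε : ℝ) (hr : 0 < r) (ha : 0 < a) (haT : a ≤ T)
    (hrT : ∀ j, r * μ j ≤ T)
    (hε0 : 0 ≤ ε) (hε2 : ε ≤ 1/2) (hεc : ε ≤ a / (4 * T))
    (B : Matrix (Fin k) (Fin k) ℝ) (hB : ∀ i j, a ≤ B i j)
    (hμB : ∀ j, |Matrix.vecMul μ B j - r * μ j| ≤ ε * (r * μ j))
    (x : Fin k → ℝ) (hx : ∀ i, 0 < x i) :
    (∀ j, 0 < Matrix.vecMul x B j) ∧
    mhi hne μ (Matrix.vecMul x B) / mlo hne μ (Matrix.vecMul x B) - 1 ≤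
      (1 - a / (2 * T)) * (mhi hne μ x / mlo hne μ x - 1) + 4 * ε := by
  have hT : 0 < T := lt_of_lt_of_le ha haT
  set m := mlo hne μ x with hm
  set M := mhi hne μ x with hM
  have hm0 : 0 < m := mlo_pos hμ hx
  have hmM : m ≤ M := mlo_le_mhi
  set S := ∑ i, (x i - m * μ i) with hSdef
  set S' := ∑ i, (M * μ i - x i) with hS'def
  have hS0 : 0 ≤ S := Finset.sum_nonneg fun i _ => by linarith [mlo_mul_le (hne := hne) (x := x) hμ i]
  have hS'0 : 0 ≤ S' := Finset.sum_nonneg fun i _ => by linarith [le_mhi_mul (hne := hne) (x := x) hμ i]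
  have hSS : S + S' = M - m := by
    rw [hSdef, hS'def, ← Finset.sum_add_distrib]
    have : ∀ i, (x i - m * μ i) + (M * μ i - x i) = (M - m) * μ i := fun i => by ring
    simp_rw [this, ← Finset.mul_sum, hμ1, mul_one]
  -- per-coordinate bounds
  have hlow : ∀ j, m * Matrix.vecMul μ B j + a * S ≤ Matrix.vecMul x B j := by
    intro j
    rw [vecMul_apply, vecMul_apply, Finset.mul_sum, hSdef, Finset.mul_sum, ← Finset.sum_add_distrib]
    refine Finset.sum_le_sum fun i _ => ?_
    have h1 : m * μ i ≤ x i := mlo_mul_le hμ i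
    nlinarith [hB i j, hμ i]
  have hup : ∀ j, Matrix.vecMul x B j ≤ M * Matrix.vecMul μ B j - a * S' := by
    intro j
    rw [vecMul_apply, vecMul_apply, Finset.mul_sum, hS'def, Finset.mul_sum, ← Finset.sum_sub_distrib]
    refine Finset.sum_le_sum fun i _ => ?_
    have h1 : x i ≤ M * μ i := le_mhi_mul hμ i
    nlinarith [hB i j, hμ i]
  have hpos : ∀ j, 0 < Matrix.vecMul x B j := by
    intro j
    refine lt_of_lt_of_le ?_ (hlow j)
    have hrμ : 0 < r * μ j := mul_pos hr (hμ j)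
    have hμB' : (1 - ε) * (r * μ j) ≤ Matrix.vecMul μ B j := by
      have := abs_le.mp (hμB j); nlinarith
    have h2 : 0 < Matrix.vecMul μ B j := lt_of_lt_of_le (by nlinarith) hμB'
    nlinarith [mul_pos hm0 h2, mul_nonneg ha.le hS0]
  refine ⟨hpos, ?_⟩
  set g := a / T with hgdef
  have hg : g * T = a := div_mul_cancel₀ a (ne_of_gt hT)
  have hg0 : 0 < g := div_pos ha hT
  have hg1 : g ≤ 1 := by rw [hgdef, div_le_one hT]; exact haT
  have hεg : 4 * ε ≤ g := by
    have h := (le_div_iff₀ (by positivity : (0:ℝ) < 4 * T)).mp hεc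
    rw [hgdef, le_div_iff₀ hT]; nlinarith
  have hP0 : 0 < r * ((1 - ε) * m + g * S) := by
    have h1 : 0 < (1 - ε) * m := by nlinarith
    have h2 : 0 ≤ g * S := mul_nonneg hg0.le hS0
    nlinarith
  have hPle : r * ((1 - ε) * m + g * S) ≤ mlo hne μ (Matrix.vecMul x B) := by
    apply le_mlo
    intro j
    rw [le_div_iff₀ (hμ j)]
    have hμB' : (1 - ε) * (r * μ j) ≤ Matrix.vecMul μ B j := by
      have := abs_le.mp (hμB j); nlinarith
    have h1 : g * S * (r * μ j) ≤ a * S := by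
      calc g * S * (r * μ j) ≤ g * S * T := by
            apply mul_le_mul_of_nonneg_left (hrT j) (by positivity)
        _ = a * S := by rw [← hg]; ring
    nlinarith [hlow j, mul_le_mul_of_nonneg_left hμB' hm0.le]
  have hNle : mhi hne μ (Matrix.vecMul x B) ≤ r * ((1 + ε) * M - g * S') := by
    apply mhi_le
    intro j
    rw [div_le_iff₀ (hμ j)]
    have hμB' : Matrix.vecMul μ B j ≤ (1 + ε) * (r * μ j) := by
      have := abs_le.mp (hμB j); nlinarith [mul_pos hr (hμ j)]
    have h1 : g * S' * (r * μ j) ≤ a * S' := by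
      calc g * S' * (r * μ j) ≤ g * S' * T := by
            apply mul_le_mul_of_nonneg_left (hrT j) (by positivity)
        _ = a * S' := by rw [← hg]; ring
    have hM0 : 0 ≤ M := le_trans hm0.le hmM
    nlinarith [hup j, mul_le_mul_of_nonneg_left hμB' hM0]
  -- combine
  have hml0 : 0 < mlo hne μ (Matrix.vecMul x B) := lt_of_lt_of_le hP0 hPle
  set q := M / m with hqdef
  have hqm : q * m = M := div_mul_cancel₀ M (ne_of_gt hm0)
  have hq1 : 1 ≤ q := by rw [hqdef, le_div_iff₀ hm0]; linarith
  have hagT : a / (2 * T) = g / 2 := by rw [hgdef]; ring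
  rw [hagT]
  set C₀ := (1 - g / 2) * (q - 1) + 4 * ε + 1 with hC₀
  have hC00 : 0 ≤ C₀ := by
    have : 0 ≤ (1 - g/2) * (q - 1) := mul_nonneg (by linarith) (by linarith)
    rw [hC₀]; linarith
  have hgSS : g * S + g * S' = g * (M - m) := by rw [← mul_add, hSS]
  have hcore : (1 + ε) * M - g * S' ≤
      ((1 - ε) * m + g * S) + (1 - g/2) * (1 - ε) * (M - m) + 4 * ε * (1 - ε) * m := by
    nlinarith [mul_nonneg (by linarith : (0:ℝ) ≤ M - m) (by linarith : (0:ℝ) ≤ g - 4 * ε),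
      mul_nonneg (by linarith : (0:ℝ) ≤ M - m) (mul_nonneg hε0 hg0.le),
      mul_nonneg hm0.le (mul_nonneg hε0 (by linarith : (0:ℝ) ≤ 1 - 2 * ε))]
  have hsub : (q - 1) * m = M - m := by rw [sub_mul, hqm, one_mul]
  have hqm' : (1 - g/2) * ((1 - ε) * ((q - 1) * m)) = (1 - g/2) * ((1 - ε) * (M - m)) := by
    rw [hsub]
  have hstep2 : ((1 - ε) * m + g * S) + (1 - g/2) * (1 - ε) * (M - m) + 4 * ε * (1 - ε) * m ≤
      C₀ * ((1 - ε) * m + g * S) := by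
    rw [hC₀]
    nlinarith [hqm', mul_nonneg (mul_nonneg (by linarith : (0:ℝ) ≤ 2 - g)
        (by linarith : (0:ℝ) ≤ q - 1)) (mul_nonneg hg0.le hS0),
      mul_nonneg hε0 (mul_nonneg hg0.le hS0)]
  have hkey : r * ((1 + ε) * M - g * S') ≤ C₀ * (r * ((1 - ε) * m + g * S)) := by
    calc r * ((1 + ε) * M - g * S')
        ≤ r * (((1 - ε) * m + g * S) + (1 - g/2) * (1 - ε) * (M - m) + 4 * ε * (1 - ε) * m) :=
          mul_le_mul_of_nonneg_left hcore hr.le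
      _ ≤ r * (C₀ * ((1 - ε) * m + g * S)) := mul_le_mul_of_nonneg_left hstep2 hr.le
      _ = C₀ * (r * ((1 - ε) * m + g * S)) := by ring
  have hfin : mhi hne μ (Matrix.vecMul x B) ≤ C₀ * mlo hne μ (Matrix.vecMul x B) :=
    le_trans hNle (le_trans hkey (mul_le_mul_of_nonneg_left hPle hC00))
  have := (div_le_iff₀ hml0).mpr hfin
  rw [hC₀] at this
  linarith

lemma iterate (hne : (Finset.univ : Finset (Fin k)).Nonempty)
    (μ : Fin k → ℝ) (hμ : ∀ i, 0 < μ i) (hμ1 : ∑ i, μ i = 1)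
    (r T a ε : ℝ) (hr : 0 < r) (ha : 0 < a) (haT : a ≤ T)
    (hrT : ∀ j, r * μ j ≤ T)
    (hε0 : 0 ≤ ε) (hε2 : ε ≤ 1/2) (hεc : ε ≤ a / (4 * T))
    (E : ℝ) (hE0 : 0 ≤ E) (hE : (1 - a / (2 * T)) * E + 4 * ε ≤ E) :
    ∀ l : List (Matrix (Fin k) (Fin k) ℝ),
      (∀ B ∈ l, (∀ i j, a ≤ B i j) ∧ ∀ j, |Matrix.vecMul μ B j - r * μ j| ≤ ε * (r * μ j)) →
      ∀ x : Fin k → ℝ, (∀ i, 0 < x i) → ∀ c : ℝ, 0 ≤ c →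
      mhi hne μ x / mlo hne μ x - 1 ≤ c + E →
      (∀ j, 0 < (l.foldl (fun w M => Matrix.vecMul w M) x) j) ∧
      mhi hne μ (l.foldl (fun w M => Matrix.vecMul w M) x) /
          mlo hne μ (l.foldl (fun w M => Matrix.vecMul w M) x) - 1 ≤
        (1 - a / (2 * T)) ^ l.length * c + E := by
  have hT : 0 < T := lt_of_lt_of_le ha haT
  have hlam0 : 0 ≤ 1 - a / (2 * T) := by
    have h12 : a / (2 * T) ≤ 1 / 2 := by
      rw [div_le_div_iff₀ (by linarith) (by norm_num)]; linarith
    linarith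
  intro l
  induction l with
  | nil =>
    intro _ x hx c hc hq
    simpa using ⟨hx, by simpa using hq⟩
  | cons B l ih =>
    intro hmem x hx c hc hq
    obtain ⟨hBa, hBμ⟩ := hmem B List.mem_cons_self
    obtain ⟨hx', hq'⟩ := step hne μ hμ hμ1 r T a ε hr ha haT hrT hε0 hε2 hεc B hBa hBμ x hx
    have hq'' : mhi hne μ (Matrix.vecMul x B) / mlo hne μ (Matrix.vecMul x B) - 1 ≤
        (1 - a / (2 * T)) * c + E := by
      have h1 : (1 - a / (2 * T)) * (mhi hne μ x / mlo hne μ x - 1) ≤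
          (1 - a / (2 * T)) * (c + E) := mul_le_mul_of_nonneg_left hq hlam0
      nlinarith
    have hres := ih (fun B' hB' => hmem B' (List.mem_cons_of_mem B hB'))
      (Matrix.vecMul x B) hx' ((1 - a / (2 * T)) * c) (mul_nonneg hlam0 hc) hq''
    rw [List.foldl_cons]
    refine ⟨hres.1, ?_⟩
    have := hres.2
    rw [List.length_cons, pow_succ]
    calc mhi hne μ (List.foldl (fun w M => Matrix.vecMul w M) (Matrix.vecMul x B) l) /
          mlo hne μ (List.foldl (fun w M => Matrix.vecMul w M) (Matrix.vecMul x B) l) - 1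
        ≤ (1 - a / (2 * T)) ^ l.length * ((1 - a / (2 * T)) * c) + E := this
      _ = (1 - a / (2 * T)) ^ l.length * (1 - a / (2 * T)) * c + E := by ring

lemma norm_close (hne : (Finset.univ : Finset (Fin k)).Nonempty)
    (μ : Fin k → ℝ) (hμ : ∀ i, 0 < μ i) (hμ1 : ∑ i, μ i = 1)
    (x : Fin k → ℝ) (hx : ∀ i, 0 < x i) :
    ∑ i, |(∑ j, x j)⁻¹ * x i - μ i| ≤ mhi hne μ x / mlo hne μ x - 1 := by
  set m := mlo hne μ x with hm
  set M := mhi hne μ x with hM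
  have hm0 : 0 < m := mlo_pos hμ hx
  have hmM : m ≤ M := mlo_le_mhi
  set W := ∑ j, x j with hW
  have hW0 : 0 < W := Finset.sum_pos (fun i _ => hx i) hne
  have hmW : m ≤ W := by
    calc m = ∑ i, m * μ i := by rw [← Finset.mul_sum, hμ1, mul_one]
      _ ≤ ∑ i, x i := Finset.sum_le_sum fun i _ => mlo_mul_le hμ i
  have hWM : W ≤ M := by
    calc W = ∑ i, x i := hW
      _ ≤ ∑ i, M * μ i := Finset.sum_le_sum fun i _ => le_mhi_mul hμ i
      _ = M := by rw [← Finset.mul_sum, hμ1, mul_one]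
  have key : ∀ i, |W⁻¹ * x i - μ i| ≤ (M - m) / m * μ i := by
    intro i
    have h1 : |x i - W * μ i| ≤ (M - m) * μ i := by
      rw [abs_le]
      constructor
      · nlinarith [le_mhi_mul (hne := hne) (x := x) hμ i, mlo_mul_le (hne := hne) (x := x) hμ i,
          hμ i]
      · nlinarith [le_mhi_mul (hne := hne) (x := x) hμ i, mlo_mul_le (hne := hne) (x := x) hμ i,
          hμ i]
    have h2 : W⁻¹ * x i - μ i = (x i - W * μ i) / W := by field_simp
    rw [h2, abs_div, abs_of_pos hW0]
    have h3 : |x i - W * μ i| / W ≤ ((M - m) * μ i) / W := by gcongr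
    have h4 : ((M - m) * μ i) / W ≤ ((M - m) * μ i) / m :=
      div_le_div_of_nonneg_left (by nlinarith [hμ i]) hm0 hmW
    have h5 : ((M - m) * μ i) / m = (M - m) / m * μ i := by ring
    linarith
  calc ∑ i, |W⁻¹ * x i - μ i| ≤ ∑ i, (M - m) / m * μ i := Finset.sum_le_sum fun i _ => key i
    _ = (M - m) / m := by rw [← Finset.mul_sum, hμ1, mul_one]
    _ = M / m - 1 := by field_simp

end ConveAux

set_option maxHeartbeats 2000000 in
/-- Lemma 4.6 (convevector): the image of any nonnegative nonzero vector under a long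
product of matrices close to κ∘π has direction close to the principal left-eigenvector
μ(κ∘π). -/
theorem product_direction_close_to_eigenvector
    {k : ℕ} (hk : 0 < k) (η T : ℝ) (hη : 0 < η) (hη1 : η < 1) (hηT : η < T)
    (δ : ℝ) (hδ : 0 < δ) :
    ∃ (θ : ℝ) (R : ℕ), 0 < θ ∧ θ < η ^ 2 ∧ 1 ≤ R ∧
      ∀ v : Fin k → ℝ, (∀ i, 0 ≤ v i) → v ≠ 0 →
      ∀ κ : Matrix (Fin k) (Fin k) ℝ, (∀ i j, κ i j ∈ Set.Icc η T) →
      ∀ π : Fin k → ℝ, (∀ i, π i ∈ Set.Icc η 1) → ∑ i, π i ≤ 1 →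
      ∀ D : Fin R → Matrix (Fin k) (Fin k) ℝ, (∀ r, memBall θ (circ κ π) (D r)) →
      ∀ μ : Fin k → ℝ, (∀ i, 0 < μ i) → l1norm μ = 1 →
        (∃ r : ℝ, 0 < r ∧ Matrix.vecMul μ (circ κ π) = r • μ) →
      l1norm ((l1norm (Matrix.vecMul v (List.ofFn D).prod))⁻¹ •
          Matrix.vecMul v (List.ofFn D).prod - μ) < δ := by
  have hT0 : 0 < T := lt_trans hη hηT
  set θ : ℝ := min (η^4/(8*T)) (min (δ*η^4/(64*T)) (η^2/2)) with hθdef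
  have hθ0 : 0 < θ := lt_min (by positivity) (lt_min (by positivity) (by positivity))
  have hθ1 : θ ≤ η^4/(8*T) := min_le_left _ _
  have hθ2 : θ ≤ δ*η^4/(64*T) := le_trans (min_le_right _ _) (min_le_left _ _)
  have hθ3 : θ ≤ η^2/2 := le_trans (min_le_right _ _) (min_le_right _ _)
  have hθη : θ < η^2 := lt_of_le_of_lt hθ3 (by nlinarith)
  have hη2 : (0:ℝ) < η^2 := by positivity
  have hε0 : (0:ℝ) ≤ θ/η^2 := by positivity
  have hε2 : θ/η^2 ≤ 1/2 := by rw [div_le_iff₀ hη2]; linarith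
  have hεc : θ/η^2 ≤ (η^2/2)/(4*T) := by
    rw [div_le_div_iff₀ hη2 (by positivity)]
    have h8' : θ * (8*T) ≤ η^4 := by
      rw [le_div_iff₀ (by positivity : (0:ℝ) < 8*T)] at hθ1
      exact hθ1
    nlinarith
  set E : ℝ := 16*θ*T/η^4 with hEdef
  have hE0 : 0 ≤ E := by positivity
  have hEeq : (η^2/2)/(2*T) * E = 4*(θ/η^2) := by
    rw [hEdef]; field_simp; ring
  have hE : (1 - (η^2/2)/(2*T)) * E + 4*(θ/η^2) ≤ E := by nlinarith [hEeq]
  have hEδ : E ≤ δ/4 := by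
    rw [hEdef, div_le_div_iff₀ (by positivity) (by norm_num)]
    rw [le_div_iff₀ (by positivity : (0:ℝ) < 64*T)] at hθ2
    nlinarith
  set Q : ℝ := (T+1) * T / (η^2/2 * η^2) with hQdef
  have hQ0 : 0 < Q := by positivity
  have hlam1 : 1 - (η^2/2)/(2*T) < 1 := by
    have : 0 < (η^2/2)/(2*T) := by positivity
    linarith
  have hlam0 : 0 ≤ 1 - (η^2/2)/(2*T) := by
    have hd : (η^2/2)/(2*T) ≤ 1 := by
      rw [div_le_one (by positivity)]
      nlinarith
    linarith
  obtain ⟨n, hn⟩ := exists_pow_lt_of_lt_one (show (0:ℝ) < δ/(4*Q) by positivity) hlam1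
  refine ⟨θ, n+1, hθ0, hθη, le_add_self, ?_⟩
  intro v hv hv0 κ hκ π hπ hπ1 D hD μ hμ hμl1 ⟨r, hr0, hrμ⟩
  have hne : (Finset.univ : Finset (Fin k)).Nonempty := ⟨⟨0, hk⟩, Finset.mem_univ _⟩
  have hμ1 : ∑ i, μ i = 1 := by
    rw [← hμl1, l1norm]
    exact (Finset.sum_congr rfl fun i _ => (abs_of_pos (hμ i)).symm)
  have hrμj : ∀ j, Matrix.vecMul μ (circ κ π) j = r * μ j := by
    intro j; rw [hrμ]; simp
  have hAlo : ∀ i j, η^2 ≤ circ κ π i j := by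
    intro i j
    have h1 := (hκ i j).1
    have h2 := (hπ j).1
    simp only [circ, Matrix.of_apply]
    nlinarith
  have hAhi : ∀ i j, circ κ π i j ≤ T := by
    intro i j
    have h1 := (hκ i j).2
    have h2 := (hπ j).2
    have h3 := (hπ j).1
    have h4 := (hκ i j).1
    simp only [circ, Matrix.of_apply]
    nlinarith
  have h_lo : ∀ j, η^2 ≤ r * μ j := by
    intro j
    rw [← hrμj j, ConveAux.vecMul_apply]
    calc η^2 = ∑ i, μ i * η^2 := by rw [← Finset.sum_mul, hμ1, one_mul]
      _ ≤ ∑ i, μ i * circ κ π i j :=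
        Finset.sum_le_sum fun i _ => mul_le_mul_of_nonneg_left (hAlo i j) (hμ i).le
  have h_hi : ∀ j, r * μ j ≤ T := by
    intro j
    rw [← hrμj j, ConveAux.vecMul_apply]
    calc ∑ i, μ i * circ κ π i j ≤ ∑ i, μ i * T :=
        Finset.sum_le_sum fun i _ => mul_le_mul_of_nonneg_left (hAhi i j) (hμ i).le
      _ = T := by rw [← Finset.sum_mul, hμ1, one_mul]
  have hDa : ∀ (t : Fin (n+1)) i' j, η^2/2 ≤ D t i' j := by
    intro t i' j
    have h1 := abs_le.mp ((hD t).2 i' j)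
    have h2 := hAlo i' j
    linarith [h1.1]
  have hDb : ∀ (t : Fin (n+1)) i' j, D t i' j ≤ T + 1 := by
    intro t i' j
    have h1 := abs_le.mp ((hD t).2 i' j)
    have h2 := hAhi i' j
    nlinarith [h1.2]
  have hDμ : ∀ (t : Fin (n+1)) j,
      |Matrix.vecMul μ (D t) j - r * μ j| ≤ (θ/η^2) * (r * μ j) := by
    intro t j
    have h1 : |Matrix.vecMul μ (D t) j - r * μ j| ≤ θ := by
      rw [← hrμj j, ConveAux.vecMul_apply, ConveAux.vecMul_apply, ← Finset.sum_sub_distrib]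
      calc |∑ i, (μ i * D t i j - μ i * circ κ π i j)|
          ≤ ∑ i, |μ i * D t i j - μ i * circ κ π i j| := Finset.abs_sum_le_sum_abs _ _
        _ ≤ ∑ i, μ i * θ := by
            refine Finset.sum_le_sum fun i _ => ?_
            rw [← mul_sub, abs_mul, abs_of_pos (hμ i)]
            exact mul_le_mul_of_nonneg_left ((hD t).2 i j) (hμ i).le
        _ = θ := by rw [← Finset.sum_mul, hμ1, one_mul]
    have h2 : θ ≤ (θ/η^2) * (r * μ j) := by
      calc θ = (θ/η^2) * η^2 := by field_simp
        _ ≤ (θ/η^2) * (r * μ j) := mul_le_mul_of_nonneg_left (h_lo j) hε0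
    linarith
  -- split off first factor
  have hsplit : List.ofFn D = D 0 :: List.ofFn (fun i : Fin n => D i.succ) := List.ofFn_succ
  have hfold : Matrix.vecMul v (List.ofFn D).prod =
      (List.ofFn (fun i : Fin n => D i.succ)).foldl (fun w M => Matrix.vecMul w M)
        (Matrix.vecMul v (D 0)) := by
    rw [ConveAux.vecMul_list_prod, hsplit, List.foldl_cons]
  obtain ⟨hx1pos, hx1q⟩ := ConveAux.first_step hne μ hμ r T (η^2/2) (T+1) (η^2) hr0
    (by positivity) hη2 h_lo h_hi (D 0) (hDa 0) (hDb 0) v hv hv0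
  have hml1 : 0 < ConveAux.mlo hne μ (Matrix.vecMul v (D 0)) := ConveAux.mlo_pos hμ hx1pos
  have hqd1 : ConveAux.mhi hne μ (Matrix.vecMul v (D 0)) /
      ConveAux.mlo hne μ (Matrix.vecMul v (D 0)) - 1 ≤ Q + E := by
    have := (div_le_iff₀ hml1).mpr hx1q
    rw [hQdef]; linarith
  obtain ⟨hfpos, hfq⟩ := ConveAux.iterate hne μ hμ hμ1 r T (η^2/2) (θ/η^2) hr0 (by positivity)
    (by nlinarith) h_hi hε0 hε2 hεc E hE0 hE
    (List.ofFn (fun i : Fin n => D i.succ))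
    (by
      intro B hB
      rw [List.mem_ofFn] at hB
      obtain ⟨i, rfl⟩ := hB
      exact ⟨hDa i.succ, hDμ i.succ⟩)
    (Matrix.vecMul v (D 0)) hx1pos Q hQ0.le hqd1
  rw [List.length_ofFn] at hfq
  -- final estimate
  rw [hfold]
  set w := (List.ofFn (fun i : Fin n => D i.succ)).foldl (fun w M => Matrix.vecMul w M)
    (Matrix.vecMul v (D 0)) with hw
  have hwpos : ∀ j, 0 < w j := hfpos
  have hl1w : l1norm w = ∑ j, w j :=
    Finset.sum_congr rfl fun i _ => abs_of_pos (hwpos i)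
  have hnorm := ConveAux.norm_close hne μ hμ hμ1 w hwpos
  have hgoal : l1norm ((l1norm w)⁻¹ • w - μ) = ∑ i, |(∑ j, w j)⁻¹ * w i - μ i| := by
    rw [l1norm, hl1w]
    exact Finset.sum_congr rfl fun i _ => by simp
  have hbd : ConveAux.mhi hne μ w / ConveAux.mlo hne μ w - 1 ≤
      (1 - (η^2/2)/(2*T)) ^ n * Q + E := hfq
  have hQbd : (1 - (η^2/2)/(2*T)) ^ n * Q < δ/4 := by
    have := mul_lt_mul_of_pos_right hn hQ0
    have he : δ/(4*Q) * Q = δ/4 := by field_simp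
    linarith [he ▸ this]
  rw [hgoal]
  calc ∑ i, |(∑ j, w j)⁻¹ * w i - μ i| ≤ ConveAux.mhi hne μ w / ConveAux.mlo hne μ w - 1 :=
      hnorm
    _ ≤ (1 - (η^2/2)/(2*T)) ^ n * Q + E := hbd
    _ < δ/4 + δ/4 := by linarith
    _ < δ := by linarith
end

section
/- Fix real numbers 0 < η ≤ 1 and T with η < T < ∞. For every δ > 0 there exists R₀ ∈ ℕ such that for every integer R ≥ R₀, every k×k matrix κ with all entries in [η,T], every π ∈ Π_{≤1} with π_i ≥ η for all i ∈ [k], and every v ∈ Π₁: ‖ v(κ∘π)^R / ‖v(κ∘π)^R‖₁ − μ(κ∘π) ‖₁ < δ. -/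
open Matrix

/-- Convex combination with weights bounded below by `γ` contracts towards the interior. -/
lemma upp_step_bounds {k : ℕ} (c x : Fin k → ℝ) (γ m Mx : ℝ) (hγ0 : 0 ≤ γ)
    (hsum : ∑ j, c j = 1) (hc : ∀ j, γ ≤ c j)
    (hm : ∀ j, m ≤ x j) (hMx : ∀ j, x j ≤ Mx)
    (j0 : Fin k) (hj0 : x j0 = m) :
    m ≤ ∑ j, c j * x j ∧ ∑ j, c j * x j ≤ Mx - γ * (Mx - m) := by
  have hc0 : ∀ j, 0 ≤ c j := fun j => le_trans hγ0 (hc j)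
  constructor
  · calc m = ∑ j, c j * m := by rw [← Finset.sum_mul, hsum, one_mul]
      _ ≤ ∑ j, c j * x j :=
        Finset.sum_le_sum fun j _ => mul_le_mul_of_nonneg_left (hm j) (hc0 j)
  · have hmM : m ≤ Mx := hj0 ▸ hMx j0
    have h1 : c j0 * (Mx - x j0) ≤ ∑ j, c j * (Mx - x j) :=
      Finset.single_le_sum
        (fun j _ => mul_nonneg (hc0 j) (sub_nonneg.mpr (hMx j))) (Finset.mem_univ j0)
    have h2 : γ * (Mx - m) ≤ c j0 * (Mx - x j0) := by
      rw [hj0]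
      exact mul_le_mul_of_nonneg_right (hc j0) (sub_nonneg.mpr hmM)
    have expand : ∑ j, c j * (Mx - x j) = Mx - ∑ j, c j * x j := by
      simp only [mul_sub]
      rw [Finset.sum_sub_distrib, ← Finset.sum_mul, hsum, one_mul]
    linarith

set_option maxHeartbeats 2000000 in
/-- Lemma 7.4 (unifPerronproj): uniform convergence of the direction of v(κ∘π)^R to
the principal left-eigenvector μ(κ∘π). -/
theorem uniform_perron_projection
    {k : ℕ} (hk : 0 < k) (η T : ℝ) (hη : 0 < η) (hη1 : η ≤ 1) (hηT : η < T)
    (δ : ℝ) (hδ : 0 < δ) :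
    ∃ R₀ : ℕ, ∀ R : ℕ, R₀ ≤ R →
      ∀ κ : Matrix (Fin k) (Fin k) ℝ, (∀ i j, κ i j ∈ Set.Icc η T) →
      ∀ π : Fin k → ℝ, (∀ i, η ≤ π i) → (∀ i, 0 ≤ π i) → ∑ i, π i ≤ 1 →
      ∀ v : Fin k → ℝ, (∀ i, 0 ≤ v i) → ∑ i, v i = 1 →
      ∀ μ : Fin k → ℝ, (∀ i, 0 < μ i) → l1norm μ = 1 →
        (∃ r : ℝ, 0 < r ∧ Matrix.vecMul μ (circ κ π) = r • μ) →
      l1norm ((l1norm (Matrix.vecMul v ((circ κ π) ^ R)))⁻¹ •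
          Matrix.vecMul v ((circ κ π) ^ R) - μ) < δ := by
  have hNe : Nonempty (Fin k) := ⟨⟨0, hk⟩⟩
  have hne : (Finset.univ : Finset (Fin k)).Nonempty := Finset.univ_nonempty
  -- uniform constants
  set a : ℝ := η ^ 2 with ha_def
  set b : ℝ := T with hb_def
  have ha0 : 0 < a := by positivity
  have hab : a < b := by nlinarith
  have hb0 : 0 < b := lt_trans ha0 hab
  have hk0 : (0:ℝ) < (k:ℝ) := by exact_mod_cast hk
  set μmin : ℝ := a / (k * b) with hμmin_def
  have hμmin0 : 0 < μmin := by positivity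
  set γ : ℝ := a * μmin / b with hγ_def
  have hγ0 : 0 < γ := by positivity
  have hγ1 : γ < 1 := by
    have h1 : μmin ≤ 1 := by
      rw [hμmin_def, div_le_one (by positivity)]
      have hk1 : (1:ℝ) ≤ (k:ℝ) := by exact_mod_cast hk
      nlinarith
    have h2 : a * μmin ≤ a := by nlinarith
    rw [hγ_def, div_lt_one hb0]
    nlinarith
  set q : ℝ := 1 - γ with hq_def
  have hq0 : 0 ≤ q := by linarith
  have hq1 : q < 1 := by linarith
  -- choose N with q^N small enough
  obtain ⟨N, hN⟩ : ∃ N : ℕ, q ^ N < δ * (μmin * γ) := by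
    exact exists_pow_lt_of_lt_one (by positivity) hq1
  refine ⟨N + 1, ?_⟩
  intro R hR κ hκ π hπη hπ0 hπsum v hv0 hvsum μ hμ0 hμl1 hμeig
  obtain ⟨r, hr0, hvec⟩ := hμeig
  obtain ⟨n, rfl⟩ : ∃ n, R = n + 1 :=
    ⟨R - 1, (Nat.succ_pred_eq_of_pos (lt_of_lt_of_le (Nat.succ_pos N) hR)).symm⟩
  have hnN : N ≤ n := by omega
  set Mm : Matrix (Fin k) (Fin k) ℝ := circ κ π with hMm_def
  have hπ1 : ∀ i, π i ≤ 1 := by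
    intro i
    calc π i ≤ ∑ j, π j :=
        Finset.single_le_sum (fun j _ => hπ0 j) (Finset.mem_univ i)
      _ ≤ 1 := hπsum
  have hMa : ∀ j i, a ≤ Mm j i := by
    intro j i
    have h1 := (hκ j i).1
    have h2 := hπη i
    show a ≤ κ j i * π i
    nlinarith
  have hMb : ∀ j i, Mm j i ≤ b := by
    intro j i
    have h1 := (hκ j i).2
    have h2 := hπ1 i
    have h3 := hπ0 i
    have h4 : 0 < κ j i := lt_of_lt_of_le hη (hκ j i).1
    show κ j i * π i ≤ b
    nlinarith
  have hμsum : ∑ i, μ i = 1 := by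
    rw [← hμl1, l1norm]
    exact Finset.sum_congr rfl fun i _ => (abs_of_pos (hμ0 i)).symm
  have hμ1 : ∀ i, μ i ≤ 1 := by
    intro i
    calc μ i ≤ ∑ j, μ j :=
        Finset.single_le_sum (fun j _ => (hμ0 j).le) (Finset.mem_univ i)
      _ = 1 := hμsum
  have heig : ∀ i, ∑ j, μ j * Mm j i = r * μ i := by
    intro i
    have := congrFun hvec i
    simpa [Matrix.vecMul, dotProduct] using this
  have hra : ∀ i, a ≤ r * μ i := by
    intro i
    rw [← heig i]
    calc a = ∑ j, μ j * a := by rw [← Finset.sum_mul, hμsum, one_mul]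
      _ ≤ ∑ j, μ j * Mm j i :=
        Finset.sum_le_sum fun j _ => mul_le_mul_of_nonneg_left (hMa j i) (hμ0 j).le
  have hrb : ∀ i, r * μ i ≤ b := by
    intro i
    rw [← heig i]
    calc ∑ j, μ j * Mm j i ≤ ∑ j, μ j * b :=
        Finset.sum_le_sum fun j _ => mul_le_mul_of_nonneg_left (hMb j i) (hμ0 j).le
      _ = b := by rw [← Finset.sum_mul, hμsum, one_mul]
  have hrkb : r ≤ k * b := by
    obtain ⟨i0, _, hi0⟩ : ∃ i ∈ Finset.univ, (1:ℝ)/k ≤ μ i := by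
      apply Finset.exists_le_of_sum_le hne
      rw [hμsum, Finset.sum_const, Finset.card_univ, Fintype.card_fin]
      rw [nsmul_eq_mul, mul_one_div, div_self (ne_of_gt hk0)]
    have := hrb i0
    have h2 : r * (1/k) ≤ r * μ i0 := mul_le_mul_of_nonneg_left hi0 hr0.le
    rw [mul_one_div] at h2
    rw [div_le_iff₀ hk0] at h2
    nlinarith
  have hμmin : ∀ i, μmin ≤ μ i := by
    intro i
    have h1 := hra i
    have h3 : μmin * ((k:ℝ) * b) = a := by
      rw [hμmin_def]
      field_simp
    have h2 : μmin * r ≤ a := by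
      calc μmin * r ≤ μmin * ((k:ℝ) * b) := mul_le_mul_of_nonneg_left hrkb hμmin0.le
        _ = a := h3
    rw [← mul_le_mul_iff_right₀ hr0]
    calc r * μmin = μmin * r := mul_comm _ _
      _ ≤ a := h2
      _ ≤ r * μ i := h1
  -- column-stochastic weights
  set c : Fin k → Fin k → ℝ := fun i j => μ j * Mm j i / (r * μ i) with hc_def
  have hrμ0 : ∀ i, (0:ℝ) < r * μ i := fun i => mul_pos hr0 (hμ0 i)
  have hcsum : ∀ i, ∑ j, c i j = 1 := by
    intro i
    rw [hc_def]
    simp only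
    rw [← Finset.sum_div, heig i, div_self (ne_of_gt (hrμ0 i))]
  have hcγ : ∀ i j, γ ≤ c i j := by
    intro i j
    have hsub : c i j = μ j * Mm j i / (r * μ i) := rfl
    rw [hsub, hγ_def]
    refine div_le_div₀ (mul_nonneg (hμ0 j).le (le_trans ha0.le (hMa j i))) ?_ (hrμ0 i) (hrb i)
    calc a * μmin = μmin * a := mul_comm _ _
      _ ≤ μ j * Mm j i :=
        mul_le_mul (hμmin j) (hMa j i) ha0.le (le_trans hμmin0.le (hμmin j))
  -- ratio vectors
  set t : ℕ → Fin k → ℝ := fun R i => Matrix.vecMul v (Mm ^ R) i / (r ^ R * μ i)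
    with ht_def
  have hden : ∀ R i, (0:ℝ) < r ^ R * μ i := fun R i => mul_pos (pow_pos hr0 R) (hμ0 i)
  have hwt : ∀ R i, Matrix.vecMul v (Mm ^ R) i = t R i * (r ^ R * μ i) :=
    fun R i => (div_mul_cancel₀ _ (ne_of_gt (hden R i))).symm
  have hrec : ∀ R i, t (R+1) i = ∑ j, c i j * t R j := by
    intro R i
    have h1 : Matrix.vecMul v (Mm ^ (R+1)) i = ∑ j, Matrix.vecMul v (Mm ^ R) j * Mm j i := by
      rw [pow_succ, ← Matrix.vecMul_vecMul]
      rfl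
    show Matrix.vecMul v (Mm ^ (R+1)) i / (r ^ (R+1) * μ i) = _
    rw [h1]
    rw [Finset.sum_div]
    apply Finset.sum_congr rfl
    intro j _
    rw [hwt R j]
    have hcsub : c i j = μ j * Mm j i / (r * μ i) := rfl
    rw [hcsub, pow_succ r R]
    have h3 : (r:ℝ) ≠ 0 := ne_of_gt hr0
    have h4 : μ i ≠ 0 := ne_of_gt (hμ0 i)
    have h5 : (r ^ R : ℝ) ≠ 0 := pow_ne_zero _ h3
    generalize t R j = x
    field_simp
  have ht0nonneg : ∀ R i, 0 ≤ t R i := by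
    intro R
    induction R with
    | zero =>
      intro i
      have hz : t 0 i = v i / μ i := by
        show Matrix.vecMul v (Mm ^ 0) i / (r ^ 0 * μ i) = _
        rw [pow_zero, Matrix.vecMul_one, pow_zero, one_mul]
      rw [hz]
      exact div_nonneg (hv0 i) (hμ0 i).le
    | succ R ih =>
      intro i
      rw [hrec]
      exact Finset.sum_nonneg fun j _ =>
        mul_nonneg (le_trans hγ0.le (hcγ i j)) (ih j)
  set mI : ℕ → ℝ := fun R => Finset.univ.inf' hne (t R) with hmI_def
  set MX : ℕ → ℝ := fun R => Finset.univ.sup' hne (t R) with hMX_def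
  have hmI_le : ∀ R i, mI R ≤ t R i := fun R i => Finset.inf'_le _ (Finset.mem_univ i)
  have hMX_ge : ∀ R i, t R i ≤ MX R := fun R i => Finset.le_sup' _ (Finset.mem_univ i)
  have hmI0 : ∀ R, 0 ≤ mI R := by
    intro R
    obtain ⟨i, _, hi⟩ := Finset.exists_mem_eq_inf' hne (t R)
    rw [hmI_def]; simp only; rw [hi]; exact ht0nonneg R i
  -- one-step bounds
  have hstep : ∀ R, mI R ≤ mI (R+1) ∧ MX (R+1) ≤ MX R - γ * (MX R - mI R) := by
    intro R
    obtain ⟨j0, _, hj0⟩ := Finset.exists_mem_eq_inf' hne (t R)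
    have key : ∀ i, mI R ≤ t (R+1) i ∧ t (R+1) i ≤ MX R - γ * (MX R - mI R) := by
      intro i
      rw [hrec R i]
      exact upp_step_bounds (c i) (t R) γ (mI R) (MX R) hγ0.le (hcsum i) (hcγ i)
        (hmI_le R) (hMX_ge R) j0 hj0.symm
    constructor
    · exact Finset.le_inf' hne _ fun i _ => (key i).1
    · exact Finset.sup'_le hne _ fun i _ => (key i).2
  have hcontr : ∀ R, MX (R+1) - mI (R+1) ≤ q * (MX R - mI R) := by
    intro R
    have h1 := (hstep R).1
    have h2 := (hstep R).2
    have h3 : q * (MX R - mI R) = (MX R - mI R) - γ * (MX R - mI R) := by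
      rw [hq_def]; ring
    linarith
  -- t 0 bounds
  have ht0_le : ∀ i, t 0 i ≤ 1 / μmin := by
    intro i
    have hz : t 0 i = v i / μ i := by
      show Matrix.vecMul v (Mm ^ 0) i / (r ^ 0 * μ i) = _
      rw [pow_zero, Matrix.vecMul_one, pow_zero, one_mul]
    rw [hz]
    apply div_le_div₀ zero_lt_one.le _ hμmin0 (hμmin i)
    calc v i ≤ ∑ j, v j :=
        Finset.single_le_sum (fun j _ => hv0 j) (Finset.mem_univ i)
      _ = 1 := hvsum
  have ht0_sum : 1 ≤ ∑ j, t 0 j := by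
    rw [← hvsum]
    apply Finset.sum_le_sum
    intro j _
    have hz : t 0 j = v j / μ j := by
      show Matrix.vecMul v (Mm ^ 0) j / (r ^ 0 * μ j) = _
      rw [pow_zero, Matrix.vecMul_one, pow_zero, one_mul]
    rw [hz, le_div_iff₀ (hμ0 j)]
    exact mul_le_of_le_one_right (hv0 j) (hμ1 j)
  -- mI 1 ≥ γ
  have hmI1 : γ ≤ mI 1 := by
    apply Finset.le_inf' hne
    intro i _
    rw [hrec 0 i]
    calc γ = γ * 1 := (mul_one γ).symm
      _ ≤ γ * ∑ j, t 0 j := mul_le_mul_of_nonneg_left ht0_sum hγ0.le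
      _ = ∑ j, γ * t 0 j := Finset.mul_sum _ _ _
      _ ≤ ∑ j, c i j * t 0 j :=
        Finset.sum_le_sum fun j _ => mul_le_mul_of_nonneg_right (hcγ i j) (ht0nonneg 0 j)
  have hmIγ : ∀ n, γ ≤ mI (n + 1) := by
    intro n
    induction n with
    | zero => exact hmI1
    | succ m ih => exact le_trans ih (hstep (m+1)).1
  -- J bound
  have hMX0 : MX 0 ≤ 1 / μmin := Finset.sup'_le hne _ fun i _ => ht0_le i
  have hJ : ∀ n, MX (n + 1) - mI (n + 1) ≤ q ^ n * (1 / μmin) := by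
    intro n
    induction n with
    | zero =>
      have h2 := (hstep 0).2
      have h3 : 0 ≤ MX 0 - mI 0 := by
        have ha := hmI_le 0 ⟨0, hk⟩
        have hb := hMX_ge 0 ⟨0, hk⟩
        linarith
      have h4 := hmI0 1
      have h5 := mul_nonneg hγ0.le h3
      have h6 := hMX0
      simp only [pow_zero, one_mul]
      linarith
    | succ m ih =>
      calc MX (m + 1 + 1) - mI (m + 1 + 1) ≤ q * (MX (m+1) - mI (m+1)) := hcontr (m+1)
        _ ≤ q * (q ^ m * (1 / μmin)) := mul_le_mul_of_nonneg_left ih hq0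
        _ = q ^ (m+1) * (1 / μmin) := by ring
  -- final assembly
  set S : ℝ := ∑ j, μ j * t (n+1) j with hS_def
  have hS_low : mI (n+1) ≤ S := by
    calc mI (n+1) = ∑ j, μ j * mI (n+1) := by rw [← Finset.sum_mul, hμsum, one_mul]
      _ ≤ S := Finset.sum_le_sum fun j _ =>
          mul_le_mul_of_nonneg_left (hmI_le (n+1) j) (hμ0 j).le
  have hS_hi : S ≤ MX (n+1) := by
    calc S ≤ ∑ j, μ j * MX (n+1) := Finset.sum_le_sum fun j _ =>
          mul_le_mul_of_nonneg_left (hMX_ge (n+1) j) (hμ0 j).le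
      _ = MX (n+1) := by rw [← Finset.sum_mul, hμsum, one_mul]
  have hSpos : 0 < S := lt_of_lt_of_le (lt_of_lt_of_le hγ0 (hmIγ n)) hS_low
  have hl1w : l1norm (Matrix.vecMul v (Mm ^ (n+1))) = r ^ (n+1) * S := by
    rw [l1norm, hS_def, Finset.mul_sum]
    apply Finset.sum_congr rfl
    intro i _
    rw [hwt (n+1) i, abs_of_nonneg (mul_nonneg (ht0nonneg (n+1) i) (hden (n+1) i).le)]
    ring
  have hrS0 : (0:ℝ) < r ^ (n+1) * S := mul_pos (pow_pos hr0 (n+1)) hSpos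
  clear_value a b μmin γ q Mm c t mI MX S
  -- pointwise bound on the difference
  have hpt : ∀ i, |((l1norm (Matrix.vecMul v (Mm ^ (n+1))))⁻¹ •
      Matrix.vecMul v (Mm ^ (n+1)) - μ) i| ≤ μ i * ((MX (n+1) - mI (n+1)) / γ) := by
    intro i
    have hcomp : ((l1norm (Matrix.vecMul v (Mm ^ (n+1))))⁻¹ •
        Matrix.vecMul v (Mm ^ (n+1)) - μ) i = μ i * (t (n+1) i - S) / S := by
      simp only [Pi.sub_apply, Pi.smul_apply, smul_eq_mul]
      rw [hl1w, hwt (n+1) i]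
      have hrne : (r : ℝ) ^ (n+1) ≠ 0 := ne_of_gt (pow_pos hr0 _)
      have hSne : S ≠ 0 := ne_of_gt hSpos
      have hμne : μ i ≠ 0 := ne_of_gt (hμ0 i)
      generalize t (n+1) i = x
      field_simp
    rw [hcomp]
    rw [abs_div, abs_of_pos hSpos, abs_mul, abs_of_pos (hμ0 i)]
    rw [div_le_iff₀ hSpos]
    have h1 : |t (n+1) i - S| ≤ MX (n+1) - mI (n+1) := by
      rw [abs_le]
      constructor
      · have := hmI_le (n+1) i
        linarith
      · have := hMX_ge (n+1) i
        linarith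
    have h2 : γ ≤ S := le_trans (hmIγ n) hS_low
    have h3 : 0 ≤ MX (n+1) - mI (n+1) := le_trans (abs_nonneg _) h1
    have h4 : μ i * ((MX (n+1) - mI (n+1)) / γ) * γ ≤ μ i * ((MX (n+1) - mI (n+1)) / γ) * S :=
      mul_le_mul_of_nonneg_left h2
        (mul_nonneg (hμ0 i).le (div_nonneg h3 hγ0.le))
    have h5 : μ i * ((MX (n+1) - mI (n+1)) / γ) * γ = μ i * (MX (n+1) - mI (n+1)) := by
      rw [mul_assoc, div_mul_cancel₀ _ (ne_of_gt hγ0)]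
    have h6 : μ i * |t (n+1) i - S| ≤ μ i * (MX (n+1) - mI (n+1)) :=
      mul_le_mul_of_nonneg_left h1 (hμ0 i).le
    linarith
  -- sum up
  have hfin : l1norm ((l1norm (Matrix.vecMul v (Mm ^ (n+1))))⁻¹ •
      Matrix.vecMul v (Mm ^ (n+1)) - μ) ≤ (MX (n+1) - mI (n+1)) / γ := by
    rw [l1norm]
    calc ∑ i, |((l1norm (Matrix.vecMul v (Mm ^ (n+1))))⁻¹ •
          Matrix.vecMul v (Mm ^ (n+1)) - μ) i|
        ≤ ∑ i, μ i * ((MX (n+1) - mI (n+1)) / γ) :=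
          Finset.sum_le_sum fun i _ => hpt i
      _ = (MX (n+1) - mI (n+1)) / γ := by rw [← Finset.sum_mul, hμsum, one_mul]
  have hqn : q ^ n ≤ q ^ N := pow_le_pow_of_le_one hq0 hq1.le hnN
  have hlast : (MX (n+1) - mI (n+1)) / γ < δ := by
    rw [div_lt_iff₀ hγ0]
    calc MX (n+1) - mI (n+1) ≤ q ^ n * (1 / μmin) := hJ n
      _ ≤ q ^ N * (1 / μmin) := mul_le_mul_of_nonneg_right hqn (by positivity)
      _ < δ * (μmin * γ) * (1 / μmin) := by
          apply mul_lt_mul_of_pos_right hN (by positivity)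
      _ = δ * γ := by
          have hm : μmin ≠ 0 := ne_of_gt hμmin0
          field_simp
  exact lt_of_le_of_lt hfin hlast
end

section
/- Fix real numbers 0 < η < T < ∞. For every δ > 0 there exists R₀ ∈ ℕ such that for every integer R ≥ R₀, every symmetric k×k real matrix A with all entries in [η,T], every real number r > 0 and every vector μ̄ ∈ ℝ^k with strictly positive entries, ‖μ̄‖₂ = 1 and μ̄A = rμ̄, and every v ∈ Π_{≤1}: ‖ vA^R / r^R − ⟨v,μ̄⟩·μ̄ ‖₁ < δ. -/
open Matrix

lemma quad_bound {k : ℕ} (M : Matrix (Fin k) (Fin k) ℝ)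
    (hsym : ∀ i j, M i j = M j i) (hpos : ∀ i j, 0 ≤ M i j)
    (μ : Fin k → ℝ) (hμ : ∀ i, 0 < μ i) (lam : ℝ)
    (heig : ∀ i, ∑ j, M i j * μ j = lam * μ i)
    (w : Fin k → ℝ) :
    ∑ i, ∑ j, M i j * w i * w j ≤ lam * ∑ i, w i ^ 2 := by
  have key : ∀ i j, M i j * w i * w j ≤
      M i j * (w i ^ 2 * μ j / μ i) / 2 + M i j * (w j ^ 2 * μ i / μ j) / 2 := by
    intro i j
    have hi := hμ i; have hj := hμ j
    have h1 : w i * w j * (μ i * μ j) * 2 ≤ w i ^ 2 * μ j ^ 2 + w j ^ 2 * μ i ^ 2 := by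
      nlinarith [sq_nonneg (w i * μ j - w j * μ i)]
    have h2 : w i * w j ≤ (w i ^ 2 * μ j / μ i) / 2 + (w j ^ 2 * μ i / μ j) / 2 := by
      rw [← sub_nonneg]
      have heq : (w i ^ 2 * μ j / μ i) / 2 + (w j ^ 2 * μ i / μ j) / 2 - w i * w j
          = (w i * μ j - w j * μ i) ^ 2 / (2 * μ i * μ j) := by
        field_simp; ring
      rw [heq]; positivity
    calc M i j * w i * w j = M i j * (w i * w j) := by ring
      _ ≤ M i j * ((w i ^ 2 * μ j / μ i) / 2 + (w j ^ 2 * μ i / μ j) / 2) :=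
          mul_le_mul_of_nonneg_left h2 (hpos i j)
      _ = M i j * (w i ^ 2 * μ j / μ i) / 2 + M i j * (w j ^ 2 * μ i / μ j) / 2 := by ring
  have first : ∑ i, ∑ j, M i j * (w i ^ 2 * μ j / μ i) / 2 = lam / 2 * ∑ i, w i ^ 2 := by
    rw [Finset.mul_sum]
    refine Finset.sum_congr rfl fun i _ => ?_
    have : ∑ j, M i j * (w i ^ 2 * μ j / μ i) / 2
        = (w i ^ 2 / μ i / 2) * ∑ j, M i j * μ j := by
      rw [Finset.mul_sum]; exact Finset.sum_congr rfl fun j _ => by field_simp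
    rw [this, heig i]
    rw [div_mul_eq_mul_div, div_mul_eq_mul_div, div_div, mul_comm (lam / 2)]
    rw [div_eq_iff (mul_pos (hμ i) two_pos).ne']
    ring
  have second : ∑ i, ∑ j, M i j * (w j ^ 2 * μ i / μ j) / 2 = lam / 2 * ∑ i, w i ^ 2 := by
    rw [Finset.sum_comm]
    rw [← first]
    exact Finset.sum_congr rfl fun j _ => Finset.sum_congr rfl fun i _ => by rw [hsym j i]
  calc ∑ i, ∑ j, M i j * w i * w j
      ≤ ∑ i, ∑ j, (M i j * (w i ^ 2 * μ j / μ i) / 2 + M i j * (w j ^ 2 * μ i / μ j) / 2) :=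
        Finset.sum_le_sum fun i _ => Finset.sum_le_sum fun j _ => key i j
    _ = (∑ i, ∑ j, M i j * (w i ^ 2 * μ j / μ i) / 2)
        + ∑ i, ∑ j, M i j * (w j ^ 2 * μ i / μ j) / 2 := by
        rw [← Finset.sum_add_distrib]
        exact Finset.sum_congr rfl fun i _ => Finset.sum_add_distrib
    _ = lam * ∑ i, w i ^ 2 := by rw [first, second]; ring

lemma ortho_step {k : ℕ} (η r : ℝ) (hη : 0 < η)
    (A : Matrix (Fin k) (Fin k) ℝ) (hsymm : ∀ i j, A i j = A j i)
    (hlo : ∀ i j, η ≤ A i j)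
    (μ : Fin k → ℝ) (hμpos : ∀ i, 0 < μ i) (hμle : ∀ i, μ i ≤ 1)
    (hμ2 : ∑ i, μ i ^ 2 = 1)
    (heig : ∀ i, ∑ j, A i j * μ j = r * μ i)
    (u : Fin k → ℝ) (horth : ∑ i, u i * μ i = 0) :
    ∑ j, (∑ i, u i * A i j) ^ 2 ≤ (r ^ 2 - k * η ^ 2) * ∑ i, u i ^ 2 := by
  set M : Matrix (Fin k) (Fin k) ℝ := Matrix.of fun i l => ∑ j, A i j * A l j with hM
  have hMval : ∀ i l, M i l = ∑ j, A i j * A l j := fun i l => rfl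
  have hMsym : ∀ i l, M i l = M l i := fun i l => by
    rw [hMval, hMval]; exact Finset.sum_congr rfl fun j _ => by ring
  have hMlo : ∀ i l, (k : ℝ) * η ^ 2 ≤ M i l := by
    intro i l
    rw [hMval]
    calc (k : ℝ) * η ^ 2 = ∑ _j : Fin k, η * η := by
          rw [Finset.sum_const, Finset.card_univ, Fintype.card_fin, nsmul_eq_mul]; ring
      _ ≤ ∑ j, A i j * A l j := Finset.sum_le_sum fun j _ =>
          mul_le_mul (hlo i j) (hlo l j) hη.le ((hη.trans_le (hlo i j)).le)
  have hMμ : ∀ i, ∑ l, M i l * μ l = r ^ 2 * μ i := by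
    intro i
    calc ∑ l, M i l * μ l = ∑ l, ∑ j, A i j * A l j * μ l := by
          refine Finset.sum_congr rfl fun l _ => ?_
          rw [hMval, Finset.sum_mul]
      _ = ∑ j, ∑ l, A i j * A l j * μ l := Finset.sum_comm
      _ = ∑ j, A i j * (r * μ j) := by
          refine Finset.sum_congr rfl fun j _ => ?_
          have : ∑ l, A i j * A l j * μ l = A i j * ∑ l, A j l * μ l := by
            rw [Finset.mul_sum]
            exact Finset.sum_congr rfl fun l _ => by rw [hsymm l j]; ring
          rw [this, heig j]
      _ = r ^ 2 * μ i := by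
          have : ∑ j, A i j * (r * μ j) = r * ∑ j, A i j * μ j := by
            rw [Finset.mul_sum]; exact Finset.sum_congr rfl fun j _ => by ring
          rw [this, heig i]; ring
  set M' : Matrix (Fin k) (Fin k) ℝ :=
    Matrix.of fun i l => M i l - (k : ℝ) * η ^ 2 * (μ i * μ l) with hM'
  have hM'val : ∀ i l, M' i l = M i l - (k : ℝ) * η ^ 2 * (μ i * μ l) := fun i l => rfl
  have hM'sym : ∀ i l, M' i l = M' l i := fun i l => by
    rw [hM'val, hM'val, hMsym]; ring
  have hM'pos : ∀ i l, 0 ≤ M' i l := by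
    intro i l
    rw [hM'val]
    have h1 := hMlo i l
    have h2 : μ i * μ l ≤ 1 := by nlinarith [hμpos i, hμpos l, hμle i, hμle l]
    nlinarith [mul_le_mul_of_nonneg_left h2 (by positivity : (0:ℝ) ≤ (k:ℝ)*η^2)]
  have hM'μ : ∀ i, ∑ l, M' i l * μ l = (r ^ 2 - (k : ℝ) * η ^ 2) * μ i := by
    intro i
    have : ∑ l, M' i l * μ l
        = (∑ l, M i l * μ l) - (k : ℝ) * η ^ 2 * μ i * ∑ l, μ l ^ 2 := by
      rw [Finset.mul_sum, ← Finset.sum_sub_distrib]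
      exact Finset.sum_congr rfl fun l _ => by rw [hM'val]; ring
    rw [this, hMμ, hμ2]; ring
  have hquad := quad_bound M' hM'sym hM'pos μ hμpos _ hM'μ u
  have expand : ∑ j, (∑ i, u i * A i j) ^ 2 = ∑ i, ∑ l, M i l * u i * u l := by
    calc ∑ j, (∑ i, u i * A i j) ^ 2
        = ∑ j, ∑ i, ∑ l, u i * A i j * (u l * A l j) := by
          refine Finset.sum_congr rfl fun j _ => ?_
          rw [sq, Finset.sum_mul_sum]
      _ = ∑ i, ∑ j, ∑ l, u i * A i j * (u l * A l j) := Finset.sum_comm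
      _ = ∑ i, ∑ l, ∑ j, u i * A i j * (u l * A l j) := by
          exact Finset.sum_congr rfl fun i _ => Finset.sum_comm
      _ = ∑ i, ∑ l, M i l * u i * u l := by
          refine Finset.sum_congr rfl fun i _ => Finset.sum_congr rfl fun l _ => ?_
          rw [hMval, Finset.sum_mul, Finset.sum_mul]
          exact Finset.sum_congr rfl fun j _ => by ring
  have split : ∑ i, ∑ l, M i l * u i * u l = ∑ i, ∑ l, M' i l * u i * u l := by
    have h : ∀ i, ∑ l, M i l * u i * u l
        = (∑ l, M' i l * u i * u l) + (k : ℝ) * η ^ 2 * (u i * μ i) * ∑ l, u l * μ l := by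
      intro i
      rw [Finset.mul_sum, ← Finset.sum_add_distrib]
      exact Finset.sum_congr rfl fun l _ => by rw [hM'val]; ring
    calc ∑ i, ∑ l, M i l * u i * u l
        = ∑ i, ((∑ l, M' i l * u i * u l)
            + (k : ℝ) * η ^ 2 * (u i * μ i) * ∑ l, u l * μ l) :=
          Finset.sum_congr rfl fun i _ => h i
      _ = ∑ i, ∑ l, M' i l * u i * u l := by
          refine Finset.sum_congr rfl fun i _ => ?_
          rw [horth]; ring
  rw [expand, split]
  exact hquad

lemma ortho_pres {k : ℕ} (r : ℝ)
    (A : Matrix (Fin k) (Fin k) ℝ)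
    (μ : Fin k → ℝ)
    (heig : ∀ i, ∑ j, A i j * μ j = r * μ i)
    (u : Fin k → ℝ) (horth : ∑ i, u i * μ i = 0) :
    ∑ j, (∑ i, u i * A i j) * μ j = 0 := by
  calc ∑ j, (∑ i, u i * A i j) * μ j
      = ∑ j, ∑ i, u i * A i j * μ j := by
        exact Finset.sum_congr rfl fun j _ => by rw [Finset.sum_mul]
    _ = ∑ i, ∑ j, u i * A i j * μ j := Finset.sum_comm
    _ = ∑ i, u i * (r * μ i) := by
        refine Finset.sum_congr rfl fun i _ => ?_
        rw [← heig i, Finset.mul_sum]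
        exact Finset.sum_congr rfl fun j _ => by ring
    _ = r * ∑ i, u i * μ i := by
        rw [Finset.mul_sum]; exact Finset.sum_congr rfl fun i _ => by ring
    _ = 0 := by rw [horth, mul_zero]

lemma r_sq_ge {k : ℕ} (hk : 0 < k) (η r : ℝ) (hη : 0 < η)
    (A : Matrix (Fin k) (Fin k) ℝ) (hlo : ∀ i j, η ≤ A i j)
    (μ : Fin k → ℝ) (hμpos : ∀ i, 0 < μ i)
    (heig : ∀ i, ∑ j, A i j * μ j = r * μ i) :
    (k : ℝ) * η ^ 2 ≤ r ^ 2 := by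
  set i0 : Fin k := ⟨0, hk⟩
  have hS : 0 < ∑ l, μ l :=
    Finset.sum_pos (fun l _ => hμpos l) ⟨i0, Finset.mem_univ i0⟩
  have h1 : ∀ i, η * ∑ l, μ l ≤ r * μ i := by
    intro i
    rw [← heig i, Finset.mul_sum]
    exact Finset.sum_le_sum fun j _ => mul_le_mul_of_nonneg_right (hlo i j) (hμpos j).le
  have h2 : r ^ 2 * μ i0 = ∑ j, A i0 j * (r * μ j) := by
    have : ∑ j, A i0 j * (r * μ j) = r * ∑ j, A i0 j * μ j := by
      rw [Finset.mul_sum]; exact Finset.sum_congr rfl fun j _ => by ring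
    rw [this, heig i0]; ring
  have h3 : ∑ _j : Fin k, (η * (η * ∑ l, μ l)) ≤ ∑ j : Fin k, A i0 j * (r * μ j) := by
    refine Finset.sum_le_sum fun j _ => ?_
    have := h1 j
    have hpos : 0 < η * ∑ l, μ l := mul_pos hη hS
    exact mul_le_mul (hlo i0 j) this hpos.le ((hη.trans_le (hlo i0 j)).le)
  have h4 : ∑ _j : Fin k, (η * (η * ∑ l, μ l)) = (k : ℝ) * η ^ 2 * ∑ l, μ l := by
    rw [Finset.sum_const, Finset.card_univ, Fintype.card_fin, nsmul_eq_mul]; ring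
  have h5 : μ i0 ≤ ∑ l, μ l :=
    Finset.single_le_sum (fun l _ => (hμpos l).le) (Finset.mem_univ i0)
  nlinarith [hμpos i0, mul_pos hη hS]

set_option maxHeartbeats 1000000 in
/-- Lemma 7.3 (realsymlimit): for symmetric matrices with entries in [η,T], the
normalised powers vA^R/r^R converge uniformly to the Perron projection ⟨v,μ̄⟩μ̄. -/
theorem symmetric_perron_projection
    {k : ℕ} (hk : 0 < k) (η T : ℝ) (hη : 0 < η) (hηT : η < T)
    (δ : ℝ) (hδ : 0 < δ) :
    ∃ R₀ : ℕ, ∀ R : ℕ, R₀ ≤ R →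
      ∀ A : Matrix (Fin k) (Fin k) ℝ, A.IsSymm → (∀ i j, A i j ∈ Set.Icc η T) →
      ∀ (r : ℝ) (μbar : Fin k → ℝ), 0 < r → (∀ i, 0 < μbar i) →
        Real.sqrt (∑ i, μbar i ^ 2) = 1 → Matrix.vecMul μbar A = r • μbar →
      ∀ v : Fin k → ℝ, (∀ i, 0 ≤ v i) → ∑ i, v i ≤ 1 →
      l1norm ((r ^ R)⁻¹ • Matrix.vecMul v (A ^ R) - (∑ i, v i * μbar i) • μbar) < δ := by
  have hT : 0 < T := hη.trans hηT
  have hk' : (1 : ℝ) ≤ (k : ℝ) := by exact_mod_cast hk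
  have hkT2 : 0 < (k : ℝ) * T ^ 2 := by positivity
  set q : ℝ := η ^ 2 / ((k : ℝ) * T ^ 2) with hqdef
  have hq_pos : 0 < q := by positivity
  have hq_lt : q < 1 := by
    rw [hqdef, div_lt_one hkT2]; nlinarith
  set ρ : ℝ := 1 - q with hρdef
  have hρ0 : 0 ≤ ρ := by simp only [hρdef]; linarith
  have hρ1 : ρ < 1 := by simp only [hρdef]; linarith
  clear_value q ρ
  obtain ⟨R₀, hR₀⟩ := exists_pow_lt_of_lt_one (show (0:ℝ) < δ ^ 2 / k by positivity) hρ1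
  refine ⟨R₀, ?_⟩
  intro R hR A hAsymm hAmem r μ hr hμpos hμnorm hμeigv v hv0 hv1
  have hsymm : ∀ i j, A i j = A j i := fun i j => congrFun (congrFun hAsymm j) i
  have hlo : ∀ i j, η ≤ A i j := fun i j => (hAmem i j).1
  have hhi : ∀ i j, A i j ≤ T := fun i j => (hAmem i j).2
  have hμ2 : ∑ i, μ i ^ 2 = 1 := by
    have h := Real.sq_sqrt (show (0:ℝ) ≤ ∑ i, μ i ^ 2 by positivity)
    rw [hμnorm] at h; simpa using h.symm
  have hμle : ∀ i, μ i ≤ 1 := by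
    intro i
    have h1 : μ i ^ 2 ≤ 1 := by
      rw [← hμ2]
      exact Finset.single_le_sum (fun l _ => sq_nonneg (μ l)) (Finset.mem_univ i)
    nlinarith [hμpos i]
  have heigrow : ∀ j, ∑ i, μ i * A i j = r * μ j := by
    intro j
    have h := congrFun hμeigv j
    simpa [Matrix.vecMul, dotProduct] using h
  have heig : ∀ i, ∑ j, A i j * μ j = r * μ i := by
    intro i
    rw [← heigrow i]
    exact Finset.sum_congr rfl fun j _ => by rw [hsymm i j]; ring
  -- r ≤ k T
  have hrk : r ≤ (k : ℝ) * T := by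
    have e1 : r = ∑ i, ∑ j, μ j * A j i * μ i := by
      calc r = r * ∑ i, μ i ^ 2 := by rw [hμ2, mul_one]
        _ = ∑ i, (r * μ i) * μ i := by
            rw [Finset.mul_sum]; exact Finset.sum_congr rfl fun i _ => by ring
        _ = ∑ i, ∑ j, μ j * A j i * μ i := by
            refine Finset.sum_congr rfl fun i _ => ?_
            rw [← heigrow i, Finset.sum_mul]
    have e2 : ∑ i, ∑ j, μ j * A j i * μ i ≤ ∑ i, ∑ j, T * (μ j * μ i) := by
      refine Finset.sum_le_sum fun i _ => Finset.sum_le_sum fun j _ => ?_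
      nlinarith [mul_nonneg (mul_nonneg (sub_nonneg.2 (hhi j i)) (hμpos i).le) (hμpos j).le]
    have e3 : ∑ i, ∑ j, T * (μ j * μ i) = T * (∑ i, μ i) ^ 2 := by
      rw [sq, Finset.sum_mul_sum, Finset.mul_sum]
      refine Finset.sum_congr rfl fun i _ => ?_
      rw [Finset.mul_sum]
      exact Finset.sum_congr rfl fun j _ => by ring
    have e4 : (∑ i, μ i) ^ 2 ≤ (k : ℝ) := by
      have h := sq_sum_le_card_mul_sum_sq (s := Finset.univ) (f := μ)
      simpa [hμ2, Finset.card_univ] using h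
    nlinarith
  set lam : ℝ := r ^ 2 - (k : ℝ) * η ^ 2 with hlamdef
  have hlam0 : 0 ≤ lam := by
    have := r_sq_ge hk η r hη A hlo μ hμpos heig
    simp only [hlamdef]; linarith
  set c : ℝ := ∑ i, v i * μ i with hcdef
  set w : Fin k → ℝ := fun i => v i - c * μ i with hwdef
  have hwval : ∀ i, w i = v i - c * μ i := fun i => by rw [hwdef]
  clear_value lam c w
  have hworth : ∑ i, w i * μ i = 0 := by
    have h : ∑ i, w i * μ i = (∑ i, v i * μ i) - c * ∑ i, μ i ^ 2 := by
      rw [Finset.mul_sum, ← Finset.sum_sub_distrib]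
      exact Finset.sum_congr rfl fun i _ => by rw [hwval]; ring
    rw [h, hμ2, ← hcdef]; ring
  have hwnorm : ∑ i, w i ^ 2 ≤ 1 := by
    have h1 : ∑ i, w i ^ 2 = ∑ i, (v i ^ 2 - 2 * c * (v i * μ i) + c ^ 2 * μ i ^ 2) :=
      Finset.sum_congr rfl fun i _ => by rw [hwval]; ring
    have h2 : ∑ i, (v i ^ 2 - 2 * c * (v i * μ i) + c ^ 2 * μ i ^ 2)
        = (∑ i, v i ^ 2) - 2 * c * (∑ i, v i * μ i) + c ^ 2 * ∑ i, μ i ^ 2 := by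
      rw [Finset.sum_add_distrib, Finset.sum_sub_distrib, ← Finset.mul_sum, ← Finset.mul_sum]
    have hsv : ∑ i, v i ^ 2 ≤ (∑ i, v i) ^ 2 :=
      Finset.sum_sq_le_sq_sum_of_nonneg (fun i _ => hv0 i)
    have hsv1 : (∑ i, v i) ^ 2 ≤ 1 := by
      nlinarith [Finset.sum_nonneg (fun i (_ : i ∈ Finset.univ) => hv0 i), hv1]
    rw [h1, h2, hμ2, ← hcdef]
    nlinarith [sq_nonneg c]
  -- induction on powers
  have key : ∀ n : ℕ, (∑ i, (Matrix.vecMul w (A ^ n)) i * μ i = 0) ∧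
      (∑ i, (Matrix.vecMul w (A ^ n)) i ^ 2 ≤ lam ^ n * ∑ i, w i ^ 2) := by
    intro n
    induction n with
    | zero =>
      constructor
      · simpa [Matrix.vecMul_one] using hworth
      · simp [Matrix.vecMul_one]
    | succ n ih =>
      have hrec : Matrix.vecMul w (A ^ (n + 1)) = Matrix.vecMul (Matrix.vecMul w (A ^ n)) A := by
        rw [pow_succ, ← Matrix.vecMul_vecMul]
      set u : Fin k → ℝ := Matrix.vecMul w (A ^ n) with hudef
      have hentry : ∀ j, Matrix.vecMul u A j = ∑ i, u i * A i j := fun j => by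
        simp [Matrix.vecMul, dotProduct]
      constructor
      · rw [hrec]
        calc ∑ i, Matrix.vecMul u A i * μ i = ∑ j, (∑ i, u i * A i j) * μ j :=
              Finset.sum_congr rfl fun j _ => by rw [hentry]
          _ = 0 := ortho_pres r A μ heig u ih.1
      · rw [hrec]
        calc ∑ i, Matrix.vecMul u A i ^ 2 = ∑ j, (∑ i, u i * A i j) ^ 2 :=
              Finset.sum_congr rfl fun j _ => by rw [hentry]
          _ ≤ lam * ∑ i, u i ^ 2 := by
              rw [hlamdef]; exact ortho_step η r hη A hsymm hlo μ hμpos hμle hμ2 heig u ih.1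
          _ ≤ lam * (lam ^ n * ∑ i, w i ^ 2) := mul_le_mul_of_nonneg_left ih.2 hlam0
          _ = lam ^ (n + 1) * ∑ i, w i ^ 2 := by rw [pow_succ]; ring
  -- eigenvector of powers
  have hμpow : ∀ n : ℕ, Matrix.vecMul μ (A ^ n) = r ^ n • μ := by
    intro n
    induction n with
    | zero => simp [Matrix.vecMul_one]
    | succ n ih =>
      rw [pow_succ, ← Matrix.vecMul_vecMul, ih, Matrix.smul_vecMul, hμeigv, smul_smul, pow_succ]
  set t : Fin k → ℝ := (r ^ R)⁻¹ • Matrix.vecMul v (A ^ R) - c • μ with htdef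
  have hrR : 0 < r ^ R := pow_pos hr R
  have htval : ∀ i, t i = (r ^ R)⁻¹ * Matrix.vecMul v (A ^ R) i - c * μ i := fun i => by
    rw [htdef]; simp [Pi.sub_apply, Pi.smul_apply, smul_eq_mul]
  have hdecomp : Matrix.vecMul v (A ^ R) = Matrix.vecMul w (A ^ R) + (c * r ^ R) • μ := by
    have hv_eq : v = w + c • μ := by
      funext i; simp only [hwdef, Pi.add_apply, Pi.smul_apply, smul_eq_mul]; ring
    rw [hv_eq, Matrix.add_vecMul, Matrix.smul_vecMul, hμpow R, smul_smul]
  have ht_eq : ∀ i, t i = (r ^ R)⁻¹ * Matrix.vecMul w (A ^ R) i := by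
    intro i
    rw [htval i, hdecomp]
    simp only [Pi.add_apply, Pi.smul_apply, smul_eq_mul]
    field_simp
    ring
  -- ratio bound
  have hr2 : r ^ 2 ≤ (k : ℝ) ^ 2 * T ^ 2 := by nlinarith
  have hq2 : (k : ℝ) * η ^ 2 = q * ((k : ℝ) ^ 2 * T ^ 2) := by
    rw [hqdef]; field_simp
  have hratio : lam / r ^ 2 ≤ ρ := by
    rw [div_le_iff₀ (by positivity)]
    simp only [hlamdef, hρdef]
    nlinarith [mul_nonneg hq_pos.le (sub_nonneg.mpr hr2)]
  -- final bounds
  have ht2 : ∑ i, t i ^ 2 ≤ ρ ^ R := by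
    have step1 : ∑ i, t i ^ 2 = ((r ^ R)⁻¹) ^ 2 * ∑ i, Matrix.vecMul w (A ^ R) i ^ 2 := by
      rw [Finset.mul_sum]
      exact Finset.sum_congr rfl fun i _ => by rw [ht_eq i]; ring
    have step2 : ((r ^ R)⁻¹) ^ 2 * ∑ i, Matrix.vecMul w (A ^ R) i ^ 2
        ≤ ((r ^ R)⁻¹) ^ 2 * (lam ^ R * 1) := by
      refine mul_le_mul_of_nonneg_left ?_ (by positivity)
      calc ∑ i, Matrix.vecMul w (A ^ R) i ^ 2 ≤ lam ^ R * ∑ i, w i ^ 2 := (key R).2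
        _ ≤ lam ^ R * 1 := mul_le_mul_of_nonneg_left hwnorm (pow_nonneg hlam0 R)
    have step3 : ((r ^ R)⁻¹) ^ 2 * (lam ^ R * 1) = (lam / r ^ 2) ^ R := by
      rw [mul_one, div_pow, ← pow_mul, mul_comm 2 R, pow_mul, div_eq_mul_inv, ← inv_pow]
      ring
    have step4 : (lam / r ^ 2) ^ R ≤ ρ ^ R :=
      pow_le_pow_left₀ (div_nonneg hlam0 (sq_nonneg r)) hratio R
    calc ∑ i, t i ^ 2 = _ := step1
      _ ≤ _ := step2
      _ = _ := step3
      _ ≤ ρ ^ R := step4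
  have habs : (l1norm t) ^ 2 ≤ (k : ℝ) * ∑ i, t i ^ 2 := by
    have h := sq_sum_le_card_mul_sum_sq (s := Finset.univ) (f := fun i => |t i|)
    simpa [l1norm, sq_abs, Finset.card_univ] using h
  have hl1nonneg : 0 ≤ l1norm t := Finset.sum_nonneg fun i _ => abs_nonneg _
  have hfin : (l1norm t) ^ 2 < δ ^ 2 := by
    have h1 : ρ ^ R ≤ ρ ^ R₀ := pow_le_pow_of_le_one hρ0 hρ1.le hR
    have hkpos : (0:ℝ) < (k : ℝ) := by positivity
    have h2 : (k : ℝ) * ρ ^ R₀ < δ ^ 2 := by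
      calc (k : ℝ) * ρ ^ R₀ < (k : ℝ) * (δ ^ 2 / k) := mul_lt_mul_of_pos_left hR₀ hkpos
        _ = δ ^ 2 := by field_simp
    calc (l1norm t) ^ 2 ≤ (k : ℝ) * ∑ i, t i ^ 2 := habs
      _ ≤ (k : ℝ) * ρ ^ R := mul_le_mul_of_nonneg_left ht2 hkpos.le
      _ ≤ (k : ℝ) * ρ ^ R₀ := mul_le_mul_of_nonneg_left h1 hkpos.le
      _ < δ ^ 2 := h2
  nlinarith [hfin, hl1nonneg, hδ]
end
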